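/- arXiv:1702.02177 — 6 statements merged into one kernel-verified Lean document; each statement's English description precedes it below -/
import Mathlib

section
/- Let f : ℍⁿ → ℍ be holomorphic (where ℍ is the upper half-plane) with f(λ,…,λ) = λ for all λ ∈ ℍ. Then for each j, the function λ ↦ ∂f/∂z_j(λ,…,λ) is constant on ℍ, equal to a nonnegative real number α_j, and ∑_{j=1}^n α_j = 1. -/
open Complex Metric Set intervalIntegral

lemma hn_open {n : ℕ} : IsOpen {z : Fin n → ℂ | ∀ j, 0 < (z j).im} := by
  have : {z : Fin n → ℂ | ∀ j, 0 < (z j).im} = Set.pi Set.univ (fun _ => {w : ℂ | 0 < w.im}) := by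
    ext z; simp [Set.mem_pi]
  rw [this]
  exact isOpen_set_pi Set.finite_univ (fun _ _ => isOpen_lt continuous_const Complex.continuous_im)

lemma conj_sub_ne {l : ℂ} (hl : 0 < l.im) : l - (starRingEnd ℂ) l ≠ 0 := by
  intro h
  have := congrArg Complex.im h
  simp [Complex.sub_im, Complex.conj_im] at this
  linarith

lemma m_im_pos {l : ℂ} (hl : 0 < l.im) {w : ℂ} (hw : ‖w‖ < 1) :
    0 < ((l - w * (starRingEnd ℂ) l) / (1 - w)).im := by
  have hw1 : (1 : ℂ) - w ≠ 0 := by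
    intro h
    have : w = 1 := by linear_combination -h
    rw [this] at hw; simp at hw
  have hns : Complex.normSq w < 1 := by
    have h2 : ‖w‖ < 1 := hw
    nlinarith [Complex.sq_norm w, norm_nonneg w]
  have hd : 0 < Complex.normSq (1 - w) := normSq_pos.2 hw1
  have him : ((l - w * (starRingEnd ℂ) l) / (1 - w)).im
      = l.im * (1 - Complex.normSq w) / Complex.normSq (1 - w) := by
    rw [Complex.div_im]
    simp [Complex.normSq_apply]
    ring
  rw [him]
  exact div_pos (mul_pos hl (by linarith)) hd

lemma psi_den_ne {l z : ℂ} (hl : 0 < l.im) (hz : 0 < z.im) : z - (starRingEnd ℂ) l ≠ 0 := by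
  intro h
  have := congrArg Complex.im h
  simp [Complex.sub_im, Complex.conj_im] at this
  linarith

lemma psi_norm_lt {l z : ℂ} (hl : 0 < l.im) (hz : 0 < z.im) :
    ‖(z - l) / (z - (starRingEnd ℂ) l)‖ < 1 := by
  have hden := psi_den_ne hl hz
  have hlt : Complex.normSq (z - l) < Complex.normSq (z - (starRingEnd ℂ) l) := by
    simp [Complex.normSq_apply, Complex.sub_re, Complex.sub_im, Complex.conj_re, Complex.conj_im]
    nlinarith
  rw [norm_div, div_lt_one (norm_pos_iff.2 hden)]
  have h1 := Complex.sq_norm (z - l)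
  have h2 := Complex.sq_norm (z - (starRingEnd ℂ) l)
  have := norm_nonneg (z - l)
  have := norm_nonneg (z - (starRingEnd ℂ) l)
  nlinarith

lemma key_bound {n : ℕ} (f : (Fin n → ℂ) → ℂ)
    (hf : DifferentiableOn ℂ f {z : Fin n → ℂ | ∀ j, 0 < (z j).im})
    (hmaps : ∀ z : Fin n → ℂ, (∀ j, 0 < (z j).im) → 0 < (f z).im)
    {l : ℂ} (hl : 0 < l.im) (hdl : f (fun _ => l) = l)
    (c : Fin n → ℂ) (hc : ∀ j, ‖c j‖ ≤ 1) :
    ‖∑ j, c j * fderiv ℂ f (fun _ => l) (Pi.single j 1)‖ ≤ 1 := by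
  set lb := (starRingEnd ℂ) l with hlb
  set m : ℂ → ℂ := fun w => (l - w * lb) / (1 - w) with hm
  set γ : ℂ → (Fin n → ℂ) := fun w j => m (c j * w) with hγ
  set ψ : ℂ → ℂ := fun z => (z - l) / (z - lb) with hψ
  set G : ℂ → ℂ := fun w => ψ (f (γ w)) with hG
  have hden := conj_sub_ne hl
  -- γ 0 = diagonal l
  have hγ0 : γ 0 = fun _ => l := by
    funext j; simp [hγ, hm]
  have hfγ0 : f (γ 0) = l := by rw [hγ0, hdl]
  have hG0 : G 0 = 0 := by simp [hG, hfγ0, hψ]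
  -- γ maps ball into H^n
  have hγH : ∀ w : ℂ, ‖w‖ < 1 → ∀ j, 0 < (γ w j).im := by
    intro w hw j
    exact m_im_pos hl (lt_of_le_of_lt (by simpa using mul_le_of_le_one_left (norm_nonneg w) (hc j)) hw)
  -- differentiability of G on the unit ball
  have hGd : DifferentiableOn ℂ G (ball (0:ℂ) 1) := by
    intro w hw
    rw [mem_ball, dist_zero_right] at hw
    have hmd : ∀ j : Fin n, DifferentiableAt ℂ (fun w => m (c j * w)) w := by
      intro j
      have h1 : (1 : ℂ) - c j * w ≠ 0 := by
        intro h
        have he : c j * w = 1 := by linear_combination -h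
        have h2 : ‖c j * w‖ < 1 := by
          rw [norm_mul]
          exact lt_of_le_of_lt (mul_le_of_le_one_left (norm_nonneg w) (hc j)) hw
        rw [he] at h2; simp at h2
      have : DifferentiableAt ℂ m (c j * w) := by
        apply DifferentiableAt.div
        · exact (differentiableAt_const l).sub (differentiableAt_id.mul (differentiableAt_const lb))
        · exact (differentiableAt_const 1).sub differentiableAt_id
        · exact h1
      exact this.comp w ((differentiableAt_const (c j)).mul differentiableAt_id)
    have hγd : DifferentiableAt ℂ γ w := differentiableAt_pi.2 hmd
    have hfd : DifferentiableAt ℂ f (γ w) :=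
      hf.differentiableAt (hn_open.mem_nhds (hγH w hw))
    have hfim : 0 < (f (γ w)).im := hmaps _ (hγH w hw)
    have hψd : DifferentiableAt ℂ ψ (f (γ w)) := by
      apply DifferentiableAt.div
      · exact differentiableAt_id.sub (differentiableAt_const l)
      · exact differentiableAt_id.sub (differentiableAt_const lb)
      · exact psi_den_ne hl hfim
    exact ((hψd.comp _ hfd).comp w hγd).differentiableWithinAt
  have hGmaps : MapsTo G (ball (0:ℂ) 1) (ball (G 0) 1) := by
    rw [hG0]
    intro w hw
    rw [mem_ball, dist_zero_right] at hw ⊢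
    exact psi_norm_lt hl (hmaps _ (hγH w hw))
  -- Schwarz lemma
  have hschwarz := Complex.norm_deriv_le_div_of_mapsTo_ball hGd (hGmaps.mono_right ball_subset_closedBall) one_pos
  -- compute deriv G 0
  have hm' : HasDerivAt m (l - lb) 0 := by
    have h1 : HasDerivAt (fun w : ℂ => l - w * lb) (-lb) 0 := by
      simpa using ((hasDerivAt_id (0:ℂ)).mul_const lb).const_sub l
    have h2 : HasDerivAt (fun w : ℂ => 1 - w) (-1 : ℂ) 0 := by
      simpa using (hasDerivAt_id (0:ℂ)).const_sub 1
    have h3 : HasDerivAt m _ 0 := h1.div h2 (by norm_num)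
    convert h3 using 1
    simp
    ring
  have hγ' : HasDerivAt γ (fun j => (l - lb) * c j) 0 := by
    apply hasDerivAt_pi.2
    intro j
    have hinner : HasDerivAt (fun w : ℂ => c j * w) (c j) 0 := by
      simpa using (hasDerivAt_id (0:ℂ)).const_mul (c j)
    exact HasDerivAt.comp 0 (show HasDerivAt m (l - lb) (c j * 0) by simpa using hm') hinner
  have hL : HasFDerivAt f (fderiv ℂ f (fun _ => l)) (γ 0) := by
    rw [hγ0]
    exact (hf.differentiableAt (hn_open.mem_nhds (by intro j; simpa using hl))).hasFDerivAt
  have hfγ' : HasDerivAt (fun w => f (γ w))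
      ((fderiv ℂ f (fun _ => l)) (fun j => (l - lb) * c j)) 0 :=
    hL.comp_hasDerivAt 0 hγ'
  have hψ' : HasDerivAt ψ ((l - lb)⁻¹) (f (γ 0)) := by
    rw [hfγ0]
    have h1 : HasDerivAt (fun z : ℂ => z - l) (1:ℂ) l := by
      simpa using (hasDerivAt_id l).sub_const l
    have h2 : HasDerivAt (fun z : ℂ => z - lb) (1:ℂ) l := by
      simpa using (hasDerivAt_id l).sub_const lb
    have h3 : HasDerivAt ψ _ l := h1.div h2 hden
    convert h3 using 1
    field_simp [show l - lb ≠ 0 from hden]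
    ring
  have hG' : HasDerivAt G ((l - lb)⁻¹ * ((fderiv ℂ f (fun _ => l)) (fun j => (l - lb) * c j))) 0 :=
    by have := hψ'.comp 0 hfγ'; exact this
  -- linear algebra: expand the direction
  have hexp : (fderiv ℂ f (fun _ => l)) (fun j => (l - lb) * c j)
      = (l - lb) * ∑ j, c j * fderiv ℂ f (fun _ => l) (Pi.single j 1) := by
    have hv : (fun j => (l - lb) * c j) = ∑ j : Fin n, ((l - lb) * c j) • (Pi.single j 1 : Fin n → ℂ) := by
      funext k
      rw [Finset.sum_apply]
      simp [Pi.single_apply, mul_ite]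
    rw [hv, map_sum]
    rw [Finset.mul_sum]
    congr 1
    funext j
    rw [ContinuousLinearMap.map_smul]
    simp [smul_eq_mul]
    ring
  have hderivG : deriv G 0 = ∑ j, c j * fderiv ℂ f (fun _ => l) (Pi.single j 1) := by
    rw [hG'.deriv, hexp]
    exact inv_mul_cancel_left₀ hden _
  rw [hderivG] at hschwarz
  simpa using hschwarz

lemma hn_open' {n : ℕ} : IsOpen {z : Fin n → ℂ | ∀ j, 0 < (z j).im} := by
  have : {z : Fin n → ℂ | ∀ j, 0 < (z j).im} = Set.pi Set.univ (fun _ => {w : ℂ | 0 < w.im}) := by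
    ext z; simp [Set.mem_pi]
  rw [this]
  exact isOpen_set_pi Set.finite_univ (fun _ _ => isOpen_lt continuous_const Complex.continuous_im)

lemma sum_partials_eq_one {n : ℕ} (f : (Fin n → ℂ) → ℂ)
    (hf : DifferentiableOn ℂ f {z : Fin n → ℂ | ∀ j, 0 < (z j).im})
    (hdiag : ∀ l : ℂ, 0 < l.im → f (fun _ => l) = l)
    {l : ℂ} (hl : 0 < l.im) :
    ∑ j, fderiv ℂ f (fun _ => l) (Pi.single j 1) = 1 := by
  set D : ℂ →L[ℂ] (Fin n → ℂ) := ContinuousLinearMap.pi (fun _ => ContinuousLinearMap.id ℂ ℂ) with hD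
  have hDf : HasFDerivAt (fun l : ℂ => (fun _ => l : Fin n → ℂ)) D l := D.hasFDerivAt
  have hfd : HasFDerivAt f (fderiv ℂ f (fun _ => l)) (fun _ => l) :=
    (hf.differentiableAt (hn_open'.mem_nhds (by intro j; simpa using hl))).hasFDerivAt
  have hcomp : HasDerivAt (fun μ : ℂ => f (fun _ => μ))
      ((fderiv ℂ f (fun _ => l)) (fun _ => (1:ℂ))) l := by
    have := hfd.comp_hasDerivAt l (hDf.hasDerivAt)
    exact this
  -- the composition is eventually the identity
  have hev : (fun μ : ℂ => f (fun _ => μ)) =ᶠ[nhds l] id := by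
    have : {μ : ℂ | 0 < μ.im} ∈ nhds l :=
      (isOpen_lt continuous_const Complex.continuous_im).mem_nhds hl
    filter_upwards [this] with μ hμ
    exact hdiag μ hμ
  have h1 : deriv (fun μ : ℂ => f (fun _ => μ)) l = 1 := by
    rw [Filter.EventuallyEq.deriv_eq hev]
    simp
  rw [hcomp.deriv] at h1
  -- expand the constant-1 direction
  have hv : (fun _ => (1:ℂ) : Fin n → ℂ) = ∑ j : Fin n, (Pi.single j 1 : Fin n → ℂ) := by
    funext k
    rw [Finset.sum_apply]
    simp [Pi.single_apply]
  rw [hv, map_sum] at h1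
  exact h1

lemma partial_differentiableAt {n : ℕ} (f : (Fin n → ℂ) → ℂ)
    (hf : DifferentiableOn ℂ f {z : Fin n → ℂ | ∀ j, 0 < (z j).im})
    {l₀ : ℂ} (hl₀ : 0 < l₀.im) (j : Fin n) :
    DifferentiableAt ℂ (fun μ : ℂ => fderiv ℂ f (fun _ => μ) (Pi.single j 1)) l₀ := by
  set Hn := {z : Fin n → ℂ | ∀ j, 0 < (z j).im} with hHn
  set y : ℝ := l₀.im with hy
  set r : ℝ := y / 8 with hr
  have hr0 : 0 < r := by positivity
  set e : Fin n → ℂ := Pi.single j 1 with he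
  set pt : ℂ → ℂ → (Fin n → ℂ) := fun μ w k => μ + w * e k with hpt
  -- membership in Hn
  have hmem : ∀ μ : ℂ, dist μ l₀ ≤ 4 * r → ∀ w : ℂ, ‖w‖ ≤ r → pt μ w ∈ Hn := by
    intro μ hμ w hw k
    have h1 : |(μ - l₀).im| ≤ 4 * r := le_trans (Complex.abs_im_le_norm _) (by rwa [dist_eq_norm] at hμ)
    have h2 : |(w * e k).im| ≤ r := by
      refine le_trans (Complex.abs_im_le_norm _) ?_
      rw [norm_mul]
      rcases eq_or_ne k j with rfl | hkj
      · simp [he]; exact hw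
      · simp [he, Pi.single_apply, hkj]; positivity
    have h3 : (μ - l₀).im = μ.im - l₀.im := by simp
    have h4 : (pt μ w k).im = μ.im + (w * e k).im := by simp [hpt]
    rw [h4]
    rw [abs_le] at h1 h2
    rw [h3] at h1
    have : l₀.im = y := rfl
    have hry : r = y / 8 := rfl
    linarith [h1.1, h2.1]
  -- compact set and uniform bound on f
  obtain ⟨M, hM⟩ : ∃ M : ℝ, ∀ x ∈ (fun p : ℂ × ℂ => pt p.1 p.2) ''
      (closedBall l₀ (4*r) ×ˢ closedBall (0:ℂ) r), ‖f x‖ ≤ M := by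
    have hK : IsCompact ((fun p : ℂ × ℂ => pt p.1 p.2) ''
        (closedBall l₀ (4*r) ×ˢ closedBall (0:ℂ) r)) := by
      apply IsCompact.image (isCompact_closedBall _ _ |>.prod (isCompact_closedBall _ _))
      apply continuous_pi
      intro k
      exact (continuous_fst.comp continuous_id').add
        ((continuous_snd.comp continuous_id').mul continuous_const)
    have hsub : (fun p : ℂ × ℂ => pt p.1 p.2) ''
        (closedBall l₀ (4*r) ×ˢ closedBall (0:ℂ) r) ⊆ Hn := by
      rintro x ⟨⟨μ, w⟩, ⟨hμ, hw⟩, rfl⟩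
      exact hmem μ (by simpa [dist_comm] using hμ) w (by simpa using mem_closedBall_zero_iff.1 hw)
    exact hK.exists_bound_of_continuousOn (hf.continuousOn.mono hsub)
  set M' : ℝ := max M 0 with hM'
  have hMle : ∀ μ : ℂ, dist μ l₀ ≤ 4*r → ∀ w : ℂ, ‖w‖ ≤ r → ‖f (pt μ w)‖ ≤ M' := by
    intro μ hμ w hw
    refine le_trans (hM _ ⟨⟨μ, w⟩, ⟨?_, ?_⟩, rfl⟩) (le_max_left _ _)
    · exact mem_closedBall.2 hμ
    · exact mem_closedBall_zero_iff.2 hw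
  -- derivative of μ-slice
  set q : ℂ → ℂ → ℂ := fun μ w => fderiv ℂ f (pt μ w) (fun _ => 1) with hq
  have hslice : ∀ μ : ℂ, dist μ l₀ ≤ 4*r → ∀ w : ℂ, ‖w‖ ≤ r →
      HasDerivAt (fun ν : ℂ => f (pt ν w)) (q μ w) μ := by
    intro μ hμ w hw
    have hfd : HasFDerivAt f (fderiv ℂ f (pt μ w)) (pt μ w) :=
      (hf.differentiableAt (hn_open'.mem_nhds (hmem μ hμ w hw))).hasFDerivAt
    have hptd : HasDerivAt (fun ν : ℂ => pt ν w) (fun _ => (1:ℂ)) μ := by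
      apply hasDerivAt_pi.2
      intro k
      exact (hasDerivAt_id μ).add_const (w * e k)
    exact hfd.comp_hasDerivAt μ hptd
  -- uniform bound on q via the Schwarz lemma
  have hqbd : ∀ μ : ℂ, dist μ l₀ ≤ 3*r → ∀ w : ℂ, ‖w‖ ≤ r → ‖q μ w‖ ≤ (2*M'+1)/r := by
    intro μ hμ w hw
    have hsub : ∀ ν ∈ ball μ r, dist ν l₀ ≤ 4*r := by
      intro ν hν
      calc dist ν l₀ ≤ dist ν μ + dist μ l₀ := dist_triangle _ _ _
        _ ≤ r + 3*r := add_le_add (le_of_lt (mem_ball.1 hν)) hμ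
        _ = 4*r := by ring
    have hud : DifferentiableOn ℂ (fun ν : ℂ => f (pt ν w)) (ball μ r) := by
      intro ν hν
      exact ((hslice ν (hsub ν hν) w hw).differentiableAt).differentiableWithinAt
    have humaps : MapsTo (fun ν : ℂ => f (pt ν w)) (ball μ r) (ball (f (pt μ w)) (2*M'+1)) := by
      intro ν hν
      rw [mem_ball]
      have h1 := hMle ν (hsub ν hν) w hw
      have h2 := hMle μ (by linarith [dist_nonneg (x := μ) (y := l₀)]) w hw
      calc dist (f (pt ν w)) (f (pt μ w)) ≤ ‖f (pt ν w)‖ + ‖f (pt μ w)‖ := dist_le_norm_add_norm _ _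
        _ ≤ M' + M' := add_le_add h1 h2
        _ < 2*M'+1 := by linarith
    have := Complex.norm_deriv_le_div_of_mapsTo_ball hud (humaps.mono_right ball_subset_closedBall) hr0
    rw [(hslice μ (by linarith [dist_nonneg (x := μ) (y := l₀)]) w hw).deriv] at this
    simpa using this
  -- Cauchy integral representation of the partial derivative
  set g : ℂ → ℂ := fun μ => (2 * (Real.pi:ℂ) * Complex.I)⁻¹ •
      ∮ z in C(0, r), (1 / (z - 0) : ℂ) ^ 1 • (z - 0)⁻¹ • f (pt μ z) with hg
  have hrepr : ∀ μ : ℂ, dist μ l₀ < r → fderiv ℂ f (fun _ => μ) (Pi.single j 1) = g μ := by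
    intro μ hμ
    have hμ4 : dist μ l₀ ≤ 4*r := by linarith
    set R : NNReal := ⟨r, hr0.le⟩ with hR
    have hcoe : (R : ℝ) = r := rfl
    have hφd : DifferentiableOn ℂ (fun w : ℂ => f (pt μ w)) (closedBall 0 (R:ℝ)) := by
      intro w hw
      have hw' : ‖w‖ ≤ r := by rwa [hcoe, mem_closedBall_zero_iff] at hw
      have h1 : DifferentiableAt ℂ (fun w : ℂ => pt μ w) w := by
        apply differentiableAt_pi.2
        intro k
        exact (differentiableAt_id.mul_const (e k)).const_add μ
      exact ((hf.differentiableAt (hn_open'.mem_nhds (hmem μ hμ4 w hw'))).comp w h1).differentiableWithinAt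
    have hps := hφd.hasFPowerSeriesOnBall (by exact_mod_cast hr0)
    have hderiv1 : deriv (fun w : ℂ => f (pt μ w)) 0
        = cauchyPowerSeries (fun w : ℂ => f (pt μ w)) 0 (R:ℝ) 1 (fun _ => 1) :=
      hps.hasFPowerSeriesAt.deriv
    -- identify deriv of the w-slice with the partial derivative
    have hwslice : HasDerivAt (fun w : ℂ => f (pt μ w))
        (fderiv ℂ f (pt μ 0) e) 0 := by
      have hfd : HasFDerivAt f (fderiv ℂ f (pt μ 0)) (pt μ 0) :=
        (hf.differentiableAt (hn_open'.mem_nhds (hmem μ hμ4 0 (by simp [hr0.le])))).hasFDerivAt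
      have hptd : HasDerivAt (fun w : ℂ => pt μ w) e 0 := by
        apply hasDerivAt_pi.2
        intro k
        have := ((hasDerivAt_id (0:ℂ)).mul_const (e k)).const_add μ
        rw [one_mul] at this
        exact this
      exact hfd.comp_hasDerivAt 0 hptd
    have hpt0 : pt μ 0 = fun _ => μ := by funext k; simp [hpt]
    rw [cauchyPowerSeries_apply] at hderiv1
    rw [hwslice.deriv, hpt0] at hderiv1
    rw [← he]
    rw [hderiv1]
    rfl
  -- the parametric integral
  set F : ℂ → ℝ → ℂ := fun μ θ => deriv (circleMap 0 r) θ •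
      ((1 / (circleMap 0 r θ - 0) : ℂ) ^ 1 • (circleMap 0 r θ - 0)⁻¹ • f (pt μ (circleMap 0 r θ))) with hF
  set F' : ℂ → ℝ → ℂ := fun μ θ => deriv (circleMap 0 r) θ •
      ((1 / (circleMap 0 r θ - 0) : ℂ) ^ 1 • (circleMap 0 r θ - 0)⁻¹ • q μ (circleMap 0 r θ)) with hF'
  have hgeq : g = fun μ => (2 * (Real.pi:ℂ) * Complex.I)⁻¹ •
      ∫ θ in (0:ℝ)..(2*Real.pi), F μ θ := by
    funext μ
    rw [hg]
    rfl
  have hnormc : ∀ θ : ℝ, ‖circleMap 0 r θ‖ = r := by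
    intro θ
    simp [norm_circleMap_zero, abs_of_pos hr0]
  have hcne : ∀ θ : ℝ, circleMap 0 r θ ≠ 0 := fun θ => circleMap_ne_center hr0.ne'
  have hptc : ∀ μ : ℂ, Continuous fun θ : ℝ => pt μ (circleMap 0 r θ) := by
    intro μ
    exact continuous_pi fun k => continuous_const.add ((continuous_circleMap 0 r).mul continuous_const)
  have hfc : ∀ μ : ℂ, dist μ l₀ ≤ 4*r → Continuous fun θ : ℝ => f (pt μ (circleMap 0 r θ)) := by
    intro μ hμ
    exact hf.continuousOn.comp_continuous (hptc μ)
      (fun θ => hmem μ hμ _ (le_of_eq (hnormc θ)))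
  have hdercont : Continuous fun θ : ℝ => deriv (circleMap 0 r) θ := by
    have : (fun θ : ℝ => deriv (circleMap 0 r) θ) = fun θ => circleMap 0 r θ * Complex.I :=
      funext fun θ => deriv_circleMap 0 r θ
    rw [this]
    exact (continuous_circleMap 0 r).mul continuous_const
  have hinvc : Continuous fun θ : ℝ => (circleMap 0 r θ - 0)⁻¹ := by
    apply Continuous.inv₀
    · exact (continuous_circleMap 0 r).sub continuous_const
    · intro θ; simpa using hcne θ
  have hpowc : Continuous fun θ : ℝ => (1 / (circleMap 0 r θ - 0) : ℂ) ^ 1 := by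
    simpa [one_div] using hinvc.pow 1
  have hFcont : ∀ μ : ℂ, dist μ l₀ ≤ 4*r → Continuous (F μ) := by
    intro μ hμ
    exact hdercont.smul (hpowc.smul (hinvc.smul (hfc μ hμ)))
  have twopi : (0:ℝ) < 2*Real.pi := by positivity
  have hF_meas : ∀ᶠ μ in nhds l₀, MeasureTheory.AEStronglyMeasurable (F μ)
      (MeasureTheory.volume.restrict (Set.uIoc (0:ℝ) (2*Real.pi))) := by
    filter_upwards [Metric.ball_mem_nhds l₀ hr0] with μ hμ
    exact ((hFcont μ (by linarith [le_of_lt (mem_ball.1 hμ)])).aestronglyMeasurable)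
  have hF_int : IntervalIntegrable (F l₀) MeasureTheory.volume 0 (2*Real.pi) :=
    (hFcont l₀ (by rw [dist_self]; positivity)).intervalIntegrable _ _
  have hqmeas : ∀ μ : ℂ, Measurable fun θ : ℝ => q μ (circleMap 0 r θ) := by
    intro μ
    exact (measurable_fderiv_apply_const ℂ f _).comp (hptc μ).measurable
  have hF'_meas : MeasureTheory.AEStronglyMeasurable (F' l₀)
      (MeasureTheory.volume.restrict (Set.uIoc (0:ℝ) (2*Real.pi))) := by
    apply Measurable.aestronglyMeasurable
    apply Measurable.smul hdercont.measurable
    apply Measurable.smul hpowc.measurable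
    apply Measurable.smul hinvc.measurable
    exact hqmeas l₀
  have h_bound : ∀ᵐ θ ∂MeasureTheory.volume, θ ∈ Set.uIoc (0:ℝ) (2*Real.pi) →
      ∀ μ ∈ ball l₀ r, ‖F' μ θ‖ ≤ (2*M'+1)/r/r := by
    apply MeasureTheory.ae_of_all
    intro θ _ μ hμ
    have hqb := hqbd μ (by linarith [le_of_lt (mem_ball.1 hμ)]) (circleMap 0 r θ)
      (le_of_eq (hnormc θ))
    have hnF' : ‖F' μ θ‖ = ‖q μ (circleMap 0 r θ)‖ / r := by
      rw [hF']
      simp only [norm_smul, deriv_circleMap, pow_one, sub_zero, norm_mul, norm_inv, one_div,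
        Complex.norm_I, mul_one]
      rw [hnormc θ]
      field_simp
    rw [hnF']
    gcongr
  have bound_integrable : IntervalIntegrable (fun _ : ℝ => (2*M'+1)/r/r)
      MeasureTheory.volume 0 (2*Real.pi) := intervalIntegrable_const
  have h_diff : ∀ᵐ θ ∂MeasureTheory.volume, θ ∈ Set.uIoc (0:ℝ) (2*Real.pi) →
      ∀ μ ∈ ball l₀ r, HasDerivAt (fun μ => F μ θ) (F' μ θ) μ := by
    apply MeasureTheory.ae_of_all
    intro θ _ μ hμ
    have hs := hslice μ (by linarith [le_of_lt (mem_ball.1 hμ)]) (circleMap 0 r θ)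
      (le_of_eq (hnormc θ))
    exact ((hs.const_smul ((circleMap 0 r θ - 0)⁻¹ : ℂ)).const_smul
      ((1 / (circleMap 0 r θ - 0) : ℂ) ^ 1)).const_smul (deriv (circleMap 0 r) θ)
  have key := intervalIntegral.hasDerivAt_integral_of_dominated_loc_of_deriv_le (Metric.ball_mem_nhds l₀ hr0)
    hF_meas hF_int hF'_meas h_bound bound_integrable h_diff
  have hgdiff : DifferentiableAt ℂ g l₀ := by
    rw [hgeq]
    exact (differentiableAt_const ((2 * (Real.pi:ℂ) * Complex.I)⁻¹)).smul key.2.differentiableAt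
  have hev : (fun μ : ℂ => fderiv ℂ f (fun _ => μ) (Pi.single j 1)) =ᶠ[nhds l₀] g := by
    filter_upwards [Metric.ball_mem_nhds l₀ hr0] with μ hμ
    exact hrepr μ (mem_ball.1 hμ)
  exact hgdiff.congr_of_eventuallyEq hev

lemma const_of_real (g : ℂ → ℂ) (hd : ∀ l : ℂ, 0 < l.im → DifferentiableAt ℂ g l)
    (hre : ∀ l : ℂ, 0 < l.im → (g l).im = 0) {a b : ℂ} (ha : 0 < a.im) (hb : 0 < b.im) :
    g a = g b := by
  set S : Set ℂ := {z : ℂ | 0 < z.im} with hS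
  have hSo : IsOpen S := isOpen_lt continuous_const Complex.continuous_im
  have hconv : Convex ℝ S := convex_halfSpace_im_gt 0
  have hzero : ∀ x ∈ S, fderivWithin ℂ g S x = 0 := by
    intro x hx
    have hgx : HasDerivAt g (deriv g x) x := (hd x hx).hasDerivAt
    set d : ℂ := deriv g x with hdd
    have hfd : HasFDerivAt (fun z => (g z).im)
        (Complex.imCLM.comp ((ContinuousLinearMap.smulRight (1 : ℂ →L[ℂ] ℂ) d).restrictScalars ℝ))
        x := Complex.imCLM.hasFDerivAt.comp x (hgx.hasFDerivAt.restrictScalars ℝ)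
    have him : (fun z => (g z).im) =ᶠ[nhds x] (fun _ => (0:ℝ)) := by
      filter_upwards [hSo.mem_nhds hx] with z hz
      exact hre z hz
    have h0 : fderiv ℝ (fun z => (g z).im) x = 0 := by
      rw [Filter.EventuallyEq.fderiv_eq him]
      exact fderiv_const_apply 0
    rw [hfd.fderiv] at h0
    have h1 : d.im = 0 := by
      have := congrArg (fun L : ℂ →L[ℝ] ℝ => L 1) h0
      simpa using this
    have h2 : d.re = 0 := by
      have := congrArg (fun L : ℂ →L[ℝ] ℝ => L Complex.I) h0
      simpa using this
    have hd0 : d = 0 := Complex.ext h2 h1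
    have : fderiv ℂ g x = 0 := by
      apply ContinuousLinearMap.ext_ring
      show fderiv ℂ g x 1 = (0 : ℂ →L[ℂ] ℂ) 1
      have : fderiv ℂ g x 1 = deriv g x := rfl
      rw [this]
      simpa using hd0
    rw [fderivWithin_of_isOpen hSo hx]
    exact this
  exact hconv.is_const_of_fderivWithin_eq_zero
    (fun x hx => (hd x hx).differentiableWithinAt) hzero ha hb

lemma real_coords {n : ℕ} (g : Fin n → ℂ)
    (hsum : ∑ j, g j = 1)
    (hbd : ∀ c : Fin n → ℂ, (∀ j, ‖c j‖ ≤ 1) → ‖∑ j, c j * g j‖ ≤ 1) :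
    ∀ j, g j = ((‖g j‖ : ℝ) : ℂ) := by
  set c : Fin n → ℂ := fun j => if g j = 0 then 1 else (starRingEnd ℂ) (g j) / (‖g j‖ : ℂ) with hc
  have hc1 : ∀ j, ‖c j‖ ≤ 1 := by
    intro j
    rw [hc]
    by_cases h : g j = 0
    · simp [h]
    · have hg0 : ‖g j‖ ≠ 0 := norm_ne_zero_iff.2 h
      simp only [h, if_false, norm_div, Complex.norm_real, norm_norm]
      rw [show ‖(starRingEnd ℂ) (g j)‖ = ‖g j‖ from by
        simp]
      rw [div_self hg0]
  have hcg : ∀ j, c j * g j = (‖g j‖ : ℂ) := by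
    intro j
    rw [hc]
    by_cases h : g j = 0
    · simp [h]
    · have hg0 : (‖g j‖ : ℂ) ≠ 0 := Complex.ofReal_ne_zero.2 (norm_ne_zero_iff.2 h)
      simp only [h, if_false]
      rw [div_mul_eq_mul_div, mul_comm ((starRingEnd ℂ) (g j)) (g j), Complex.mul_conj]
      rw [Complex.normSq_eq_norm_sq]
      rw [div_eq_iff hg0]
      push_cast
      ring
  have h1 : ∑ j, ‖g j‖ ≤ 1 := by
    have := hbd c hc1
    have he : ∑ j, c j * g j = ((∑ j, ‖g j‖ : ℝ) : ℂ) := by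
      push_cast
      exact Finset.sum_congr rfl (fun j _ => hcg j)
    rw [he] at this
    rw [Complex.norm_real, Real.norm_eq_abs, _root_.abs_of_nonneg (Finset.sum_nonneg (fun j _ => norm_nonneg _))] at this
    exact this
  have h2 : (1:ℝ) ≤ ∑ j, ‖g j‖ := by
    calc (1:ℝ) = ‖(1:ℂ)‖ := by simp
      _ = ‖∑ j, g j‖ := by rw [hsum]
      _ ≤ ∑ j, ‖g j‖ := norm_sum_le _ _
  have heq : ∑ j, ‖g j‖ = 1 := le_antisymm h1 h2
  have hre : ∑ j, (g j).re = 1 := by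
    have := congrArg Complex.re hsum
    simpa [Complex.re_sum] using this
  have hzero : ∑ j, (‖g j‖ - (g j).re) = 0 := by
    rw [Finset.sum_sub_distrib, heq, hre]
    ring
  have hall := (Finset.sum_eq_zero_iff_of_nonneg
    (fun j _ => sub_nonneg.2 (by simpa using Complex.re_le_norm (g j)))).1 hzero
  intro j
  have habs : ‖g j‖ = (g j).re := by
    have := hall j (Finset.mem_univ j)
    linarith [sub_eq_zero.1 this]
  have hsq := Complex.sq_norm (g j)
  rw [Complex.normSq_apply] at hsq
  have habs' : ‖g j‖ = (g j).re := by
    exact habs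
  rw [habs'] at hsq
  have him2 : (g j).im ^ 2 = 0 := by nlinarith [hsq]
  have him : (g j).im = 0 := by
    nlinarith [him2, sq_nonneg ((g j).im)]
  apply Complex.ext
  · simp [habs]
  · simp [him]

/-- Let `f : ℍⁿ → ℍ` be holomorphic with `f(λ,…,λ) = λ` for all `λ ∈ ℍ`.
Then for each `j`, the function `λ ↦ ∂f/∂z_j(λ,…,λ)` is constant on `ℍ`, equal to a
nonnegative real number `α j`, and `∑ j, α j = 1`. -/
theorem diagonal_partials_constant {n : ℕ} (f : (Fin n → ℂ) → ℂ)
    (hf : DifferentiableOn ℂ f {z : Fin n → ℂ | ∀ j, 0 < (z j).im})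
    (hmaps : ∀ z : Fin n → ℂ, (∀ j, 0 < (z j).im) → 0 < (f z).im)
    (hdiag : ∀ l : ℂ, 0 < l.im → f (fun _ => l) = l) :
    ∃ α : Fin n → ℝ, (∀ j, 0 ≤ α j) ∧ (∑ j, α j = 1) ∧
      ∀ l : ℂ, 0 < l.im → ∀ j, fderiv ℂ f (fun _ => l) (Pi.single j 1) = (α j : ℂ) := by
  have hsum : ∀ l : ℂ, 0 < l.im → ∑ j, fderiv ℂ f (fun _ => l) (Pi.single j 1) = 1 :=
    fun l hl => sum_partials_eq_one f hf hdiag hl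
  have hrealco : ∀ l : ℂ, 0 < l.im → ∀ j,
      fderiv ℂ f (fun _ => l) (Pi.single j 1)
        = ((‖fderiv ℂ f (fun _ => l) (Pi.single j 1)‖ : ℝ) : ℂ) := by
    intro l hl
    exact real_coords _ (hsum l hl) (fun c hc => key_bound f hf hmaps hl (hdiag l hl) c hc)
  have hIim : 0 < Complex.I.im := by simp
  refine ⟨fun j => ‖fderiv ℂ f (fun _ => Complex.I) (Pi.single j 1)‖,
    fun j => norm_nonneg _, ?_, ?_⟩
  · have h1 := hsum Complex.I hIim
    have h2 := congrArg Complex.re h1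
    rw [Complex.re_sum] at h2
    simp only [Complex.one_re] at h2
    rw [← h2]
    apply Finset.sum_congr rfl
    intro j _
    rw [hrealco Complex.I hIim j]
    simp
  · intro l hl j
    have hconst : fderiv ℂ f (fun _ => l) (Pi.single j 1)
        = fderiv ℂ f (fun _ => Complex.I) (Pi.single j 1) :=
      const_of_real (fun μ => fderiv ℂ f (fun _ => μ) (Pi.single j 1))
        (fun μ hμ => partial_differentiableAt f hf hμ j)
        (fun μ hμ => by
          show (fderiv ℂ f (fun _ => μ) (Pi.single j 1)).im = 0
          rw [hrealco μ hμ j]; simp)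
        hl hIim
    rw [hconst]
    exact hrealco Complex.I hIim j
end

section
/- Let φ : ℂ → ℝ be harmonic with φ(0) = 0, ∂φ/∂x(0) = 0, ∂φ/∂y(0) = 0, and suppose there is C > 0 with φ(z) ≥ −C|z| for all z ∈ ℂ. Then φ is identically zero. -/
open Complex Metric Set

private lemma clm_ext_complex {E : Type*} [NormedAddCommGroup E] [NormedSpace ℝ E]
    {L₁ L₂ : ℂ →L[ℝ] E} (h1 : L₁ 1 = L₂ 1) (hI : L₁ Complex.I = L₂ Complex.I) : L₁ = L₂ := by
  ext w
  have hw : w = w.re • (1 : ℂ) + w.im • Complex.I := by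
    simp [Complex.real_smul, Complex.re_add_im]
  have h2 : L₁ (w.re • (1 : ℂ) + w.im • Complex.I) = L₂ (w.re • (1 : ℂ) + w.im • Complex.I) := by
    simp only [map_add, map_smul, h1, hI]
  rwa [← hw] at h2

private lemma abs_sub_le_of_mem_uIoc {a b s : ℝ} (h : s ∈ Set.uIoc a b) : |s - a| ≤ |b - a| := by
  rw [Set.mem_uIoc] at h
  have h1 : b - a ≤ |b - a| := le_abs_self _
  have h2 : -|b - a| ≤ b - a := neg_abs_le _
  have h3 : (0:ℝ) ≤ |b - a| := abs_nonneg _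
  rcases h with ⟨ha, hb⟩ | ⟨ha, hb⟩ <;> rw [abs_le] <;> constructor <;> linarith

set_option maxHeartbeats 1000000

/-- Let `φ : ℂ → ℝ` be harmonic with `φ(0) = 0`, `∂φ/∂x(0) = 0`,
`∂φ/∂y(0) = 0`, and suppose there is `C > 0` with `φ(z) ≥ -C|z|` for all `z`.
Then `φ` is identically zero. -/
theorem harmonic_linear_lower_bound_rigidity (φ : ℂ → ℝ)
    (hsmooth : ContDiff ℝ 2 φ)
    (hharm : ∀ z : ℂ,
      fderiv ℝ (fun w => fderiv ℝ φ w 1) z 1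
        + fderiv ℝ (fun w => fderiv ℝ φ w Complex.I) z Complex.I = 0)
    (h0 : φ 0 = 0)
    (hx : fderiv ℝ φ 0 1 = 0)
    (hy : fderiv ℝ φ 0 Complex.I = 0)
    (C : ℝ) (hC : 0 < C)
    (hbound : ∀ z : ℂ, φ z ≥ -C * ‖z‖) :
    ∀ z : ℂ, φ z = 0 := by
  -- ## Step 1: the function `f = φₓ - i φ_y` is entire (Cauchy–Riemann from harmonicity)
  have hφd : Differentiable ℝ φ := hsmooth.differentiable two_ne_zero
  have hΦc1 : ContDiff ℝ 1 (fderiv ℝ φ) := hsmooth.fderiv_right (by norm_num)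
  have hΦd : Differentiable ℝ (fderiv ℝ φ) := hΦc1.differentiable one_ne_zero
  have hd2 : ∀ z : ℂ, HasFDerivAt (fderiv ℝ φ) (fderiv ℝ (fderiv ℝ φ) z) z :=
    fun z => (hΦd z).hasFDerivAt
  have hpart : ∀ (c z v : ℂ),
      fderiv ℝ (fun w => fderiv ℝ φ w c) z v = fderiv ℝ (fderiv ℝ φ) z v c := by
    intro c z v
    have h : HasFDerivAt (fun w => fderiv ℝ φ w c)
        ((ContinuousLinearMap.apply ℝ ℝ c).comp (fderiv ℝ (fderiv ℝ φ) z)) z :=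
      (ContinuousLinearMap.apply ℝ ℝ c).hasFDerivAt.comp z (hd2 z)
    rw [h.fderiv]
    rfl
  have hsymm : ∀ z v w : ℂ, fderiv ℝ (fderiv ℝ φ) z v w = fderiv ℝ (fderiv ℝ φ) z w v :=
    fun z => hsmooth.contDiffAt.isSymmSndFDerivAt (by simp)
  have hharm' : ∀ z : ℂ, fderiv ℝ (fderiv ℝ φ) z Complex.I Complex.I
      = - fderiv ℝ (fderiv ℝ φ) z 1 1 := by
    intro z
    have h := hharm z
    rw [hpart 1 z 1, hpart Complex.I z Complex.I] at h
    linarith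
  set g : (ℂ →L[ℝ] ℝ) →L[ℝ] ℂ :=
    ((ContinuousLinearMap.apply ℝ ℝ 1).smulRight (1 : ℂ)) +
      ((ContinuousLinearMap.apply ℝ ℝ Complex.I).smulRight (-Complex.I)) with hgdef
  have hgT : ∀ T : ℂ →L[ℝ] ℝ, g T = ((T 1 : ℝ) : ℂ) - ((T Complex.I : ℝ) : ℂ) * Complex.I := by
    intro T
    simp only [hgdef, ContinuousLinearMap.add_apply, ContinuousLinearMap.smulRight_apply,
      ContinuousLinearMap.apply_apply, Complex.real_smul]
    ring
  set f : ℂ → ℂ := fun u => g (fderiv ℝ φ u) with hfdef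
  have hf0 : f 0 = 0 := by
    rw [hfdef]; simp only [hgT, hx, hy]; simp
  have hfre : ∀ z, (f z).re = fderiv ℝ φ z 1 := by
    intro z; rw [hfdef]; simp only [hgT]; simp
  have hfim : ∀ z, (f z).im = - fderiv ℝ φ z Complex.I := by
    intro z; rw [hfdef]; simp only [hgT]; simp
  have hfc : Continuous f := g.continuous.comp hΦc1.continuous
  have hfdC : Differentiable ℂ f := by
    intro z
    have H : (((1 : ℂ →L[ℂ] ℂ).smulRight (g (fderiv ℝ (fderiv ℝ φ) z 1))).restrictScalars ℝ)
        = g.comp (fderiv ℝ (fderiv ℝ φ) z) := by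
      apply clm_ext_complex
      · simp
      · simp only [ContinuousLinearMap.coe_restrictScalars', ContinuousLinearMap.smulRight_apply,
          ContinuousLinearMap.one_apply, ContinuousLinearMap.comp_apply, smul_eq_mul]
        rw [hgT, hgT, hsymm z Complex.I 1, hharm' z]
        push_cast
        ring_nf
        simp [Complex.I_sq]
    exact (hasFDerivAt_of_restrictScalars ℝ (g.hasFDerivAt.comp z (hd2 z)) H).differentiableAt
  -- ## Step 2: a primitive `F` of `f`, built from rectangle path integrals
  set F : ℂ → ℂ := fun u =>
    (∫ s in (0:ℝ)..u.re, f s) + Complex.I * ∫ t in (0:ℝ)..u.im, f (u.re + t * Complex.I)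
    with hFdef
  have hc1 : Continuous fun s : ℝ => f s := hfc.comp Complex.continuous_ofReal
  have hc2 : ∀ x : ℝ, Continuous fun t : ℝ => f (x + t * Complex.I) := fun x =>
    hfc.comp (continuous_const.add (Complex.continuous_ofReal.mul continuous_const))
  have hc3 : ∀ y : ℝ, Continuous fun s : ℝ => f (s + y * Complex.I) := fun y =>
    hfc.comp (Complex.continuous_ofReal.add continuous_const)
  have hF0 : F 0 = 0 := by
    rw [hFdef]
    simp
  have hFd : ∀ z : ℂ, HasDerivAt F (f z) z := by
    intro z
    rw [hasDerivAt_iff_isLittleO, Asymptotics.isLittleO_iff]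
    intro ε hε
    obtain ⟨δ, hδ0, hδ⟩ := Metric.continuousAt_iff.1 hfc.continuousAt (ε/2) (by positivity)
    filter_upwards [Metric.ball_mem_nhds z (show 0 < δ/3 by positivity)] with w hw
    rw [Metric.mem_ball, dist_eq_norm] at hw
    have hre : |w.re - z.re| ≤ ‖w - z‖ := by simpa using Complex.abs_re_le_norm (w - z)
    have him : |w.im - z.im| ≤ ‖w - z‖ := by simpa using Complex.abs_im_le_norm (w - z)
    have hrect := Complex.integral_boundary_rect_eq_zero_of_differentiableOn f (z.re : ℂ) w
      hfdC.differentiableOn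
    simp only [Complex.ofReal_re, Complex.ofReal_im, Complex.ofReal_zero, zero_mul,
      add_zero] at hrect
    have h1 : (∫ s in (0:ℝ)..w.re, f s) - ∫ s in (0:ℝ)..z.re, f s = ∫ s in z.re..w.re, f s :=
      intervalIntegral.integral_interval_sub_left (hc1.intervalIntegrable _ _)
        (hc1.intervalIntegrable _ _)
    have h2 : (∫ t in (0:ℝ)..w.im, f (z.re + t * Complex.I))
        - ∫ t in (0:ℝ)..z.im, f (z.re + t * Complex.I)
        = ∫ t in z.im..w.im, f (z.re + t * Complex.I) :=
      intervalIntegral.integral_interval_sub_left ((hc2 z.re).intervalIntegrable _ _)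
        ((hc2 z.re).intervalIntegrable _ _)
    have key : F w - F z = (∫ s in z.re..w.re, f (s + w.im * Complex.I))
        + Complex.I * ∫ t in z.im..w.im, f (z.re + t * Complex.I) := by
      simp only [hFdef]
      simp only [smul_eq_mul] at hrect
      linear_combination h1 + Complex.I * h2 + hrect
    have hbound1 : ‖∫ s in z.re..w.re, (f (s + w.im * Complex.I) - f z)‖
        ≤ ε/2 * |w.re - z.re| := by
      apply intervalIntegral.norm_integral_le_of_norm_le_const
      intro s hs
      have h4 : |s - z.re| ≤ |w.re - z.re| := abs_sub_le_of_mem_uIoc hs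
      have h5 : dist (↑s + ↑w.im * Complex.I) z < δ := by
        rw [dist_eq_norm]
        have he : (↑s + ↑w.im * Complex.I) - z = ↑(s - z.re) + ↑(w.im - z.im) * Complex.I := by
          simp [Complex.ext_iff]
        rw [he]
        calc ‖(↑(s - z.re) : ℂ) + ↑(w.im - z.im) * Complex.I‖
            ≤ ‖(↑(s - z.re) : ℂ)‖ + ‖(↑(w.im - z.im) : ℂ) * Complex.I‖ := norm_add_le _ _
          _ = |s - z.re| + |w.im - z.im| := by
              rw [norm_mul, Complex.norm_I, mul_one, Complex.norm_real, Complex.norm_real,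
                Real.norm_eq_abs, Real.norm_eq_abs]
          _ < δ := by linarith
      have h6 := hδ h5
      rw [dist_eq_norm] at h6
      exact h6.le
    have hbound2 : ‖∫ t in z.im..w.im, (f (z.re + t * Complex.I) - f z)‖
        ≤ ε/2 * |w.im - z.im| := by
      apply intervalIntegral.norm_integral_le_of_norm_le_const
      intro t ht
      have h4 : |t - z.im| ≤ |w.im - z.im| := abs_sub_le_of_mem_uIoc ht
      have h5 : dist (↑z.re + ↑t * Complex.I) z < δ := by
        rw [dist_eq_norm]
        have he : (↑z.re + ↑t * Complex.I) - z = ↑(t - z.im) * Complex.I := by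
          simp [Complex.ext_iff]
        rw [he]
        have hn : ‖(↑(t - z.im) : ℂ) * Complex.I‖ = |t - z.im| := by
          rw [norm_mul, Complex.norm_I, mul_one, Complex.norm_real, Real.norm_eq_abs]
        rw [hn]
        linarith
      have h6 := hδ h5
      rw [dist_eq_norm] at h6
      exact h6.le
    have hsplit : F w - F z - (w - z) • f z
        = (∫ s in z.re..w.re, (f (s + w.im * Complex.I) - f z))
          + Complex.I * ∫ t in z.im..w.im, (f (z.re + t * Complex.I) - f z) := by
      rw [intervalIntegral.integral_sub ((hc3 w.im).intervalIntegrable _ _)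
          intervalIntegrable_const,
        intervalIntegral.integral_sub ((hc2 z.re).intervalIntegrable _ _)
          intervalIntegrable_const,
        intervalIntegral.integral_const, intervalIntegral.integral_const, key]
      have hwz : w - z = ↑(w.re - z.re) + ↑(w.im - z.im) * Complex.I := by simp [Complex.ext_iff]
      rw [hwz]
      simp only [smul_eq_mul, Complex.real_smul]
      ring
    rw [hsplit]
    calc ‖(∫ s in z.re..w.re, (f (↑s + ↑w.im * Complex.I) - f z))
        + Complex.I * ∫ t in z.im..w.im, (f (↑z.re + ↑t * Complex.I) - f z)‖
        ≤ ε/2 * |w.re - z.re| + ε/2 * |w.im - z.im| := by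
          refine (norm_add_le _ _).trans (add_le_add hbound1 ?_)
          rw [norm_mul, Complex.norm_I, one_mul]
          exact hbound2
      _ ≤ ε * ‖w - z‖ := by nlinarith
  clear_value g f F
  -- ## Step 3: `Re F = φ`
  have hu : ∀ z : ℂ, HasFDerivAt (fun u : ℂ => (F u).re - φ u) (0 : ℂ →L[ℝ] ℝ) z := by
    intro z
    have h1 : HasFDerivAt (fun u : ℂ => (F u).re)
        (Complex.reCLM.comp (((1 : ℂ →L[ℂ] ℂ).smulRight (f z)).restrictScalars ℝ)) z :=
      Complex.reCLM.hasFDerivAt.comp z ((hFd z).hasFDerivAt.restrictScalars ℝ)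
    have h2 : HasFDerivAt φ (fderiv ℝ φ z) z := (hφd z).hasFDerivAt
    have he : Complex.reCLM.comp (((1 : ℂ →L[ℂ] ℂ).smulRight (f z)).restrictScalars ℝ)
        = fderiv ℝ φ z := by
      apply clm_ext_complex
      · simpa using hfre z
      · simp only [ContinuousLinearMap.comp_apply, ContinuousLinearMap.coe_restrictScalars',
          ContinuousLinearMap.smulRight_apply, ContinuousLinearMap.one_apply, smul_eq_mul,
          Complex.reCLM_apply, Complex.mul_re, Complex.I_re, Complex.I_im]
        linarith [hfim z]
    have h3 := h1.sub h2
    rw [he] at h3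
    rw [sub_self] at h3
    exact h3
  have hre_eq : ∀ z : ℂ, (F z).re = φ z := by
    intro z
    have hc := is_const_of_fderiv_eq_zero (𝕜 := ℝ)
      (fun u => (hu u).differentiableAt) (fun u => (hu u).fderiv) z 0
    simp only [hF0, Complex.zero_re, h0] at hc
    linarith [hc]
  -- ## Step 4: rigidity via the Schwarz lemma and Liouville's theorem
  have hFdiff : Differentiable ℂ F := fun z => (hFd z).differentiableAt
  set G : ℂ → ℂ := fun u => -F u with hGdef
  have hGd : Differentiable ℂ G := hFdiff.neg
  have hG0 : G 0 = 0 := by simp [hGdef, hF0]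
  have hdG0 : deriv G 0 = 0 := by
    have h1 : deriv G 0 = -deriv F 0 := by simp [hGdef]
    rw [h1, (hFd 0).deriv, hf0, neg_zero]
  have hReG : ∀ u : ℂ, (G u).re ≤ C * ‖u‖ := by
    intro u
    have h1 := hre_eq u
    have h2 := hbound u
    simp only [hGdef, Complex.neg_re]
    linarith
  have hlin : ∀ z : ℂ, ‖G z‖ ≤ 4 * C * ‖z‖ := by
    intro z
    rcases eq_or_ne z 0 with rfl | hz0
    · simp [hG0]
    have hz0' : 0 < ‖z‖ := norm_pos_iff.2 hz0
    set R : ℝ := 2 * ‖z‖ with hRdef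
    have hR0 : 0 < R := by positivity
    set A : ℝ := C * R with hAdef
    have hA0 : 0 < A := by positivity
    have hden : ∀ u ∈ ball (0:ℂ) R, ((2*A : ℝ) : ℂ) - G u ≠ 0 := by
      intro u hu hcon
      rw [mem_ball, dist_zero_right] at hu
      have h1 : (G u).re ≤ C * ‖u‖ := hReG u
      have h2 : ((((2*A : ℝ) : ℂ)) - G u).re = 2*A - (G u).re := by simp
      rw [hcon, Complex.zero_re] at h2
      nlinarith [norm_nonneg u]
    set W : ℂ → ℂ := fun u => G u / (((2*A : ℝ) : ℂ) - G u) with hWdef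
    have hWd : DifferentiableOn ℂ W (ball 0 R) :=
      hGd.differentiableOn.div ((differentiable_const _).sub hGd).differentiableOn hden
    have hW0 : W 0 = 0 := by simp [hWdef, hG0]
    have hmaps : MapsTo W (ball (0:ℂ) R) (ball (W 0) 1) := by
      intro u hu
      have hu' : ‖u‖ < R := by rwa [mem_ball, dist_zero_right] at hu
      have h1 : (G u).re ≤ C * ‖u‖ := hReG u
      have hCu : C * ‖u‖ < A := by rw [hAdef]; exact mul_lt_mul_of_pos_left hu' hC
      have e1 : ‖(((2*A : ℝ) : ℂ)) - G u‖^2 - ‖G u‖^2 = 4*A*(A - (G u).re) := by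
        rw [Complex.sq_norm, Complex.sq_norm]
        simp only [Complex.normSq_apply, Complex.sub_re, Complex.sub_im, Complex.ofReal_re,
          Complex.ofReal_im]
        ring
      have hlt : ‖G u‖ < ‖(((2*A : ℝ) : ℂ)) - G u‖ := by
        have h3 : ‖G u‖^2 < ‖(((2*A : ℝ) : ℂ)) - G u‖^2 := by nlinarith
        exact lt_of_pow_lt_pow_left₀ 2 (norm_nonneg _) h3
      rw [mem_ball, hW0, dist_zero_right, hWdef]
      simp only [hWdef]
      rw [norm_div]
      exact (div_lt_one (lt_of_le_of_lt (norm_nonneg _) hlt)).2 hlt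
    have hzball : z ∈ ball (0:ℂ) R := by
      rw [mem_ball, dist_zero_right]; linarith
    have hSch := Complex.dist_le_div_mul_dist_of_mapsTo_ball hWd (hmaps.mono_right ball_subset_closedBall) hzball
    rw [hW0, dist_zero_right, dist_zero_right] at hSch
    have hhalf : 1 / R * ‖z‖ = 1/2 := by
      rw [hRdef, div_mul_eq_mul_div, one_mul, div_eq_div_iff (by positivity) (by norm_num)]
      ring
    rw [hhalf] at hSch
    have hne := hden z hzball
    have hGz : G z = W z * ((((2*A : ℝ) : ℂ)) - G z) := by
      simp only [hWdef]
      exact (div_mul_cancel₀ _ hne).symm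
    have h7 : ‖(((2*A : ℝ) : ℂ)) - G z‖ ≤ 2*A + ‖G z‖ := by
      calc ‖(((2*A : ℝ) : ℂ)) - G z‖ ≤ ‖(((2*A : ℝ) : ℂ))‖ + ‖G z‖ := norm_sub_le _ _
        _ = 2*A + ‖G z‖ := by
            rw [Complex.norm_real, Real.norm_eq_abs, abs_of_pos (by positivity)]
    have h8 : ‖G z‖ ≤ 1/2 * (2*A + ‖G z‖) := by
      calc ‖G z‖ = ‖W z‖ * ‖(((2*A : ℝ) : ℂ)) - G z‖ := by
            conv_lhs => rw [hGz]
            rw [norm_mul]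
        _ ≤ 1/2 * (2*A + ‖G z‖) := mul_le_mul hSch h7 (norm_nonneg _) (by norm_num)
    have h9 : ‖G z‖ ≤ 2*A := by linarith
    calc ‖G z‖ ≤ 2*A := h9
      _ = 4*C*‖z‖ := by rw [hAdef, hRdef]; ring
  have hdsl : Differentiable ℂ (dslope G 0) := by
    intro u
    have hmem : u ∈ ball (0:ℂ) (‖u‖ + 1) := by
      rw [mem_ball, dist_zero_right]; linarith [norm_nonneg u]
    have hball := (differentiableOn_dslope (c := (0:ℂ))
      (ball_mem_nhds (0:ℂ) (show (0:ℝ) < ‖u‖ + 1 by positivity))).mpr hGd.differentiableOn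
    exact (hball u hmem).differentiableAt (isOpen_ball.mem_nhds hmem)
  have hbdd : Bornology.IsBounded (Set.range (dslope G 0)) := by
    apply (Metric.isBounded_closedBall (x := (0:ℂ)) (r := 4*C)).subset
    rintro - ⟨u, rfl⟩
    rw [Metric.mem_closedBall, dist_zero_right]
    rcases eq_or_ne u 0 with rfl | hu
    · rw [dslope_same, hdG0, norm_zero]; positivity
    · rw [dslope_of_ne _ hu, slope_def_field, hG0, sub_zero, sub_zero, norm_div]
      rw [div_le_iff₀ (norm_pos_iff.2 hu)]
      exact hlin u
  have hconst := fun u => hdsl.apply_eq_apply_of_bounded hbdd u 0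
  intro z
  rcases eq_or_ne z 0 with rfl | hz
  · exact h0
  · have h1 := hconst z
    rw [dslope_same, hdG0, dslope_of_ne _ hz, slope_def_field, hG0, sub_zero, sub_zero] at h1
    have h2 : G z = 0 := (div_eq_zero_iff.1 h1).resolve_right hz
    have h3 : F z = 0 := by
      have h4 : -F z = 0 := h2
      exact neg_eq_zero.mp h4
    have h5 := hre_eq z
    rw [h3] at h5
    simpa using h5.symm
end

section
/- Let φ : ℂ → ℝ be harmonic with φ(0) = 0, and suppose φ(z) ≥ −C|z| for all z ∈ ℂ for some constant C > 0. Then |φ(z)| ≤ 6C|z| for all z ∈ ℂ. -/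
open Complex Metric

noncomputable section HarmonicAux

namespace HarmonicAux

variable {φ : ℂ → ℝ}

/-- Extensionality for real-linear maps out of ℂ. -/
lemma clm_ext {F : Type*} [NormedAddCommGroup F] [NormedSpace ℝ F]
    {A B : ℂ →L[ℝ] F} (h1 : A 1 = B 1) (hI : A I = B I) : A = B := by
  ext v
  have hv : v = v.re • (1:ℂ) + v.im • I := by
    rw [Complex.real_smul, Complex.real_smul, mul_one]
    exact (Complex.re_add_im v).symm
  rw [hv, map_add, map_add, map_smul, map_smul, map_smul, map_smul, h1, hI]

/-- Symmetry of second derivatives. -/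
lemma symm2 (hsmooth : ContDiff ℝ 2 φ) (z a b : ℂ) :
    fderiv ℝ (fun w => fderiv ℝ φ w a) z b = fderiv ℝ (fun w => fderiv ℝ φ w b) z a := by
  have hd1 : Differentiable ℝ φ := hsmooth.differentiable two_ne_zero
  have hd2 : Differentiable ℝ (fderiv ℝ φ) :=
    (hsmooth.fderiv_right (m := 1) le_rfl).differentiable one_ne_zero
  have hsym := second_derivative_symmetric (f' := fderiv ℝ φ)
    (f'' := fderiv ℝ (fderiv ℝ φ) z) (x := z)
    (fun y => (hd1 y).hasFDerivAt) (hd2 z).hasFDerivAt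
  have key : ∀ c d : ℂ, fderiv ℝ (fun w => fderiv ℝ φ w c) z d
      = fderiv ℝ (fderiv ℝ φ) z d c := by
    intro c d
    rw [fderiv_clm_apply (hd2 z) (differentiableAt_const c)]
    simp
  rw [key, key, hsym]

/-- The holomorphic derivative candidate. -/
def g (φ : ℂ → ℝ) : ℂ → ℂ :=
  fun w => (fderiv ℝ φ w 1 : ℂ) - Complex.I * (fderiv ℝ φ w Complex.I : ℂ)

lemma hasDerivAt_g (hsmooth : ContDiff ℝ 2 φ)
    (hharm : ∀ z : ℂ,
      fderiv ℝ (fun w => fderiv ℝ φ w 1) z 1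
        + fderiv ℝ (fun w => fderiv ℝ φ w Complex.I) z Complex.I = 0)
    (z : ℂ) :
    HasDerivAt (g φ)
      ((fderiv ℝ (fun w => fderiv ℝ φ w 1) z 1 : ℂ)
        - Complex.I * (fderiv ℝ (fun w => fderiv ℝ φ w Complex.I) z 1 : ℂ)) z := by
  have hd2 : Differentiable ℝ (fderiv ℝ φ) :=
    (hsmooth.fderiv_right (m := 1) le_rfl).differentiable one_ne_zero
  have hda : ∀ a : ℂ, DifferentiableAt ℝ (fun w => fderiv ℝ φ w a) z := fun a =>
    ((ContinuousLinearMap.apply ℝ ℝ a).differentiableAt).comp z (hd2 z)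
  set D1 := fderiv ℝ (fun w => fderiv ℝ φ w (1:ℂ)) z with hD1
  set DI := fderiv ℝ (fun w => fderiv ℝ φ w Complex.I) z with hDI
  have h1 : HasFDerivAt (fun w => fderiv ℝ φ w (1:ℂ)) D1 z := (hda 1).hasFDerivAt
  have hI : HasFDerivAt (fun w => fderiv ℝ φ w Complex.I) DI z := (hda I).hasFDerivAt
  have hre1 : HasFDerivAt (fun w => ((fderiv ℝ φ w (1:ℂ) : ℝ) : ℂ))
      (Complex.ofRealCLM.comp D1) z := Complex.ofRealCLM.hasFDerivAt.comp z h1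
  have hreI : HasFDerivAt (fun w => ((fderiv ℝ φ w Complex.I : ℝ) : ℂ))
      (Complex.ofRealCLM.comp DI) z := Complex.ofRealCLM.hasFDerivAt.comp z hI
  have hmul : HasFDerivAt (fun w => Complex.I * ((fderiv ℝ φ w Complex.I : ℝ) : ℂ))
      (Complex.I • (Complex.ofRealCLM.comp DI)) z := hreI.const_mul I
  have hsub : HasFDerivAt (g φ)
      (Complex.ofRealCLM.comp D1 - Complex.I • (Complex.ofRealCLM.comp DI)) z :=
    hre1.sub hmul
  set c : ℂ := (D1 1 : ℂ) - Complex.I * (DI 1 : ℂ) with hc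
  have hsymm : DI 1 = D1 Complex.I := symm2 hsmooth z I 1
  have hharm' : D1 1 + DI Complex.I = 0 := hharm z
  have hlin : (ContinuousLinearMap.smulRight (1 : ℂ →L[ℂ] ℂ) c).restrictScalars ℝ
      = Complex.ofRealCLM.comp D1 - Complex.I • (Complex.ofRealCLM.comp DI) := by
    apply clm_ext
    · simp [hc]
    · simp only [ContinuousLinearMap.coe_restrictScalars',
        ContinuousLinearMap.smulRight_apply, ContinuousLinearMap.one_apply,
        ContinuousLinearMap.sub_apply, ContinuousLinearMap.smul_apply,
        ContinuousLinearMap.comp_apply, Complex.ofRealCLM_apply, hc, smul_eq_mul]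
      rw [hsymm]
      have hd : DI Complex.I = -D1 1 := by linarith
      rw [hd]
      apply Complex.ext <;> simp
  have hF : HasFDerivAt (g φ) (ContinuousLinearMap.smulRight (1 : ℂ →L[ℂ] ℂ) c) z :=
    hasFDerivAt_of_restrictScalars ℝ hsub hlin
  have := hF.hasDerivAt
  simpa [hc] using this

lemma differentiable_g (hsmooth : ContDiff ℝ 2 φ)
    (hharm : ∀ z : ℂ,
      fderiv ℝ (fun w => fderiv ℝ φ w 1) z 1
        + fderiv ℝ (fun w => fderiv ℝ φ w Complex.I) z Complex.I = 0) :
    Differentiable ℂ (g φ) :=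
  fun z => (hasDerivAt_g hsmooth hharm z).differentiableAt

/-- The primitive of `g`. -/
def prim (φ : ℂ → ℝ) : ℂ → ℂ :=
  fun z => z * ∫ t in (0:ℝ)..1, g φ ((t:ℂ) * z)

lemma hasDerivAt_prim (hg : Differentiable ℂ (g φ)) (z₀ : ℂ) :
    HasDerivAt (prim φ) (g φ z₀) z₀ := by
  have hgc : Continuous (g φ) := hg.continuous
  have hgd : Continuous (deriv (g φ)) :=
    (hg.contDiff (n := 2)).continuous_deriv one_le_two
  obtain ⟨M, hM⟩ : ∃ M, ∀ w ∈ closedBall (0:ℂ) (‖z₀‖+1), ‖deriv (g φ) w‖ ≤ M :=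
    (isCompact_closedBall _ _).exists_bound_of_continuousOn hgd.continuousOn
  have key : HasDerivAt (fun x : ℂ => ∫ t in (0:ℝ)..1, g φ ((t:ℂ)*x))
      (∫ t in (0:ℝ)..1, deriv (g φ) ((t:ℂ)*z₀) * (t:ℂ)) z₀ := by
    have cont : ∀ x : ℂ, Continuous (fun t : ℝ => g φ ((t:ℂ)*x)) := fun x =>
      hgc.comp (by continuity)
    have cont' : Continuous (fun t : ℝ => deriv (g φ) ((t:ℂ)*z₀) * (t:ℂ)) := by
      apply Continuous.mul (hgd.comp (by continuity)) (by continuity)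
    have := intervalIntegral.hasDerivAt_integral_of_dominated_loc_of_deriv_le
      (μ := MeasureTheory.volume) (a := (0:ℝ)) (b := 1)
      (F := fun x t => g φ ((t:ℂ)*x)) (F' := fun x t => deriv (g φ) ((t:ℂ)*x) * (t:ℂ))
      (x₀ := z₀) (s := ball z₀ 1) (bound := fun _ => M) (ball_mem_nhds z₀ one_pos)
      (Filter.Eventually.of_forall fun x => (cont x).aestronglyMeasurable)
      ((cont z₀).intervalIntegrable 0 1)
      cont'.aestronglyMeasurable
      ?_ intervalIntegrable_const ?_
    · exact this.2
    · apply Filter.Eventually.of_forall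
      intro t ht x hx
      have ht' : t ∈ Set.Ioc (0:ℝ) 1 := by rwa [Set.uIoc_of_le zero_le_one] at ht
      have h1 : ‖(t:ℂ)‖ ≤ 1 := by
        simp only [Complex.norm_real, Real.norm_eq_abs, abs_of_pos ht'.1]
        exact ht'.2
      have h2 : ‖(t:ℂ)*x‖ ≤ ‖z₀‖ + 1 := by
        rw [norm_mul]
        have hx' : ‖x‖ ≤ ‖z₀‖ + 1 := by
          have := mem_ball_iff_norm.mp hx
          calc ‖x‖ ≤ ‖z₀‖ + ‖x - z₀‖ := by
                have := norm_sub_norm_le x z₀; linarith [norm_sub_rev x z₀ ▸ this]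
            _ ≤ ‖z₀‖ + 1 := by linarith
        nlinarith [norm_nonneg ((t:ℂ)*x), norm_nonneg x, norm_nonneg (t:ℂ)]
      have h3 : ‖deriv (g φ) ((t:ℂ)*x)‖ ≤ M := hM _ (mem_closedBall_zero_iff.mpr h2)
      calc ‖deriv (g φ) ((t:ℂ)*x) * (t:ℂ)‖ = ‖deriv (g φ) ((t:ℂ)*x)‖ * ‖(t:ℂ)‖ :=
            norm_mul _ _
        _ ≤ M * 1 := by
            apply mul_le_mul h3 h1 (norm_nonneg _)
            exact le_trans (norm_nonneg _) h3
        _ = M := mul_one M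
    · apply Filter.Eventually.of_forall
      intro t _ x _
      have h1 : HasDerivAt (fun x : ℂ => (t:ℂ)*x) (t:ℂ) x := by
        simpa using (hasDerivAt_id x).const_mul (t:ℂ)
      exact ((hg ((t:ℂ)*x)).hasDerivAt).comp x h1
  have hmul : HasDerivAt (prim φ)
      ((∫ t in (0:ℝ)..1, g φ ((t:ℂ)*z₀))
        + z₀ * ∫ t in (0:ℝ)..1, deriv (g φ) ((t:ℂ)*z₀) * (t:ℂ)) z₀ := by
    have := (hasDerivAt_id z₀).mul key
    simp only [one_mul, id_eq, id] at this
    exact this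
  have int1 : IntervalIntegrable (fun t : ℝ => g φ ((t:ℂ)*z₀)) MeasureTheory.volume 0 1 :=
    (hgc.comp (by continuity)).intervalIntegrable 0 1
  have int2 : IntervalIntegrable (fun t : ℝ => (t:ℂ) * (deriv (g φ) ((t:ℂ)*z₀) * z₀))
      MeasureTheory.volume 0 1 := by
    apply Continuous.intervalIntegrable
    exact (continuous_ofReal).mul ((hgd.comp (by continuity)).mul continuous_const)
  have hftc : (∫ t in (0:ℝ)..1, (g φ ((t:ℂ)*z₀) + (t:ℂ) * (deriv (g φ) ((t:ℂ)*z₀) * z₀)))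
      = g φ z₀ := by
    have hder : ∀ t ∈ Set.uIcc (0:ℝ) 1,
        HasDerivAt (fun t : ℝ => (t:ℂ) * g φ ((t:ℂ)*z₀))
          (g φ ((t:ℂ)*z₀) + (t:ℂ) * (deriv (g φ) ((t:ℂ)*z₀) * z₀)) t := by
      intro t _
      have h1 : HasDerivAt (fun t : ℝ => ((t:ℝ):ℂ)) 1 t := by
        simpa using (hasDerivAt_id t).ofReal_comp
      have h2 : HasDerivAt (fun t : ℝ => (t:ℂ)*z₀) z₀ t := by
        simpa using h1.mul_const z₀
      have h3 : HasDerivAt (fun t : ℝ => g φ ((t:ℂ)*z₀))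
          (deriv (g φ) ((t:ℂ)*z₀) * z₀) t := by
        have h4 := (hg ((t:ℂ)*z₀)).hasDerivAt
        have := h4.scomp t h2
        simpa [smul_eq_mul, mul_comm, Function.comp_def] using this
      have := h1.mul h3
      simp only [one_mul] at this
      exact this
    have := intervalIntegral.integral_eq_sub_of_hasDerivAt hder (int1.add int2)
    simpa using this
  have hsplit : (∫ t in (0:ℝ)..1, (g φ ((t:ℂ)*z₀) + (t:ℂ) * (deriv (g φ) ((t:ℂ)*z₀) * z₀)))
      = (∫ t in (0:ℝ)..1, g φ ((t:ℂ)*z₀))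
        + z₀ * ∫ t in (0:ℝ)..1, deriv (g φ) ((t:ℂ)*z₀) * (t:ℂ) := by
    rw [intervalIntegral.integral_add int1 int2, ← intervalIntegral.integral_const_mul]
    congr 1
    apply intervalIntegral.integral_congr
    intro t _
    ring
  have hfin : (∫ t in (0:ℝ)..1, g φ ((t:ℂ)*z₀))
      + z₀ * ∫ t in (0:ℝ)..1, deriv (g φ) ((t:ℂ)*z₀) * (t:ℂ) = g φ z₀ := by
    rw [← hsplit, hftc]
  rw [← hfin]
  exact hmul

lemma re_prim (hsmooth : ContDiff ℝ 2 φ) (hg : Differentiable ℂ (g φ)) (h0 : φ 0 = 0)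
    (z : ℂ) : (prim φ z).re = φ z := by
  have hψ : ∀ w : ℂ, HasFDerivAt (fun z => (prim φ z).re) (fderiv ℝ φ w) w := by
    intro w
    have h1 : HasFDerivAt (prim φ)
        (ContinuousLinearMap.smulRight (1 : ℂ →L[ℂ] ℂ) (g φ w)) w :=
      (hasDerivAt_prim hg w).hasFDerivAt
    have h2 := h1.restrictScalars ℝ
    have h3 := Complex.reCLM.hasFDerivAt.comp w h2
    have heq : Complex.reCLM.comp
        ((ContinuousLinearMap.smulRight (1 : ℂ →L[ℂ] ℂ) (g φ w)).restrictScalars ℝ)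
        = fderiv ℝ φ w := by
      apply clm_ext
      · simp [g]
      · simp [g]
    rw [heq] at h3
    exact h3
  have hφd : Differentiable ℝ φ := hsmooth.differentiable two_ne_zero
  have hdiff : ∀ x y : ℂ, φ x - (prim φ x).re = φ y - (prim φ y).re := by
    apply is_const_of_fderiv_eq_zero (𝕜 := ℝ)
    · intro x
      exact ((hφd x).sub (hψ x).differentiableAt)
    · intro x
      have := ((hφd x).hasFDerivAt.sub (hψ x)).fderiv
      rw [show (fun x => φ x - (prim φ x).re) = (φ - fun z => (prim φ z).re) from rfl, this]
      simp
  have h := hdiff z 0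
  have hz0 : (prim φ 0).re = 0 := by simp [prim]
  rw [h0, hz0] at h
  linarith

end HarmonicAux

end HarmonicAux

open HarmonicAux

/-- Let `φ : ℂ → ℝ` be harmonic with `φ(0) = 0` and `φ(z) ≥ -C|z|` for all
`z ∈ ℂ`, for some `C > 0`. Then `|φ(z)| ≤ 6C|z|` for all `z`. -/
theorem harmonic_sublinear_growth (φ : ℂ → ℝ)
    (hsmooth : ContDiff ℝ 2 φ)
    (hharm : ∀ z : ℂ,
      fderiv ℝ (fun w => fderiv ℝ φ w 1) z 1
        + fderiv ℝ (fun w => fderiv ℝ φ w Complex.I) z Complex.I = 0)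
    (h0 : φ 0 = 0)
    (C : ℝ) (hC : 0 < C)
    (hbound : ∀ z : ℂ, φ z ≥ -C * ‖z‖) :
    ∀ z : ℂ, |φ z| ≤ 6 * C * ‖z‖ := by
  intro z
  rcases eq_or_ne z 0 with rfl | hz
  · simp [h0]
  have hg : Differentiable ℂ (g φ) := differentiable_g hsmooth hharm
  have hf : ∀ w, HasDerivAt (prim φ) (g φ w) w := hasDerivAt_prim hg
  have hre : ∀ w, (prim φ w).re = φ w := re_prim hsmooth hg h0
  -- Borel–Carathéodory via the Schwarz lemma
  set R : ℝ := 3 * ‖z‖ with hR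
  have hzpos : 0 < ‖z‖ := norm_pos_iff.2 hz
  have hRpos : 0 < R := by positivity
  set A : ℝ := C * R with hA
  have hApos : 0 < A := by positivity
  set F : ℂ → ℂ := fun w => -(prim φ w) with hF
  have hFdiff : Differentiable ℂ F := fun w => ((hf w).differentiableAt).neg
  have hFre : ∀ w ∈ ball (0:ℂ) R, (F w).re < A := by
    intro w hw
    have h1 : φ w ≥ -C * ‖w‖ := hbound w
    have h2 : ‖w‖ < R := by simpa [dist_eq_norm] using hw
    have : (F w).re = -φ w := by simp [hF, hre w]
    nlinarith [hC.le]
  have hden : ∀ w ∈ ball (0:ℂ) R, ((2*A : ℝ) : ℂ) - F w ≠ 0 := by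
    intro w hw h
    have := hFre w hw
    have h2 : ((2*A : ℝ) : ℂ).re - (F w).re = 0 := by
      rw [← Complex.sub_re, h]; simp
    simp only [Complex.ofReal_re] at h2
    linarith
  set ω : ℂ → ℂ := fun w => F w / (((2*A : ℝ) : ℂ) - F w) with hω
  have hωdiff : DifferentiableOn ℂ ω (ball (0:ℂ) R) := by
    apply DifferentiableOn.div
    · exact hFdiff.differentiableOn
    · exact (differentiable_const _).sub hFdiff |>.differentiableOn
    · exact hden
  have hω0 : ω 0 = 0 := by
    have : F 0 = 0 := by simp [hF, prim]
    simp [hω, this]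
  have hmaps : Set.MapsTo ω (ball (0:ℂ) R) (ball (ω 0) 1) := by
    intro w hw
    rw [hω0, mem_ball, dist_zero_right]
    have hd := hden w hw
    rw [hω]
    simp only
    rw [norm_div, div_lt_one (norm_pos_iff.mpr hd)]
    have hre' := hFre w hw
    have key : Complex.normSq (F w) < Complex.normSq (((2*A:ℝ):ℂ) - F w) := by
      simp only [Complex.normSq_apply, Complex.sub_re, Complex.sub_im,
        Complex.ofReal_re, Complex.ofReal_im]
      nlinarith
    have e1 : ‖F w‖ = Real.sqrt (Complex.normSq (F w)) := by
      rw [Complex.norm_def]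
    have e2 : ‖((2*A:ℝ):ℂ) - F w‖ = Real.sqrt (Complex.normSq (((2*A:ℝ):ℂ) - F w)) := by
      rw [Complex.norm_def]
    rw [e1, e2]
    exact Real.sqrt_lt_sqrt (Complex.normSq_nonneg _) key
  have hzball : z ∈ ball (0:ℂ) R := by
    rw [mem_ball, dist_zero_right]
    nlinarith
  have hSchwarz := Complex.dist_le_div_mul_dist_of_mapsTo_ball hωdiff (hmaps.mono_right ball_subset_closedBall) hzball
  rw [hω0, dist_zero_right, dist_zero_right] at hSchwarz
  have hω3 : ‖ω z‖ ≤ 1/3 := by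
    have h13 : 1 / R * ‖z‖ = 1/3 := by
      rw [hR]
      field_simp
    rw [h13] at hSchwarz
    exact hSchwarz
  -- recover bound on F z
  have hFz : F z = ω z * (((2*A:ℝ):ℂ) - F z) := (div_mul_cancel₀ _ (hden z hzball)).symm
  have hFbound : ‖F z‖ ≤ A := by
    have hn1 : ‖F z‖ = ‖ω z‖ * ‖((2*A:ℝ):ℂ) - F z‖ := by
      conv_lhs => rw [hFz]
      exact norm_mul _ _
    have h2 : ‖((2*A:ℝ):ℂ)‖ = 2*A := by
      rw [Complex.norm_real, Real.norm_of_nonneg (by positivity)]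
    have h3 : ‖((2*A:ℝ):ℂ) - F z‖ ≤ 2*A + ‖F z‖ := by
      have := norm_sub_le ((2*A:ℝ):ℂ) (F z)
      linarith [h2 ▸ this]
    have h1 : ‖F z‖ ≤ (1/3) * (2*A + ‖F z‖) := by
      calc ‖F z‖ = ‖ω z‖ * ‖((2*A:ℝ):ℂ) - F z‖ := hn1
        _ ≤ (1/3) * ‖((2*A:ℝ):ℂ) - F z‖ :=
            mul_le_mul_of_nonneg_right hω3 (norm_nonneg _)
        _ ≤ (1/3) * (2*A + ‖F z‖) := by linarith [norm_nonneg (F z)]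
    linarith
  have hφz : |φ z| ≤ ‖F z‖ := by
    have hh : φ z = -(F z).re := by simp [hF, hre z]
    rw [hh, abs_neg]
    exact Complex.abs_re_le_norm (F z)
  calc |φ z| ≤ A := le_trans hφz hFbound
    _ = 3 * C * ‖z‖ := by rw [hA, hR]; ring
    _ ≤ 6 * C * ‖z‖ := by nlinarith
end

section
/- Let α_1,…,α_n be positive reals with ∑ α_j = 1. Let f : ℍⁿ → ℍ be holomorphic with (A) f(λ,…,λ) = λ for all λ ∈ ℍ, (B) ∂f/∂z_j(λ,…,λ) = α_j for all λ ∈ ℍ and all j, and (C) f(z_1+t,…,z_n+t) = f(z_1,…,z_n) + t for all z ∈ ℍⁿ and all real t. Then f(z_1,…,z_n) = ∑_{j=1}^n α_j z_j. -/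
open Complex Set Metric Filter Bornology Topology

/-- Schwarz-type derivative bound for maps of a disk into the upper half plane. -/
lemma aux_schwarz_half {h : ℂ → ℂ} {z₀ : ℂ} {R : ℝ} (hR : 0 < R)
    (hd : DifferentiableOn ℂ h (ball z₀ R))
    (him : ∀ w ∈ ball z₀ R, 0 < (h w).im) :
    ‖deriv h z₀‖ ≤ 8 * (h z₀).im / R := by
  set m : ℝ := (h z₀).im with hm
  have hm0 : 0 < m := him z₀ (mem_ball_self hR)
  set c : ℂ := ((h z₀).re : ℂ) - (m : ℂ) * I with hc
  have hden : ∀ w ∈ ball z₀ R, m ≤ (h w - c).im := by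
    intro w hw
    have := him w hw
    simp only [hc, sub_im, Complex.sub_im, Complex.ofReal_im, Complex.mul_im,
      Complex.ofReal_re, Complex.I_im, Complex.I_re, mul_one, mul_zero]
    nlinarith [him w hw]
  have hne : ∀ w ∈ ball z₀ R, h w - c ≠ 0 := by
    intro w hw h0
    have := hden w hw
    rw [h0] at this
    simp at this; linarith
  set ψ : ℂ → ℂ := fun w => (h w - c)⁻¹ with hψ
  have habs : ∀ w ∈ ball z₀ R, ‖ψ w‖ ≤ m⁻¹ := by
    intro w hw
    have h1 : m ≤ ‖h w - c‖ := le_trans (hden w hw) (Complex.im_le_norm _)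
    simp only [hψ, norm_inv]
    exact inv_anti₀ hm0 h1
  have hz₀c : h z₀ - c = 2 * m * I := by
    rw [hc]
    have := Complex.re_add_im (h z₀)
    rw [hm]
    push_cast
    linear_combination -this
  have hψz₀ : ψ z₀ = (2 * (m:ℂ) * I)⁻¹ := by rw [hψ]; simp [hz₀c]
  have hψz₀n : ‖ψ z₀‖ = (2*m)⁻¹ := by
    rw [hψz₀]
    simp [norm_inv, norm_mul, Complex.norm_real, abs_of_pos hm0]
  have hmaps : MapsTo ψ (ball z₀ R) (ball (ψ z₀) (2/m)) := by
    intro w hw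
    rw [mem_ball, dist_eq_norm]
    calc ‖ψ w - ψ z₀‖ ≤ ‖ψ w‖ + ‖ψ z₀‖ := norm_sub_le _ _
    _ ≤ m⁻¹ + (2*m)⁻¹ := by rw [hψz₀n]; exact add_le_add_left (habs w hw) _
    _ < 2/m := by rw [div_eq_mul_inv]; rw [mul_inv]; nlinarith [inv_pos.2 hm0]
  have hψd : DifferentiableOn ℂ ψ (ball z₀ R) :=
    DifferentiableOn.inv (hd.sub (differentiableOn_const c)) hne
  have hs := Complex.norm_deriv_le_div_of_mapsTo_ball hψd (hmaps.mono_right ball_subset_closedBall) hR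
  have hhd : DifferentiableAt ℂ h z₀ :=
    hd.differentiableAt (isOpen_ball.mem_nhds (mem_ball_self hR))
  have hder : HasDerivAt ψ (-(deriv h z₀) / (h z₀ - c)^2) z₀ :=
    ((hhd.hasDerivAt.sub_const c).inv (hne z₀ (mem_ball_self hR)))
  have hderiv : deriv ψ z₀ = -(deriv h z₀) / (h z₀ - c)^2 := hder.deriv
  rw [hderiv] at hs
  rw [hz₀c] at hs
  have habs2 : ‖-(deriv h z₀) / (2 * (m:ℂ) * I)^2‖ = ‖deriv h z₀‖ / (4*m^2) := by
    rw [norm_div, norm_neg, norm_pow]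
    congr 1
    simp [norm_mul, Complex.norm_real, abs_of_pos hm0]
    ring
  rw [habs2] at hs
  rw [div_le_div_iff₀ (by positivity) hR] at hs
  rw [le_div_iff₀ hR]
  calc ‖deriv h z₀‖ * R ≤ 2 / m * (4 * m^2) := hs
  _ = 8 * m := by field_simp; ring

/-- An entire function whose imaginary part is bounded below by a linear function of `‖w‖`
is affine. -/
lemma aux_entire_affine {φ : ℂ → ℂ} (hφ : Differentiable ℂ φ) {B : ℝ} (hB : 0 ≤ B)
    (hlow : ∀ w : ℂ, -(B * (1 + ‖w‖)) ≤ (φ w).im) (lam : ℂ) :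
    φ lam = φ 0 + deriv φ 0 * lam := by
  have key : ∀ z₀ : ℂ, ‖deriv φ z₀‖ ≤ 8 * B := by
    intro z₀
    set K : ℝ := (φ z₀).im + (B * (1 + ‖z₀‖) + 1) with hK
    have hev : ∀ᶠ R : ℝ in atTop, ‖deriv φ z₀‖ ≤ 8 * K / R + 8 * B := by
      filter_upwards [eventually_gt_atTop 0] with R hR
      set C : ℝ := B * (1 + ‖z₀‖ + R) + 1 with hC
      set h : ℂ → ℂ := fun w => φ w + I * C with hh
      have him : ∀ w ∈ ball z₀ R, 0 < (h w).im := by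
        intro w hw
        have h1 : ‖w‖ ≤ ‖z₀‖ + R := by
          have := mem_ball_iff_norm.1 hw
          calc ‖w‖ = ‖z₀ + (w - z₀)‖ := by ring_nf
          _ ≤ ‖z₀‖ + ‖w - z₀‖ := norm_add_le _ _
          _ ≤ ‖z₀‖ + R := by linarith
        have h2 := hlow w
        simp only [hh, add_im, mul_im, I_re, I_im, ofReal_re, ofReal_im, one_mul, zero_mul,
          add_zero, mul_zero, zero_add]
        have : B * (1 + ‖w‖) ≤ B * (1 + ‖z₀‖ + R) := by nlinarith
        simp only [hC]
        nlinarith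
      have hd : DifferentiableOn ℂ h (ball z₀ R) :=
        ((hφ.add_const (I * C)).differentiableOn)
      have := aux_schwarz_half hR hd him
      have hder : deriv h z₀ = deriv φ z₀ := by
        simp only [hh]
        exact deriv_add_const _
      have him0 : (h z₀).im = (φ z₀).im + C := by
        simp [hh]
      rw [hder, him0] at this
      calc ‖deriv φ z₀‖ ≤ 8 * ((φ z₀).im + C) / R := this
      _ = 8 * (K + B * R) / R := by rw [hC, hK]; ring_nf
      _ = 8 * K / R + 8 * B := by field_simp
    have hten : Tendsto (fun R : ℝ => 8 * K / R + 8 * B) atTop (𝓝 (8 * B)) := by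
      have h1 : Tendsto (fun R : ℝ => 8 * K / R) atTop (𝓝 0) :=
        Tendsto.div_atTop tendsto_const_nhds tendsto_id
      simpa using h1.add tendsto_const_nhds
    exact ge_of_tendsto hten hev
  have hdd : Differentiable ℂ (deriv φ) := by
    have ha : AnalyticOnNhd ℂ φ univ := fun w _ => hφ.analyticAt w
    intro w
    exact (ha.deriv w (mem_univ w)).differentiableAt
  have hconst : ∀ w : ℂ, deriv φ w = deriv φ 0 := by
    intro w
    apply hdd.apply_eq_apply_of_bounded
    apply (isBounded_iff_forall_norm_le).2 ⟨8 * B, ?_⟩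
    rintro x ⟨w', rfl⟩
    exact key w'
  have h2 : ∀ x y : ℂ, (fun w => φ w - deriv φ 0 * w) x = (fun w => φ w - deriv φ 0 * w) y := by
    apply is_const_of_deriv_eq_zero
    · exact hφ.sub (differentiable_id.const_mul _)
    · intro x
      have hx : HasDerivAt (fun w : ℂ => φ w - deriv φ 0 * w) (deriv φ x - deriv φ 0) x :=
        ((hφ x).hasDerivAt).sub (by simpa using (hasDerivAt_id x).const_mul (deriv φ 0))
      rw [hx.deriv, hconst x, sub_self]
  have := h2 lam 0
  simp only [mul_zero, sub_zero, mul_comm] at this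
  linear_combination this

/-- Let `α_1,…,α_n` be positive reals summing to 1, and `f : ℍⁿ → ℍ`
holomorphic with (A) `f(λ,…,λ) = λ`, (B) `∂f/∂z_j(λ,…,λ) = α_j`, and
(C) `f(z + t𝟏) = f(z) + t` for all real `t`. Then `f(z) = ∑ j, α_j z_j`. -/
theorem translation_invariant_rigidity {n : ℕ} (α : Fin n → ℝ)
    (hα : ∀ j, 0 < α j) (hsum : ∑ j, α j = 1)
    (f : (Fin n → ℂ) → ℂ)
    (hf : DifferentiableOn ℂ f {z : Fin n → ℂ | ∀ j, 0 < (z j).im})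
    (hmaps : ∀ z : Fin n → ℂ, (∀ j, 0 < (z j).im) → 0 < (f z).im)
    (hA : ∀ l : ℂ, 0 < l.im → f (fun _ => l) = l)
    (hB : ∀ l : ℂ, 0 < l.im → ∀ j, fderiv ℂ f (fun _ => l) (Pi.single j 1) = (α j : ℂ))
    (hC : ∀ z : Fin n → ℂ, (∀ j, 0 < (z j).im) → ∀ t : ℝ,
      f (fun j => z j + (t : ℂ)) = f z + t) :
    ∀ z : Fin n → ℂ, (∀ j, 0 < (z j).im) → f z = ∑ j, (α j : ℂ) * z j := by
  have hD : IsOpen {z : Fin n → ℂ | ∀ j, 0 < (z j).im} := by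
    rw [Set.setOf_forall]
    exact isOpen_iInter_of_finite fun j =>
      isOpen_lt continuous_const (Complex.continuous_im.comp (continuous_apply j))
  have hsumC : ∑ j, ((α j : ℝ) : ℂ) = 1 := by
    rw [← Complex.ofReal_sum, hsum, Complex.ofReal_one]
  -- Step 1: complex translation invariance
  have hinv : ∀ w : Fin n → ℂ, (∀ j, 0 < (w j).im) → ∀ μ : ℂ,
      (∀ j, 0 < (w j).im + μ.im) → f (fun j => w j + μ) = f w + μ := by
    intro w hw μ hμ
    set U : Set ℂ := ⋂ j, {ν : ℂ | 0 < (w j).im + ν.im} with hU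
    have hUopen : IsOpen U := isOpen_iInter_of_finite fun j =>
      isOpen_lt continuous_const (continuous_const.add Complex.continuous_im)
    have hUconv : Convex ℝ U := convex_iInter fun j => by
      have he : {ν : ℂ | 0 < (w j).im + ν.im} = {ν : ℂ | -(w j).im < ν.im} := by
        ext ν
        constructor <;> intro h <;> simp only [Set.mem_setOf_eq] at h ⊢ <;> linarith
      rw [he]; exact convex_halfSpace_im_gt _
    set F : ℂ → ℂ := fun ν => f (fun j => w j + ν) - f w - ν with hF
    have hFdiff : DifferentiableOn ℂ F U := by
      intro ν hν
      apply DifferentiableAt.differentiableWithinAt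
      have hmem : (fun j => w j + ν) ∈ {z : Fin n → ℂ | ∀ j, 0 < (z j).im} := by
        intro j
        have := (Set.mem_iInter.1 hν) j
        simpa [Complex.add_im] using this
      have h1 : DifferentiableAt ℂ (fun ν : ℂ => (fun j => w j + ν : Fin n → ℂ)) ν :=
        differentiableAt_pi.2 fun j => (differentiableAt_const _).add differentiableAt_id
      have h2 : DifferentiableAt ℂ f (fun j => w j + ν) :=
        hf.differentiableAt (hD.mem_nhds hmem)
      exact ((h2.comp ν h1).sub (differentiableAt_const _)).sub differentiableAt_id
    have h0U : (0 : ℂ) ∈ U := Set.mem_iInter.2 fun j => by simpa using hw j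
    have hμU : μ ∈ U := Set.mem_iInter.2 fun j => hμ j
    have hfreq : ∃ᶠ ν in 𝓝[≠] (0:ℂ), F ν = 0 := by
      have h1 : Tendsto (fun k : ℕ => ((1 / ((k:ℝ)+1) : ℝ) : ℂ)) atTop (𝓝[≠] (0:ℂ)) := by
        apply tendsto_nhdsWithin_of_tendsto_nhds_of_eventually_within
        · have h2 : Tendsto (fun k : ℕ => (1 / ((k:ℝ)+1) : ℝ)) atTop (𝓝 0) :=
            tendsto_one_div_add_atTop_nhds_zero_nat
          have h3 := (Complex.continuous_ofReal.tendsto 0).comp h2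
          simp only [Complex.ofReal_zero] at h3
          exact h3
        · filter_upwards with k
          simp only [Set.mem_compl_iff, Set.mem_singleton_iff]
          exact Complex.ofReal_ne_zero.2 (by positivity)
      refine h1.frequently (Frequently.of_forall fun k => ?_)
      have := hC w hw (1 / ((k:ℝ)+1))
      simp only [hF]
      rw [this]; ring
    have hzero := ((hFdiff.analyticOnNhd hUopen).eqOn_zero_of_preconnected_of_frequently_eq_zero
      hUconv.isPreconnected h0U hfreq) hμU
    have hz0 : F μ = 0 := hzero
    simp only [hF] at hz0
    linear_combination hz0
  -- Step 2: lower bound for the imaginary part of f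
  have hlowf : ∀ w : Fin n → ℂ, (∀ j, 0 < (w j).im) → ∀ c : ℝ,
      (∀ j, c ≤ (w j).im) → c ≤ (f w).im := by
    intro w hw c hc
    refine le_of_forall_lt fun s hs => ?_
    have him : (((-s : ℝ) : ℂ) * I).im = -s := by simp [Complex.mul_im]
    have hμ : ∀ j, 0 < (w j).im + (((-s : ℝ) : ℂ) * I).im := by
      intro j; rw [him]; linarith [hc j]
    have h1 := hinv w hw (((-s : ℝ) : ℂ) * I) hμ
    have h2 := hmaps (fun j => w j + ((-s : ℝ) : ℂ) * I) (fun j => by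
      have := hμ j; simpa [Complex.add_im] using this)
    rw [h1] at h2
    simp only [Complex.add_im, him] at h2
    linarith
  -- g-invariance
  have hginv : ∀ w : Fin n → ℂ, (∀ j, 0 < (w j).im) → ∀ μ : ℂ, (∀ j, 0 < (w j).im + μ.im) →
      f (fun j => w j + μ) - ∑ j, (α j : ℂ) * (w j + μ) = f w - ∑ j, (α j : ℂ) * w j := by
    intro w hw μ hμ
    rw [hinv w hw μ hμ]
    have hsp : ∑ j, (α j : ℂ) * (w j + μ) = (∑ j, (α j : ℂ) * w j) + μ := by
      simp only [mul_add, Finset.sum_add_distrib, ← Finset.sum_mul, hsumC, one_mul]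
    rw [hsp]; ring
  -- main argument
  intro z hz
  set M : ℝ := ∑ j, ‖z j‖ with hM
  have hM0 : 0 ≤ M := Finset.sum_nonneg fun j _ => norm_nonneg _
  have hMj : ∀ j, ‖z j‖ ≤ M :=
    fun j => Finset.single_le_sum (fun i _ => norm_nonneg _) (Finset.mem_univ j)
  set ψ : ℝ → ℂ → ℂ := fun T lam =>
    f (fun j => lam * z j + I * (T : ℂ)) - ∑ j, (α j : ℂ) * (lam * z j + I * (T : ℂ)) with hψ
  have hdom : ∀ (T : ℝ) (lam : ℂ), M * ‖lam‖ + 1 ≤ T →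
      ∀ j, 0 < (lam * z j + I * (T : ℂ)).im := by
    intro T lam hT j
    have h1 : |(lam * z j).im| ≤ M * ‖lam‖ := by
      calc |(lam * z j).im| ≤ ‖lam * z j‖ := Complex.abs_im_le_norm _
      _ = ‖lam‖ * ‖z j‖ := norm_mul _ _
      _ ≤ ‖lam‖ * M := mul_le_mul_of_nonneg_left (hMj j) (norm_nonneg _)
      _ = M * ‖lam‖ := mul_comm _ _
    have h2 : (lam * z j + I * (T : ℂ)).im = (lam * z j).im + T := by
      simp [Complex.add_im, Complex.mul_im]
    rw [h2]
    have := abs_le.1 h1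
    linarith [this.1]
  have hTeq : ∀ (lam : ℂ) (T T' : ℝ), M * ‖lam‖ + 1 ≤ T →
      M * ‖lam‖ + 1 ≤ T' → ψ T lam = ψ T' lam := by
    intro lam T T' h1 h2
    have hw := hdom T lam h1
    have hμ : ∀ j, 0 < (lam * z j + I * (T : ℂ)).im + (I * ((T' : ℂ) - (T : ℂ))).im := by
      intro j
      have hti : (I * ((T' : ℂ) - (T : ℂ))).im = T' - T := by simp [Complex.mul_im]
      rw [hti]
      have h3 := hdom T' lam h2 j
      have h4 : (lam * z j + I * (T : ℂ)).im = (lam * z j).im + T := by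
        simp [Complex.add_im, Complex.mul_im]
      have h5 : (lam * z j + I * (T' : ℂ)).im = (lam * z j).im + T' := by
        simp [Complex.add_im, Complex.mul_im]
      rw [h4]; rw [h5] at h3; linarith
    have := hginv _ hw (I * ((T' : ℂ) - (T : ℂ))) hμ
    have hfn : (fun j => (lam * z j + I * (T : ℂ)) + I * ((T' : ℂ) - (T : ℂ)))
        = fun j => lam * z j + I * (T' : ℂ) := by
      funext j; ring
    rw [hfn] at this
    simp only [hψ]
    calc f (fun j => lam * z j + I * (T : ℂ)) - ∑ j, (α j : ℂ) * (lam * z j + I * (T : ℂ))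
        = f (fun j => lam * z j + I * (T' : ℂ))
          - ∑ j, (α j : ℂ) * ((lam * z j + I * (T : ℂ)) + I * ((T' : ℂ) - (T : ℂ))) := this.symm
    _ = f (fun j => lam * z j + I * (T' : ℂ)) - ∑ j, (α j : ℂ) * (lam * z j + I * (T' : ℂ)) := by
        congr 1
        apply Finset.sum_congr rfl
        intro j _
        ring
  set Φ : ℂ → ℂ := fun lam => ψ (M * ‖lam‖ + 1) lam with hΦ
  have hΦψ : ∀ (R : ℝ) (lam : ℂ), ‖lam‖ ≤ R → Φ lam = ψ (M * R + 1) lam := by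
    intro R lam h
    exact hTeq lam _ _ le_rfl (by nlinarith)
  have hψdiff : ∀ (T : ℝ) (lam : ℂ), (∀ j, 0 < (lam * z j + I * (T : ℂ)).im) →
      DifferentiableAt ℂ (ψ T) lam := by
    intro T lam hmem
    have h1 : DifferentiableAt ℂ (fun lam : ℂ => (fun j => lam * z j + I * (T : ℂ) : Fin n → ℂ)) lam :=
      differentiableAt_pi.2 fun j => (differentiableAt_id.mul_const _).add (differentiableAt_const _)
    have h2 : DifferentiableAt ℂ f (fun j => lam * z j + I * (T : ℂ)) :=
      hf.differentiableAt (hD.mem_nhds hmem)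
    exact (h2.comp lam h1).sub (DifferentiableAt.fun_sum fun j _ =>
      ((differentiableAt_id.mul_const _).add (differentiableAt_const _)).const_mul _)
  have hΦdiff : Differentiable ℂ Φ := by
    intro lam₀
    set R : ℝ := ‖lam₀‖ + 1 with hR
    have heq : Set.EqOn Φ (ψ (M * R + 1)) (ball lam₀ 1) := by
      intro lam hlam
      apply hΦψ
      have := mem_ball_iff_norm.1 hlam
      calc ‖lam‖ = ‖lam‖ := rfl
      _ = ‖lam₀ + (lam - lam₀)‖ := by ring_nf
      _ ≤ ‖lam₀‖ + ‖lam - lam₀‖ := norm_add_le _ _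
      _ ≤ R := by rw [hR]; linarith
    have hdiff : DifferentiableAt ℂ (ψ (M * R + 1)) lam₀ := by
      apply hψdiff
      apply hdom
      have : ‖lam₀‖ ≤ R := by rw [hR]; linarith
      nlinarith
    exact hdiff.congr_of_eventuallyEq
      (Filter.eventuallyEq_of_mem (isOpen_ball.mem_nhds (mem_ball_self one_pos)) heq)
  have hΦ0 : Φ 0 = 0 := by
    have h0 : Φ 0 = ψ 1 0 := by
      simp only [hΦ]
      norm_num
    rw [h0]
    simp only [hψ]
    have hfn : (fun j => (0:ℂ) * z j + I * ((1:ℝ):ℂ)) = fun _ : Fin n => I := by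
      funext j; simp
    rw [hfn, hA I (by simp)]
    simp [← Finset.sum_mul, hsumC]
  have hΦd0 : deriv Φ 0 = 0 := by
    have hev : Φ =ᶠ[𝓝 (0:ℂ)] ψ (M + 1) := by
      apply Filter.eventuallyEq_of_mem (isOpen_ball.mem_nhds (mem_ball_self one_pos))
      intro lam hlam
      have h1 : ‖lam‖ ≤ 1 := by
        have := mem_ball_iff_norm.1 hlam
        simpa using this.le
      have := hΦψ 1 lam h1
      simpa using this
    rw [hev.deriv_eq]
    -- compute deriv (ψ (M+1)) 0
    set T : ℝ := M + 1 with hT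
    have hTpos : 0 < T := by rw [hT]; linarith
    set l : ℂ := I * (T : ℂ) with hl
    have hlim : 0 < l.im := by simp [hl, Complex.mul_im]; exact hTpos
    have hp : (fun j : Fin n => (0:ℂ) * z j + I * (T : ℂ)) = (fun _ : Fin n => l) := by
      funext j; simp [hl]
    have hAd : HasDerivAt (fun lam : ℂ => (fun j => lam * z j + I * (T : ℂ) : Fin n → ℂ)) z 0 :=
      hasDerivAt_pi.2 fun j => (hasDerivAt_mul_const (z j)).add_const _
    have hfd : HasFDerivAt f (fderiv ℂ f (fun _ : Fin n => l)) (fun _ : Fin n => l) :=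
      (hf.differentiableAt (hD.mem_nhds (fun j => hlim))).hasFDerivAt
    have hfd2 : HasFDerivAt f (fderiv ℂ f (fun _ : Fin n => l))
        (fun j : Fin n => (0:ℂ) * z j + I * (T : ℂ)) := by
      rw [show (fun j : Fin n => (0:ℂ) * z j + I * (T : ℂ)) = (fun _ : Fin n => l) from hp]
      exact hfd
    have hcomp : HasDerivAt (fun lam : ℂ => f (fun j => lam * z j + I * (T : ℂ)))
        (fderiv ℂ f (fun _ : Fin n => l) z) 0 := hfd2.comp_hasDerivAt 0 hAd
    have hlin : fderiv ℂ f (fun _ : Fin n => l) z = ∑ j, z j * (α j : ℂ) := by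
      have hzd : z = ∑ j, z j • (Pi.single j 1 : Fin n → ℂ) := by
        funext k
        simp [Finset.sum_apply, Pi.single_apply, smul_eq_mul]
      conv_lhs => rw [hzd]
      rw [map_sum]
      apply Finset.sum_congr rfl
      intro j _
      rw [map_smul, hB l hlim j]
      simp [smul_eq_mul]
    have hsumd : HasDerivAt (fun lam : ℂ => ∑ j, (α j : ℂ) * (lam * z j + I * (T : ℂ)))
        (∑ j, (α j : ℂ) * z j) 0 :=
      HasDerivAt.fun_sum fun j _ => ((hasDerivAt_mul_const (z j)).add_const _).const_mul _
    have hψT : HasDerivAt (ψ T)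
        (fderiv ℂ f (fun _ : Fin n => l) z - ∑ j, (α j : ℂ) * z j) 0 := hcomp.sub hsumd
    rw [hψT.deriv, hlin]
    rw [sub_eq_zero]
    exact Finset.sum_congr rfl fun j _ => mul_comm _ _
  have hΦim : ∀ lam : ℂ, -(2 * M * (1 + ‖lam‖)) ≤ (Φ lam).im := by
    intro lam
    set T : ℝ := M * ‖lam‖ + 1 with hT
    have hw := hdom T lam le_rfl
    have himb : ∀ j, |(lam * z j).im| ≤ M * ‖lam‖ := by
      intro j
      calc |(lam * z j).im| ≤ ‖lam * z j‖ := Complex.abs_im_le_norm _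
      _ = ‖lam‖ * ‖z j‖ := norm_mul _ _
      _ ≤ ‖lam‖ * M := mul_le_mul_of_nonneg_left (hMj j) (norm_nonneg _)
      _ = M * ‖lam‖ := mul_comm _ _
    have h1 : T - M * ‖lam‖ ≤ (f (fun j => lam * z j + I * (T : ℂ))).im := by
      apply hlowf _ hw
      intro j
      have h4 : (lam * z j + I * (T : ℂ)).im = (lam * z j).im + T := by
        simp [Complex.add_im, Complex.mul_im]
      rw [h4]
      have := abs_le.1 (himb j)
      linarith [this.1]
    have h2 : (∑ j, (α j : ℂ) * (lam * z j + I * (T : ℂ))).im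
        = ∑ j, α j * ((lam * z j).im + T) := by
      rw [Complex.im_sum]
      apply Finset.sum_congr rfl
      intro j _
      simp [Complex.mul_im, Complex.add_im]
      try ring
    have h3 : ∑ j, α j * ((lam * z j).im + T) ≤ M * ‖lam‖ + T := by
      calc ∑ j, α j * ((lam * z j).im + T) ≤ ∑ j, α j * (M * ‖lam‖ + T) := by
            apply Finset.sum_le_sum
            intro j _
            apply mul_le_mul_of_nonneg_left _ (hα j).le
            have := abs_le.1 (himb j)
            linarith [this.2]
      _ = (∑ j, α j) * (M * ‖lam‖ + T) := by rw [← Finset.sum_mul]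
      _ = M * ‖lam‖ + T := by rw [hsum, one_mul]
    have h5 : (Φ lam).im = (f (fun j => lam * z j + I * (T : ℂ))).im
        - (∑ j, (α j : ℂ) * (lam * z j + I * (T : ℂ))).im := by
      simp only [hΦ, hψ, Complex.sub_im]; rfl
    rw [h5, h2]
    have habs : 0 ≤ ‖lam‖ := norm_nonneg _
    simp only [hT] at h1 h3 ⊢
    nlinarith
  have haff := aux_entire_affine hΦdiff (by positivity : (0:ℝ) ≤ 2 * M) hΦim 1
  rw [hΦ0, hΦd0] at haff
  simp only [zero_add, zero_mul, mul_one] at haff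
  -- haff : Φ 1 = 0
  have hψ1 : ψ (M + 1) 1 = 0 := by
    have h1 : ‖(1:ℂ)‖ ≤ 1 := by simp
    have h2 := hΦψ 1 1 h1
    rw [mul_one] at h2
    rw [← h2]
    exact haff
  have hψ1' : f (fun j => (1:ℂ) * z j + I * ((M + 1 : ℝ) : ℂ))
      - ∑ j, (α j : ℂ) * ((1:ℂ) * z j + I * ((M + 1 : ℝ) : ℂ)) = 0 := by
    simp only [hψ] at hψ1
    exact hψ1
  have hzinv := hginv z hz (I * ((M + 1 : ℝ) : ℂ)) (fun j => by
    have h6 : (I * ((M + 1 : ℝ) : ℂ)).im = M + 1 := by simp [Complex.mul_im]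
    rw [h6]; linarith [hz j])
  simp only [one_mul] at hψ1' hzinv
  have hfinal : f z - ∑ j, (α j : ℂ) * z j = 0 := by
    rw [← hzinv]
    exact hψ1'
  linear_combination hfinal
end

section
/- Let g : ℍⁿ → ℍ be holomorphic with f(λ,…,λ)=λ, ∂g/∂z_j(λ,…,λ) = 1/n for all λ and j, and suppose g is everywhere extremal, i.e. ∑_j Im(z_j)|∂g/∂z_j(z)| = Im g(z) for all z ∈ ℍⁿ. If g = t·f₁ + (1−t)·f₂ with t ∈ (0,1) and f₁, f₂ : ℍⁿ → ℍ holomorphic satisfying the same normalization conditions (identity on the diagonal, all diagonal partials equal 1/n), then f₁ = f₂ = g. -/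
open Complex

open Set Metric

noncomputable section

/-- Cayley transform ℍ → 𝔻 -/
def cay (ζ : ℂ) : ℂ := (ζ - I) / (ζ + I)
/-- inverse Cayley 𝔻 → ℍ -/
def cayInv (w : ℂ) : ℂ := I * (1 + w) / (1 - w)

lemma cay_maps {ζ : ℂ} (hζ : 0 < ζ.im) : cay ζ ∈ ball (0:ℂ) 1 := by
  have h1 : ζ + I ≠ 0 := by
    intro h
    have : (ζ + I).im = 0 := by rw [h]; simp
    simp [Complex.add_im] at this; linarith
  have hlt : normSq (ζ - I) < normSq (ζ + I) := by
    simp [Complex.normSq_apply, Complex.sub_re, Complex.sub_im, Complex.add_re, Complex.add_im]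
    nlinarith
  rw [mem_ball, dist_zero_right, cay, norm_div]
  rw [div_lt_one (norm_pos_iff.mpr h1)]
  have := Real.sqrt_lt_sqrt (normSq_nonneg _) hlt
  simpa [Complex.norm_def] using this
  
lemma cayInv_maps {w : ℂ} (hw : w ∈ ball (0:ℂ) 1) : 0 < (cayInv w).im := by
  rw [mem_ball, dist_zero_right] at hw
  have hns : normSq w < 1 := by
    have : ‖w‖ < 1 := hw
    nlinarith [Complex.sq_norm w, norm_nonneg w]
  have h1 : (1 : ℂ) - w ≠ 0 := by
    intro h
    have : w = 1 := by linear_combination -h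
    rw [this] at hns; simp [Complex.normSq_apply] at hns
  rw [cayInv, Complex.div_im]
  have hpos : 0 < normSq (1 - w) := normSq_pos.2 h1
  have : (I * (1 + w)).im * (1 - w).re - (I * (1 + w)).re * (1 - w).im
      = 1 - normSq w := by
    simp [Complex.mul_im, Complex.mul_re, Complex.add_re, Complex.add_im,
      Complex.sub_re, Complex.sub_im, Complex.normSq_apply]
    ring
  rw [div_sub_div_same, this]
  exact div_pos (by linarith) hpos

lemma cayInv_zero : cayInv 0 = I := by simp [cayInv]

lemma cay_I : cay I = 0 := by simp [cay]

lemma hasDerivAt_cayInv_zero : HasDerivAt cayInv (2 * I) 0 := by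
  have h : HasDerivAt (fun w : ℂ => I * (1 + w) / (1 - w))
      ((I * (1 - 0) - I * (1 + 0) * (-1)) / (1 - 0)^2) 0 := by
    apply HasDerivAt.div
    · simpa using ((hasDerivAt_id (0:ℂ)).const_add 1).const_mul I
    · simpa using ((hasDerivAt_id (0:ℂ)).const_sub 1)
    · norm_num
  convert h using 1
  · rfl
  · ring

lemma hasDerivAt_cay_I : HasDerivAt cay (-I / 2) I := by
  have h : HasDerivAt (fun ζ : ℂ => (ζ - I) / (ζ + I))
      ((1 * (I + I) - (I - I) * 1) / (I + I)^2) I := by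
    apply HasDerivAt.div
    · simpa using (hasDerivAt_id (I:ℂ)).sub_const I
    · simpa using (hasDerivAt_id (I:ℂ)).add_const I
    · intro h; rw [show I + I = 2 * I by ring] at h; simp [Complex.I_ne_zero] at h
  convert h using 1
  · rfl
  · rw [show ((I:ℂ) + I)^2 = -4 by rw [show (I:ℂ)+I = 2*I by ring, mul_pow, I_sq]; ring]
    ring

/-- One-variable Schwarz–Pick inequality at the base point I. -/
lemma schwarz_pick_at_I (φ : ℂ → ℂ)
    (hd : DifferentiableOn ℂ φ {ζ : ℂ | 0 < ζ.im})
    (hm : ∀ ζ : ℂ, 0 < ζ.im → 0 < (φ ζ).im)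
    {d : ℂ} (hder : HasDerivAt φ d I) :
    ‖d‖ ≤ (φ I).im := by
  set a := φ I with ha_def
  have haim : 0 < a.im := hm I (by simp)
  have haim' : (a.im : ℂ) ≠ 0 := by exact_mod_cast haim.ne'
  -- normalized map Ψ
  set Ψ : ℂ → ℂ := fun ζ => (φ ζ - a.re) / (a.im : ℂ) with hΨ_def
  have hΨmaps : ∀ ζ : ℂ, 0 < ζ.im → 0 < (Ψ ζ).im := by
    intro ζ hζ
    have := hm ζ hζ
    simp only [hΨ_def]
    rw [Complex.div_im]
    simp [Complex.normSq_apply, Complex.sub_im, Complex.sub_re]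
    positivity
  have hΨI : Ψ I = I := by
    simp only [hΨ_def]
    rw [show a - a.re = (a.im : ℂ) * I by
      have := Complex.re_add_im a; linear_combination -this]
    field_simp
  have hΨder : HasDerivAt Ψ (d / a.im) I := (hder.sub_const _).div_const _
  have hΨd : DifferentiableOn ℂ Ψ {ζ : ℂ | 0 < ζ.im} :=
    (hd.sub_const _).div_const _
  -- the composed disc map
  set u : ℂ → ℂ := fun w => cay (Ψ (cayInv w)) with hu_def
  have hcayInv_diff : ∀ w ∈ ball (0:ℂ) 1, DifferentiableAt ℂ cayInv w := by
    intro w hw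
    rw [mem_ball, dist_zero_right] at hw
    have h1 : (1 : ℂ) - w ≠ 0 := by
      intro h
      have : w = 1 := by linear_combination -h
      rw [this] at hw; simp at hw
    apply DifferentiableAt.div
    · fun_prop
    · fun_prop
    · exact h1
  have hcay_diff : ∀ ζ : ℂ, 0 < ζ.im → DifferentiableAt ℂ cay ζ := by
    intro ζ hζ
    have h1 : ζ + I ≠ 0 := by
      intro h
      have : (ζ + I).im = 0 := by rw [h]; simp
      simp [Complex.add_im] at this; linarith
    apply DifferentiableAt.div
    · fun_prop
    · fun_prop
    · exact h1
  have hud : DifferentiableOn ℂ u (ball (0:ℂ) 1) := by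
    intro w hw
    have h1 := hcayInv_diff w hw
    have h2 : 0 < (cayInv w).im := cayInv_maps hw
    have h3 : DifferentiableAt ℂ Ψ (cayInv w) :=
      hΨd.differentiableAt ((isOpen_lt continuous_const Complex.continuous_im).mem_nhds h2)
    have h4 : DifferentiableAt ℂ cay (Ψ (cayInv w)) := hcay_diff _ (hΨmaps _ h2)
    exact ((h4.comp _ h3).comp _ h1).differentiableWithinAt
  have hu0 : u 0 = 0 := by
    simp only [hu_def, cayInv_zero, hΨI, cay_I]
  have humaps : MapsTo u (ball (0:ℂ) 1) (ball (u 0) 1) := by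
    rw [hu0]
    intro w hw
    exact cay_maps (hΨmaps _ (cayInv_maps hw))
  have huder : HasDerivAt u (-I / 2 * (d / a.im / 1) * (2 * I)) 0 := by
    have h2 : HasDerivAt Ψ (d / a.im) (cayInv 0) := by rw [cayInv_zero]; exact hΨder
    have h3 : HasDerivAt cay (-I / 2) (Ψ (cayInv 0)) := by
      rw [cayInv_zero, hΨI]; exact hasDerivAt_cay_I
    have hinner := h2.comp 0 hasDerivAt_cayInv_zero
    have h3' : HasDerivAt cay (-I / 2) ((Ψ ∘ cayInv) 0) := h3
    have houter := h3'.comp 0 hinner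
    have e : -I / 2 * (d / a.im / 1) * (2 * I) = -I / 2 * (d / a.im * (2 * I)) := by ring
    rw [e]
    exact houter
  have hval : -I / 2 * (d / a.im / 1) * (2 * I) = d / a.im := by
    linear_combination (-(d / a.im)) * Complex.I_sq
  rw [hval] at huder
  have hle : ‖deriv u 0‖ ≤ 1 / 1 :=
    Complex.norm_deriv_le_div_of_mapsTo_ball hud (humaps.mono_right ball_subset_closedBall) one_pos
  rw [huder.deriv] at hle
  rw [norm_div] at hle
  have : ‖(a.im : ℂ)‖ = a.im := by
    rw [Complex.norm_real, Real.norm_eq_abs, abs_of_pos haim]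
  rw [this] at hle
  calc ‖d‖ = ‖d‖ / a.im * a.im := by field_simp
  _ ≤ 1 * a.im := by
      apply mul_le_mul_of_nonneg_right _ haim.le
      simpa using hle
  _ = a.im := one_mul _

/-- the open set Ω = ℍⁿ -/
lemma isOpen_upper (n : ℕ) : IsOpen {z : Fin n → ℂ | ∀ j, 0 < (z j).im} := by
  have : {z : Fin n → ℂ | ∀ j, 0 < (z j).im} = ⋂ j, (fun z : Fin n → ℂ => z j) ⁻¹' {w : ℂ | 0 < w.im} := by
    ext z; simp
  rw [this]
  exact isOpen_iInter_of_finite fun j =>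
    (isOpen_lt continuous_const Complex.continuous_im).preimage (continuous_apply j)

lemma convex_upper (n : ℕ) : Convex ℝ {z : Fin n → ℂ | ∀ j, 0 < (z j).im} := by
  intro x hx y hy a b ha hb hab
  intro j
  have hxj := hx j
  have hyj := hy j
  have : ((a • x + b • y) j).im = a * (x j).im + b * (y j).im := by
    simp [Complex.add_im, Complex.smul_re, Complex.smul_im]
  rw [this]
  rcases eq_or_lt_of_le ha with h | h
  · rcases eq_or_lt_of_le hb with h' | h'
    · exfalso; rw [← h, ← h'] at hab; simpa using hab
    · nlinarith
  · nlinarith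

/-- the Möbius slice in one coordinate: real rotation composed with affine scaling. -/
lemma slice_lemma {c s : ℝ} (hcs : c^2 + s^2 = 1) :
    (∀ ζ : ℂ, 0 < ζ.im → (ζ * s + c ≠ 0 ∧
      0 < ((ζ * c - s) / (ζ * s + c)).im)) ∧
    (Complex.I * c - s) / (Complex.I * s + c) = Complex.I ∧
    HasDerivAt (fun ζ : ℂ => (ζ * c - s) / (ζ * s + c)) ((c - Complex.I * s)^2) Complex.I := by
  have hden : ∀ ζ : ℂ, 0 < ζ.im → ζ * s + c ≠ 0 := by
    intro ζ hζ h
    have him : (ζ * (s:ℂ) + (c:ℂ)).im = ζ.im * s := by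
      simp [Complex.add_im, Complex.mul_im]
    have h1 : ζ.im * s = 0 := by rw [← him, h]; rfl
    have hs0 : s = 0 := by
      rcases mul_eq_zero.1 h1 with h' | h'
      · exact absurd h' hζ.ne'
      · exact h'
    have hre : (ζ * (s:ℂ) + (c:ℂ)).re = ζ.re * s + c := by
      simp [Complex.add_re, Complex.mul_re]
    have h2 : ζ.re * s + c = 0 := by rw [← hre, h]; rfl
    rw [hs0] at h2 hcs
    simp at h2
    rw [h2] at hcs
    simp at hcs
  have hIden : (Complex.I * s + c) ≠ 0 := hden Complex.I (by simp)
  have h1' : ((c:ℂ))^2 + ((s:ℂ))^2 = 1 := by exact_mod_cast hcs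
  refine ⟨fun ζ hζ => ⟨hden ζ hζ, ?_⟩, ?_, ?_⟩
  · rw [Complex.div_im]
    have hnum : (ζ * c - s).im * (ζ * s + c).re - (ζ * c - s).re * (ζ * s + c).im
        = ζ.im * (c^2 + s^2) := by
      simp [Complex.sub_im, Complex.sub_re, Complex.add_im, Complex.add_re,
        Complex.mul_im, Complex.mul_re]
      ring
    rw [div_sub_div_same, hnum, hcs]
    have := normSq_pos.2 (hden ζ hζ)
    rw [mul_one]
    positivity
  · rw [div_eq_iff hIden]
    linear_combination (-(s:ℂ)) * Complex.I_sq
  · have h : HasDerivAt (fun ζ : ℂ => (ζ * c - s) / (ζ * s + c))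
        (((c:ℂ) * (Complex.I * s + c) - (Complex.I * c - s) * s) / (Complex.I * s + c)^2)
        Complex.I := by
      apply HasDerivAt.div
      · simpa using ((hasDerivAt_id (Complex.I)).mul_const (c:ℂ)).sub_const (s:ℂ)
      · simpa using ((hasDerivAt_id (Complex.I)).mul_const (s:ℂ)).add_const (c:ℂ)
      · exact hIden
    convert h using 1
    have k1 : ((c:ℂ) - Complex.I*s) * (Complex.I*(s:ℂ) + (c:ℂ)) = 1 := by
      linear_combination (-((s:ℂ))^2) * Complex.I_sq + h1'
    have k2 : (c:ℂ)*(Complex.I*(s:ℂ)+(c:ℂ)) - (Complex.I*(c:ℂ)-(s:ℂ))*(s:ℂ) = 1 := by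
      linear_combination h1'
    rw [eq_div_iff (pow_ne_zero 2 hIden)]
    linear_combination (((c:ℂ)-Complex.I*s)*(Complex.I*(s:ℂ)+(c:ℂ)) + 1) * k1 - k2

/-- choose a rotation aligning a complex number with the positive real axis -/
lemma exists_phase (a : ℂ) : ∃ c s : ℝ, c^2 + s^2 = 1 ∧
    ((c:ℂ) - Complex.I * s)^2 * a = (‖a‖ : ℂ) := by
  rcases eq_or_ne a 0 with rfl | ha
  · exact ⟨1, 0, by norm_num, by simp⟩
  · set ε : ℂ := (‖a‖ : ℂ) / a with hε
    have hεa : ε * a = (‖a‖ : ℂ) := div_mul_cancel₀ _ ha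
    have habs : ‖ε‖ = 1 := by
      rw [hε, norm_div, Complex.norm_real, norm_norm, div_self]
      exact norm_ne_zero_iff.mpr ha
    set θ : ℝ := ε.arg / 2 with hθ
    refine ⟨Real.cos θ, -Real.sin θ, by
      have := Real.sin_sq_add_cos_sq θ; nlinarith, ?_⟩
    have hexp : ((Real.cos θ : ℂ) - Complex.I * ((-Real.sin θ : ℝ) : ℂ))
        = Complex.exp ((θ:ℂ) * Complex.I) := by
      rw [Complex.exp_mul_I, ← Complex.ofReal_cos, ← Complex.ofReal_sin]
      push_cast
      ring
    have hsq : ((Real.cos θ : ℂ) - Complex.I * ((-Real.sin θ : ℝ) : ℂ))^2 = ε := by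
      rw [hexp, sq, ← Complex.exp_add]
      have h2 : (θ:ℂ) * Complex.I + (θ:ℂ) * Complex.I = (ε.arg : ℂ) * Complex.I := by
        rw [hθ]; push_cast; ring
      rw [h2]
      conv_rhs => rw [← Complex.norm_mul_exp_arg_mul_I ε]
      rw [habs]
      simp
    rw [hsq, hεa]

/-- The generalized Schwarz lemma on ℍⁿ. -/
lemma schwarz_Hn {n : ℕ} (f : (Fin n → ℂ) → ℂ)
    (hd : DifferentiableOn ℂ f {z : Fin n → ℂ | ∀ j, 0 < (z j).im})
    (hm : ∀ z : Fin n → ℂ, (∀ j, 0 < (z j).im) → 0 < (f z).im)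
    {z : Fin n → ℂ} (hz : ∀ j, 0 < (z j).im) :
    ∑ j, (z j).im * ‖fderiv ℂ f z (Pi.single j 1)‖ ≤ (f z).im := by
  have hΩ := isOpen_upper n
  have hfd : DifferentiableAt ℂ f z := hd.differentiableAt (hΩ.mem_nhds hz)
  set L := fderiv ℂ f z with hL
  choose c s hcs hph using fun j : Fin n => exists_phase (L (Pi.single j 1))
  set m : Fin n → ℂ → ℂ :=
    fun j ζ => ((z j).im : ℂ) * ((ζ * c j - s j) / (ζ * s j + c j)) + ((z j).re : ℂ) with hm_def
  have hslice := fun j : Fin n => slice_lemma (hcs j)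
  set δ : ℂ → (Fin n → ℂ) := fun ζ j => m j ζ with hδ_def
  have hδI : δ I = z := by
    funext j
    show m j I = z j
    rw [hm_def]
    simp only
    rw [(hslice j).2.1, add_comm]
    exact Complex.re_add_im (z j)
  have hδmaps : ∀ ζ : ℂ, 0 < ζ.im → ∀ j, 0 < ((δ ζ) j).im := by
    intro ζ hζ j
    show 0 < (m j ζ).im
    rw [hm_def]
    simp only
    rw [Complex.add_im, Complex.ofReal_im, add_zero, Complex.mul_im,
      Complex.ofReal_re, Complex.ofReal_im, zero_mul, add_zero]
    exact mul_pos (hz j) ((hslice j).1 ζ hζ).2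
  have hmdiff : ∀ (j : Fin n) (ζ : ℂ), 0 < ζ.im → DifferentiableAt ℂ (m j) ζ := by
    intro j ζ hζ
    apply DifferentiableAt.add_const
    apply DifferentiableAt.const_mul
    apply DifferentiableAt.div
    · fun_prop
    · fun_prop
    · exact ((hslice j).1 ζ hζ).1
  set φ : ℂ → ℂ := fun ζ => f (δ ζ) with hφ_def
  have hφd : DifferentiableOn ℂ φ {ζ : ℂ | 0 < ζ.im} := by
    intro ζ hζ
    have h1 : DifferentiableAt ℂ δ ζ := differentiableAt_pi.mpr fun j => hmdiff j ζ hζ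
    have h2 : DifferentiableAt ℂ f (δ ζ) :=
      hd.differentiableAt (hΩ.mem_nhds (hδmaps ζ hζ))
    exact (h2.comp ζ h1).differentiableWithinAt
  have hφm : ∀ ζ : ℂ, 0 < ζ.im → 0 < (φ ζ).im := fun ζ hζ => hm _ (hδmaps ζ hζ)
  set v : Fin n → ℂ := fun j => ((z j).im : ℂ) * ((c j : ℂ) - Complex.I * s j)^2 with hv_def
  have hδder : HasDerivAt δ v I := by
    rw [hasDerivAt_pi]
    intro j
    exact ((hslice j).2.2.const_mul _).add_const _
  have hφder : HasDerivAt φ (L v) I := by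
    have hl : HasFDerivAt f L (δ I) := by rw [hδI]; exact hfd.hasFDerivAt
    exact hl.comp_hasDerivAt I hδder
  have hmain := schwarz_pick_at_I φ hφd hφm hφder
  have hφI : φ I = f z := by rw [hφ_def]; simp only; rw [hδI]
  rw [hφI] at hmain
  -- compute L v
  have hLv : L v = ((∑ j, (z j).im * ‖L (Pi.single j 1)‖ : ℝ) : ℂ) := by
    have hv : v = ∑ j, (v j) • (Pi.single j (1:ℂ) : Fin n → ℂ) := by
      conv_lhs => rw [← Finset.univ_sum_single v]
      refine Finset.sum_congr rfl fun j _ => ?_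
      funext k
      by_cases h : k = j
      · subst h; simp
      · simp [Pi.single_eq_of_ne h]
    rw [hv, map_sum]
    push_cast
    congr 1
    funext j
    rw [L.map_smul, smul_eq_mul, hv_def]
    simp only
    rw [mul_assoc, hph j]
  rw [hLv] at hmain
  have hnn : 0 ≤ ∑ j, (z j).im * ‖L (Pi.single j 1)‖ :=
    Finset.sum_nonneg fun j _ => mul_nonneg (hz j).le (norm_nonneg _)
  rw [Complex.norm_real, Real.norm_eq_abs, _root_.abs_of_nonneg hnn] at hmain
  exact hmain

/-- a holomorphic function with vanishing imaginary part has zero derivative -/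
lemma deriv_eq_zero_of_im_eq_zero (v : ℂ → ℂ) {S : Set ℂ} (hS : IsOpen S) {ζ : ℂ} (hζ : ζ ∈ S)
    {d : ℂ} (hd : HasDerivAt v d ζ) (him : ∀ w ∈ S, (v w).im = 0) : d = 0 := by
  have hsl : Filter.Tendsto (slope v ζ) (nhdsWithin ζ {ζ}ᶜ) (nhds d) :=
    hasDerivAt_iff_tendsto_slope.1 hd
  have hmem : ∀ᶠ w : ℂ in nhds ζ, w ∈ S := hS.eventually_mem hζ
  -- real direction
  have hre : d.im = 0 := by
    have he : Filter.Tendsto (fun t : ℝ => ζ + (t:ℂ)) (nhdsWithin (0:ℝ) {(0:ℝ)}ᶜ)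
        (nhdsWithin ζ {ζ}ᶜ) := by
      rw [tendsto_nhdsWithin_iff]
      constructor
      · have h' := (Complex.continuous_ofReal.tendsto (0:ℝ)).const_add ζ
        simpa using h'.mono_left nhdsWithin_le_nhds
      · filter_upwards [self_mem_nhdsWithin] with t ht
        simp only [Set.mem_compl_iff, Set.mem_singleton_iff] at ht ⊢
        intro h
        apply ht
        have : (t:ℂ) = 0 := by linear_combination h
        exact_mod_cast this
    have hcomp := hsl.comp he
    have hlim : Filter.Tendsto (fun t : ℝ => (slope v ζ (ζ + (t:ℂ))).im)
        (nhdsWithin (0:ℝ) {(0:ℝ)}ᶜ) (nhds d.im) := (Complex.continuous_im.tendsto d).comp hcomp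
    have hev : ∀ᶠ t : ℝ in nhdsWithin (0:ℝ) {(0:ℝ)}ᶜ, (slope v ζ (ζ + (t:ℂ))).im = 0 := by
      have h2 : ∀ᶠ t : ℝ in nhds (0:ℝ), ζ + (t:ℂ) ∈ S := by
        have h' := (Complex.continuous_ofReal.tendsto (0:ℝ)).const_add ζ
        exact (by simpa using h' : Filter.Tendsto (fun t : ℝ => ζ + (t:ℂ)) (nhds 0) (nhds ζ)).eventually hmem
      filter_upwards [nhdsWithin_le_nhds h2, self_mem_nhdsWithin] with t htS ht0
      simp only [Set.mem_compl_iff, Set.mem_singleton_iff] at ht0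
      rw [slope_def_field]
      have h3 : (v (ζ + (t:ℂ))).im = 0 := him _ htS
      have h4 : (v ζ).im = 0 := him _ hζ
      rw [show ζ + (t:ℂ) - ζ = (t:ℂ) by ring, Complex.div_im]
      simp [Complex.sub_im, h3, h4]
    exact tendsto_nhds_unique (hlim.congr' hev) tendsto_const_nhds
  -- imaginary direction
  have him' : d.re = 0 := by
    have he : Filter.Tendsto (fun t : ℝ => ζ + (t:ℂ) * I) (nhdsWithin (0:ℝ) {(0:ℝ)}ᶜ)
        (nhdsWithin ζ {ζ}ᶜ) := by
      rw [tendsto_nhdsWithin_iff]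
      constructor
      · have h' := ((Complex.continuous_ofReal.tendsto (0:ℝ)).mul_const I).const_add ζ
        simpa using h'.mono_left nhdsWithin_le_nhds
      · filter_upwards [self_mem_nhdsWithin] with t ht
        simp only [Set.mem_compl_iff, Set.mem_singleton_iff] at ht ⊢
        intro h
        apply ht
        have h1 : (t:ℂ) * I = 0 := by linear_combination h
        rcases mul_eq_zero.1 h1 with h2 | h2
        · exact_mod_cast h2
        · exact absurd h2 I_ne_zero
    have hcomp := hsl.comp he
    have hlim : Filter.Tendsto (fun t : ℝ => (slope v ζ (ζ + (t:ℂ) * I)).re)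
        (nhdsWithin (0:ℝ) {(0:ℝ)}ᶜ) (nhds d.re) := (Complex.continuous_re.tendsto d).comp hcomp
    have hev : ∀ᶠ t : ℝ in nhdsWithin (0:ℝ) {(0:ℝ)}ᶜ, (slope v ζ (ζ + (t:ℂ) * I)).re = 0 := by
      have h2 : ∀ᶠ t : ℝ in nhds (0:ℝ), ζ + (t:ℂ) * I ∈ S := by
        have h' := ((Complex.continuous_ofReal.tendsto (0:ℝ)).mul_const I).const_add ζ
        exact (by simpa using h' : Filter.Tendsto (fun t : ℝ => ζ + (t:ℂ) * I) (nhds 0) (nhds ζ)).eventually hmem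
      filter_upwards [nhdsWithin_le_nhds h2, self_mem_nhdsWithin] with t htS ht0
      simp only [Set.mem_compl_iff, Set.mem_singleton_iff] at ht0
      rw [slope_def_field]
      have h3 : (v (ζ + (t:ℂ) * I)).im = 0 := him _ htS
      have h4 : (v ζ).im = 0 := him _ hζ
      rw [show ζ + (t:ℂ) * I - ζ = (t:ℂ) * I by ring, Complex.div_re]
      simp [Complex.sub_im, Complex.sub_re, Complex.mul_re, Complex.mul_im, h3, h4]
    exact tendsto_nhds_unique (hlim.congr' hev) tendsto_const_nhds
  exact Complex.ext him' hre

/-- real-valued holomorphic functions on a ball are constant -/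
lemma const_on_ball_of_im_zero {n : ℕ} (u : (Fin n → ℂ) → ℂ) {z₀ : Fin n → ℂ} {r : ℝ}
    (hr : 0 < r) (hd : DifferentiableOn ℂ u (Metric.ball z₀ r))
    (him : ∀ z ∈ Metric.ball z₀ r, (u z).im = 0) :
    ∀ z ∈ Metric.ball z₀ r, u z = u z₀ := by
  intro z hzm
  rcases eq_or_ne z z₀ with rfl | hne
  · rfl
  set w : Fin n → ℂ := z - z₀ with hw
  have hwne : w ≠ 0 := sub_ne_zero.2 hne
  have hwpos : 0 < ‖w‖ := norm_pos_iff.2 hwne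
  have hwr : ‖w‖ < r := by
    rw [mem_ball, dist_eq_norm] at hzm; exact hzm
  set γ : ℂ → (Fin n → ℂ) := fun ζ => z₀ + ζ • w with hγ
  set D : Set ℂ := Metric.ball (0:ℂ) (r / ‖w‖) with hD
  have hmaps : ∀ ζ ∈ D, γ ζ ∈ Metric.ball z₀ r := by
    intro ζ hζ
    rw [mem_ball, dist_zero_right] at hζ
    rw [mem_ball, dist_eq_norm]
    have : γ ζ - z₀ = ζ • w := by rw [hγ]; simp
    rw [this, norm_smul]
    calc ‖ζ‖ * ‖w‖ < r / ‖w‖ * ‖w‖ := by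
          apply mul_lt_mul_of_pos_right hζ hwpos
    _ = r := by field_simp
  have hγdiff : Differentiable ℂ γ := by
    apply Differentiable.const_add
    exact differentiable_id.smul_const w
  set vf : ℂ → ℂ := fun ζ => u (γ ζ) with hvf
  have hvd : DifferentiableOn ℂ vf D := by
    intro ζ hζ
    exact ((hd.differentiableAt ((Metric.isOpen_ball).mem_nhds (hmaps ζ hζ))).comp ζ
      (hγdiff ζ)).differentiableWithinAt
  have hzero : ∀ ζ ∈ D, fderivWithin ℂ vf D ζ = 0 := by
    intro ζ hζ
    have hda : DifferentiableAt ℂ vf ζ :=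
      hvd.differentiableAt (Metric.isOpen_ball.mem_nhds hζ)
    have hder : HasDerivAt vf (deriv vf ζ) ζ := hda.hasDerivAt
    have hd0 : deriv vf ζ = 0 := by
      apply deriv_eq_zero_of_im_eq_zero vf Metric.isOpen_ball hζ hder
      intro ξ hξ
      exact him _ (hmaps ξ hξ)
    rw [fderivWithin_of_isOpen Metric.isOpen_ball hζ]
    have := hder.hasFDerivAt
    rw [hd0] at this
    rw [this.fderiv]
    ext x
    simp
  have h0D : (0:ℂ) ∈ D := by
    rw [hD, mem_ball, dist_self]; positivity
  have h1D : (1:ℂ) ∈ D := by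
    rw [hD, mem_ball, dist_zero_right, norm_one, lt_div_iff₀ hwpos, one_mul]
    exact hwr
  have := (convex_ball (0:ℂ) (r/‖w‖)).is_const_of_fderivWithin_eq_zero hvd hzero h1D h0D
  have hγ1 : γ 1 = z := by rw [hγ]; simp [hw]
  have hγ0 : γ 0 = z₀ := by rw [hγ]; simp
  rw [hvf] at this
  simp only at this
  rw [hγ1, hγ0] at this
  exact this

/-- extraction of a real multiple from the SameRay condition -/
lemma real_multiple_of_sameRay {p q : ℂ} {s : ℝ} (hs : 0 < s)
    (h : SameRay ℝ (q + (s:ℂ) * p) (q - (s:ℂ) * p)) : ∃ μ : ℝ, p = (μ:ℂ) * q := by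
  have hs' : (s:ℂ) ≠ 0 := by exact_mod_cast hs.ne'
  rcases h with h0 | h0 | ⟨r₁, r₂, hr₁, hr₂, heq⟩
  · refine ⟨-1/s, ?_⟩
    have hp : p = (-q)/(s:ℂ) := by rw [eq_div_iff hs']; linear_combination h0
    push_cast
    rw [hp]
    ring
  · refine ⟨1/s, ?_⟩
    have hp : p = q/(s:ℂ) := by rw [eq_div_iff hs']; linear_combination -h0
    push_cast
    rw [hp]
    ring
  · have heq' : (r₁:ℂ) * (q + s*p) = (r₂:ℂ) * (q - s*p) := by
      have := heq
      rw [Complex.real_smul, Complex.real_smul] at this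
      exact this
    refine ⟨(r₂ - r₁)/((r₁+r₂)*s), ?_⟩
    have hden : ((r₁:ℂ)+r₂) ≠ 0 := by
      have : (0:ℝ) < r₁ + r₂ := by linarith
      exact_mod_cast this.ne'
    have hp : p = ((r₂:ℂ)-r₁)*q/(((r₁:ℂ)+r₂)*(s:ℂ)) := by
      rw [eq_div_iff (mul_ne_zero hden hs')]
      linear_combination heq'
    push_cast
    rw [hp]
    ring

/-- Key uniform bound: difference quotients approximate the partial derivative
at a linear rate, uniformly on a small ball. -/
lemma key_bound_s7 {n : ℕ} {f : (Fin n → ℂ) → ℂ} {U : Set (Fin n → ℂ)} (hU : IsOpen U)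
    (hf : DifferentiableOn ℂ f U) {w₀ : Fin n → ℂ} (hw₀ : w₀ ∈ U) (j : Fin n) :
    ∃ ρ : ℝ, 0 < ρ ∧ closedBall w₀ (3*ρ) ⊆ U ∧ ∃ C : ℝ,
      ∀ w ∈ closedBall w₀ ρ, ∀ ε : ℂ, ε ≠ 0 → ‖ε‖ < ρ →
      ‖(f (w + ε • (Pi.single j 1 : Fin n → ℂ)) - f w)/ε - fderiv ℂ f w (Pi.single j 1)‖ ≤ C * ‖ε‖ := by
  obtain ⟨ρ₀, hρ₀, hball⟩ := Metric.isOpen_iff.1 hU w₀ hw₀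
  set ρ := ρ₀ / 7 with hρ
  have hρpos : 0 < ρ := by positivity
  have hsub : closedBall w₀ (3*ρ) ⊆ U := by
    refine subset_trans ?_ hball
    intro x hx
    rw [mem_closedBall] at hx
    rw [mem_ball]
    calc dist x w₀ ≤ 3*ρ := hx
    _ < ρ₀ := by rw [hρ]; linarith
  have hcompact : IsCompact (closedBall w₀ (3*ρ)) := isCompact_closedBall _ _
  have hcont : ContinuousOn f (closedBall w₀ (3*ρ)) := (hf.continuousOn).mono hsub
  obtain ⟨M, hM⟩ := hcompact.exists_bound_of_continuousOn hcont
  have hM0 : 0 ≤ M := le_trans (norm_nonneg _) (hM w₀ (mem_closedBall_self (by positivity)))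
  have hsingle : ‖(Pi.single j 1 : Fin n → ℂ)‖ = 1 := by
    rw [Pi.norm_single]; exact norm_one
  -- membership of slice points
  have hslice_mem : ∀ w ∈ closedBall w₀ ρ, ∀ η : ℂ, ‖η‖ < 2*ρ →
      w + η • (Pi.single j 1 : Fin n → ℂ) ∈ closedBall w₀ (3*ρ) := by
    intro w hw η hη
    rw [mem_closedBall] at hw ⊢
    calc dist (w + η • (Pi.single j 1 : Fin n → ℂ)) w₀ ≤ dist (w + η • (Pi.single j 1 : Fin n → ℂ)) w + dist w w₀ :=
          dist_triangle _ _ _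
    _ ≤ 2*ρ + ρ := by
        apply add_le_add _ hw
        rw [dist_eq_norm, add_sub_cancel_left, norm_smul, hsingle, mul_one]
        exact hη.le
    _ = 3*ρ := by ring
  refine ⟨ρ, hρpos, hsub, ((2*M+1)/ρ + 1)/(2*ρ), ?_⟩
  intro w hw ε hε0 hερ
  set ϑ : ℂ → ℂ := fun η => f (w + η • (Pi.single j 1 : Fin n → ℂ)) with hϑ
  have hwU : w ∈ U := hsub (closedBall_subset_closedBall (by linarith) hw)
  have hϑd : DifferentiableOn ℂ ϑ (ball (0:ℂ) (2*ρ)) := by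
    intro η hη
    rw [mem_ball, dist_zero_right] at hη
    have h1 : w + η • (Pi.single j 1 : Fin n → ℂ) ∈ U := hsub (hslice_mem w hw η hη)
    have h2 : DifferentiableAt ℂ f (w + η • (Pi.single j 1 : Fin n → ℂ)) :=
      hf.differentiableAt (hU.mem_nhds h1)
    have h3 : DifferentiableAt ℂ (fun η : ℂ => w + η • (Pi.single j 1 : Fin n → ℂ)) η := by
      apply DifferentiableAt.const_add
      exact (differentiable_id.smul_const _).differentiableAt
    exact (h2.comp η h3).differentiableWithinAt
  have hϑ0 : ϑ 0 = f w := by rw [hϑ]; simp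
  have hmaps : MapsTo ϑ (ball (0:ℂ) (2*ρ)) (ball (ϑ 0) (2*M+1)) := by
    intro η hη
    rw [mem_ball, dist_zero_right] at hη
    rw [mem_ball, dist_eq_norm]
    calc ‖ϑ η - ϑ 0‖ ≤ ‖ϑ η‖ + ‖ϑ 0‖ := norm_sub_le _ _
    _ ≤ M + M := by
        apply add_le_add
        · exact hM _ (hslice_mem w hw η hη)
        · rw [hϑ0]
          have := hslice_mem w hw 0 (by simpa using by positivity : ‖(0:ℂ)‖ < 2*ρ)
          rw [zero_smul, add_zero] at this
          exact hM _ this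
    _ < 2*M+1 := by linarith
  set g₁ : ℂ → ℂ := dslope ϑ 0 with hg₁
  have hg₁d : DifferentiableOn ℂ g₁ (ball (0:ℂ) (2*ρ)) :=
    (differentiableOn_dslope (ball_mem_nhds _ (by positivity))).2 hϑd
  have hg₁b : ∀ z ∈ ball (0:ℂ) (2*ρ), ‖g₁ z‖ ≤ (2*M+1)/(2*ρ) := fun z hz =>
    norm_dslope_le_div_of_mapsTo_ball hϑd (hmaps.mono_right ball_subset_closedBall) hz
  have hg₁maps : MapsTo g₁ (ball (0:ℂ) (2*ρ)) (ball (g₁ 0) ((2*M+1)/ρ + 1)) := by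
    intro z hz
    rw [mem_ball, dist_eq_norm]
    calc ‖g₁ z - g₁ 0‖ ≤ ‖g₁ z‖ + ‖g₁ 0‖ := norm_sub_le _ _
    _ ≤ (2*M+1)/(2*ρ) + (2*M+1)/(2*ρ) := add_le_add (hg₁b z hz)
        (hg₁b 0 (mem_ball_self (by positivity)))
    _ = (2*M+1)/ρ := by field_simp; ring
    _ < (2*M+1)/ρ + 1 := by linarith
  have hεball : ε ∈ ball (0:ℂ) (2*ρ) := by
    rw [mem_ball, dist_zero_right]; linarith
  have hdist := dist_le_div_mul_dist_of_mapsTo_ball hg₁d (hg₁maps.mono_right ball_subset_closedBall) hεball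
  -- identify the pieces
  have hder : HasDerivAt ϑ (fderiv ℂ f w (Pi.single j 1)) 0 := by
    have h2 : HasFDerivAt f (fderiv ℂ f w) ((fun η : ℂ => w + η • (Pi.single j 1 : Fin n → ℂ)) 0) := by
      simp only [zero_smul, add_zero]
      exact (hf.differentiableAt (hU.mem_nhds hwU)).hasFDerivAt
    have h3 : HasDerivAt (fun η : ℂ => w + η • (Pi.single j 1 : Fin n → ℂ)) (Pi.single j 1) 0 := by
      simpa using ((hasDerivAt_id (0:ℂ)).smul_const (Pi.single j 1 : Fin n → ℂ)).const_add w
    exact h2.comp_hasDerivAt 0 h3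
  have hg₁0 : g₁ 0 = fderiv ℂ f w (Pi.single j 1) := by
    rw [hg₁, dslope_same]
    exact hder.deriv
  have hg₁ε : g₁ ε = (f (w + ε • (Pi.single j 1 : Fin n → ℂ)) - f w)/ε := by
    rw [hg₁, dslope_of_ne _ hε0, slope_def_field, hϑ0]
    rw [sub_zero]
  rw [dist_eq_norm, hg₁ε, hg₁0, dist_zero_right] at hdist
  exact hdist

/-- Continuity in all variables and holomorphy along coordinate lines of a partial
derivative of a holomorphic function of several complex variables. -/
lemma partial_deriv_props {n : ℕ} {f : (Fin n → ℂ) → ℂ} {U : Set (Fin n → ℂ)} (hU : IsOpen U)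
    (hf : DifferentiableOn ℂ f U) {w₀ : Fin n → ℂ} (hw₀ : w₀ ∈ U) (j : Fin n) :
    ∃ ρ : ℝ, 0 < ρ ∧ ball w₀ ρ ⊆ U ∧
      ContinuousOn (fun w => fderiv ℂ f w (Pi.single j 1)) (ball w₀ ρ) ∧
      ∀ b k, DifferentiableOn ℂ (fun ξ : ℂ => fderiv ℂ f (Function.update b k ξ) (Pi.single j 1))
        {ξ : ℂ | Function.update b k ξ ∈ ball w₀ ρ} := by
  obtain ⟨ρ, hρ, hsub3, C, hC⟩ := key_bound_s7 hU hf hw₀ j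
  have hsub : ball w₀ ρ ⊆ U := fun x hx => hsub3 (by
    rw [mem_closedBall]
    rw [mem_ball] at hx
    linarith)
  set P : (Fin n → ℂ) → ℂ := fun w => fderiv ℂ f w (Pi.single j 1) with hP
  set A : ℂ → (Fin n → ℂ) → ℂ :=
    fun ε w => (f (w + ε • (Pi.single j 1 : Fin n → ℂ)) - f w)/ε with hA
  set C' : ℝ := max C 1 with hC'
  have hC'pos : 0 < C' := lt_of_lt_of_le one_pos (le_max_right _ _)
  have hbound : ∀ w ∈ ball w₀ ρ, ∀ ε : ℂ, ε ≠ 0 → ‖ε‖ < ρ →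
      dist (P w) (A ε w) ≤ C' * ‖ε‖ := by
    intro w hw ε hε0 hερ
    rw [dist_comm, dist_eq_norm]
    calc ‖A ε w - P w‖ ≤ C * ‖ε‖ :=
          hC w (ball_subset_closedBall hw) ε hε0 hερ
    _ ≤ C' * ‖ε‖ := by
        apply mul_le_mul_of_nonneg_right (le_max_left _ _) (norm_nonneg _)
  have hev_small : ∀ δ : ℝ, 0 < δ → ∀ᶠ ε : ℂ in nhdsWithin 0 {(0:ℂ)}ᶜ,
      ε ≠ 0 ∧ ‖ε‖ < min ρ (δ/C') := by
    intro δ hδ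
    have hmin : 0 < min ρ (δ/C') := lt_min hρ (by positivity)
    filter_upwards [nhdsWithin_le_nhds (Metric.ball_mem_nhds (0:ℂ) hmin),
      self_mem_nhdsWithin] with ε hε1 hε2
    refine ⟨hε2, ?_⟩
    rw [mem_ball, dist_zero_right] at hε1
    exact hε1
  have htu : TendstoUniformlyOn A P (nhdsWithin 0 {(0:ℂ)}ᶜ) (ball w₀ ρ) := by
    rw [Metric.tendstoUniformlyOn_iff]
    intro δ hδ
    filter_upwards [hev_small δ hδ] with ε ⟨hε0, hεsm⟩ w hw
    calc dist (P w) (A ε w) ≤ C' * ‖ε‖ :=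
          hbound w hw ε hε0 (lt_of_lt_of_le hεsm (min_le_left _ _))
    _ < C' * (δ/C') := by
        apply mul_lt_mul_of_pos_left (lt_of_lt_of_le hεsm (min_le_right _ _)) hC'pos
    _ = δ := by field_simp
  have hev_cont : ∀ᶠ ε : ℂ in nhdsWithin 0 {(0:ℂ)}ᶜ, ContinuousOn (A ε) (ball w₀ ρ) := by
    filter_upwards [hev_small 1 one_pos] with ε ⟨hε0, hεsm⟩
    have hερ : ‖ε‖ < ρ := lt_of_lt_of_le hεsm (min_le_left _ _)
    have hmem : ∀ w ∈ ball w₀ ρ, w + ε • (Pi.single j 1 : Fin n → ℂ) ∈ U := by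
      intro w hw
      apply hsub3
      rw [mem_closedBall]
      rw [mem_ball] at hw
      calc dist (w + ε • (Pi.single j 1 : Fin n → ℂ)) w₀
          ≤ dist (w + ε • (Pi.single j 1 : Fin n → ℂ)) w + dist w w₀ := dist_triangle _ _ _
      _ ≤ ‖ε‖ + ρ := by
          apply add_le_add _ hw.le
          rw [dist_eq_norm, add_sub_cancel_left, norm_smul, Pi.norm_single, norm_one, mul_one]
      _ ≤ 3 * ρ := by linarith
    apply ContinuousOn.div_const
    apply ContinuousOn.sub
    · apply hf.continuousOn.comp
      · exact (continuous_id.add continuous_const).continuousOn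
      · exact hmem
    · exact hf.continuousOn.mono hsub
  refine ⟨ρ, hρ, hsub, htu.continuousOn hev_cont.frequently, ?_⟩
  intro b k
  set sec : ℂ → (Fin n → ℂ) := fun ξ => Function.update b k ξ with hsec
  have hseccont : Continuous sec := by
    apply continuous_pi
    intro i
    rcases eq_or_ne i k with rfl | hik
    · simpa [hsec, Function.update_self] using continuous_id'
    · simpa [hsec, Function.update_of_ne hik] using continuous_const
  have hsecdiff : Differentiable ℂ sec := by
    apply differentiable_pi.mpr
    intro i
    rcases eq_or_ne i k with rfl | hik
    · simpa [hsec, Function.update_self] using differentiable_id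
    · simpa [hsec, Function.update_of_ne hik] using differentiable_const _
  have hSopen : IsOpen {ξ : ℂ | sec ξ ∈ ball w₀ ρ} :=
    isOpen_ball.preimage hseccont
  have htu2 : TendstoUniformlyOn (fun ε ξ => A ε (sec ξ)) (P ∘ sec)
      (nhdsWithin 0 {(0:ℂ)}ᶜ) (sec ⁻¹' ball w₀ ρ) := htu.comp sec
  have hev_diff : ∀ᶠ ε : ℂ in nhdsWithin 0 {(0:ℂ)}ᶜ,
      DifferentiableOn ℂ (fun ξ => A ε (sec ξ)) {ξ : ℂ | sec ξ ∈ ball w₀ ρ} := by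
    filter_upwards [hev_small 1 one_pos] with ε ⟨hε0, hεsm⟩
    have hερ : ‖ε‖ < ρ := lt_of_lt_of_le hεsm (min_le_left _ _)
    intro ξ hξ
    have h1 : sec ξ ∈ U := hsub hξ
    have h2 : sec ξ + ε • (Pi.single j 1 : Fin n → ℂ) ∈ U := by
      apply hsub3
      rw [mem_closedBall]
      have hw : sec ξ ∈ ball w₀ ρ := hξ
      rw [mem_ball] at hw
      calc dist (sec ξ + ε • (Pi.single j 1 : Fin n → ℂ)) w₀
          ≤ dist (sec ξ + ε • (Pi.single j 1 : Fin n → ℂ)) (sec ξ) + dist (sec ξ) w₀ :=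
            dist_triangle _ _ _
      _ ≤ ‖ε‖ + ρ := by
          apply add_le_add _ hw.le
          rw [dist_eq_norm, add_sub_cancel_left, norm_smul, Pi.norm_single, norm_one, mul_one]
      _ ≤ 3 * ρ := by linarith
    have hd1 : DifferentiableAt ℂ (fun ξ' => f (sec ξ' + ε • (Pi.single j 1 : Fin n → ℂ))) ξ := by
      apply DifferentiableAt.comp
      · exact hf.differentiableAt (hU.mem_nhds h2)
      · exact ((hsecdiff ξ).add_const _)
    have hd2 : DifferentiableAt ℂ (fun ξ' => f (sec ξ')) ξ := by
      apply DifferentiableAt.comp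
      · exact hf.differentiableAt (hU.mem_nhds h1)
      · exact hsecdiff ξ
    exact ((hd1.sub hd2).div_const ε).differentiableWithinAt
  have := (htu2.tendstoLocallyUniformlyOn).differentiableOn hev_diff hSopen
  exact this

lemma const_on_ball_of_im_zero₁ (u : ℂ → ℂ) {c : ℂ} {r : ℝ}
    (hd : DifferentiableOn ℂ u (ball c r)) (him : ∀ ζ ∈ ball c r, (u ζ).im = 0) :
    ∀ ζ ∈ ball c r, u ζ = u c := by
  intro ζ hζ
  have hr : 0 < r := by
    by_contra h
    push_neg at h
    rw [ball_eq_empty.2 h] at hζ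
    exact absurd hζ (notMem_empty _)
  have hzero : ∀ ξ ∈ ball c r, fderivWithin ℂ u (ball c r) ξ = 0 := by
    intro ξ hξ
    have hda : DifferentiableAt ℂ u ξ := hd.differentiableAt (isOpen_ball.mem_nhds hξ)
    have hd0 : deriv u ξ = 0 :=
      deriv_eq_zero_of_im_eq_zero u isOpen_ball hξ hda.hasDerivAt him
    rw [fderivWithin_of_isOpen isOpen_ball hξ]
    have h2 := hda.hasDerivAt.hasFDerivAt
    rw [hd0] at h2
    rw [h2.fderiv]
    ext1
    simp
  exact (convex_ball c r).is_const_of_fderivWithin_eq_zero hd hzero hζ (mem_ball_self hr)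

/-- The pointwise proportionality relation derived from extremality. -/
lemma pointwise_relation {n : ℕ} (g f₁ f₂ : (Fin n → ℂ) → ℂ)
    (hgext : ∀ z : Fin n → ℂ, (∀ j, 0 < (z j).im) →
      ∑ j, (z j).im * ‖fderiv ℂ g z (Pi.single j 1)‖ = (g z).im)
    (hf₁ : DifferentiableOn ℂ f₁ {z : Fin n → ℂ | ∀ j, 0 < (z j).im})
    (hf₁maps : ∀ z : Fin n → ℂ, (∀ j, 0 < (z j).im) → 0 < (f₁ z).im)
    (hf₂ : DifferentiableOn ℂ f₂ {z : Fin n → ℂ | ∀ j, 0 < (z j).im})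
    (hf₂maps : ∀ z : Fin n → ℂ, (∀ j, 0 < (z j).im) → 0 < (f₂ z).im)
    (t : ℝ) (ht : t ∈ Set.Ioo (0 : ℝ) 1)
    (hconv : ∀ z : Fin n → ℂ, (∀ j, 0 < (z j).im) →
      g z = (t : ℂ) * f₁ z + ((1 : ℂ) - t) * f₂ z) :
    ∀ w : Fin n → ℂ, (∀ j, 0 < (w j).im) → ∀ j, ∃ μ : ℝ,
      fderiv ℂ f₁ w (Pi.single j 1) - fderiv ℂ f₂ w (Pi.single j 1)
        = (μ:ℂ) * fderiv ℂ g w (Pi.single j 1) := by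
  intro w hw
  have hΩ := isOpen_upper n
  have hwU : w ∈ {z : Fin n → ℂ | ∀ j, 0 < (z j).im} := hw
  obtain ⟨ht0, ht1⟩ := ht
  set a : Fin n → ℂ := fun i => fderiv ℂ f₁ w (Pi.single i 1) with ha
  set b : Fin n → ℂ := fun i => fderiv ℂ f₂ w (Pi.single i 1) with hb
  -- derivative of g as convex combination
  have h1 : HasFDerivAt f₁ (fderiv ℂ f₁ w) w :=
    (hf₁.differentiableAt (hΩ.mem_nhds hwU)).hasFDerivAt
  have h2 : HasFDerivAt f₂ (fderiv ℂ f₂ w) w :=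
    (hf₂.differentiableAt (hΩ.mem_nhds hwU)).hasFDerivAt
  have hsum : HasFDerivAt (fun z => (t:ℂ) * f₁ z + ((1:ℂ)-(t:ℂ)) * f₂ z)
      ((t:ℂ) • fderiv ℂ f₁ w + ((1:ℂ)-(t:ℂ)) • fderiv ℂ f₂ w) w :=
    (h1.const_mul _).add (h2.const_mul _)
  have heqev : g =ᶠ[nhds w] (fun z => (t:ℂ) * f₁ z + ((1:ℂ)-(t:ℂ)) * f₂ z) :=
    Filter.eventuallyEq_of_mem (hΩ.mem_nhds hwU) (fun u hu => hconv u hu)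
  have hgder : HasFDerivAt g ((t:ℂ) • fderiv ℂ f₁ w + ((1:ℂ)-(t:ℂ)) • fderiv ℂ f₂ w) w :=
    hsum.congr_of_eventuallyEq heqev
  set q : Fin n → ℂ := fun i => fderiv ℂ g w (Pi.single i 1) with hqdef
  have hq : ∀ i, q i = (t:ℂ) * a i + ((1:ℂ)-(t:ℂ)) * b i := by
    intro i
    rw [hqdef]
    simp only
    rw [hgder.fderiv]
    simp [ContinuousLinearMap.add_apply, ContinuousLinearMap.coe_smul', Pi.smul_apply,
      smul_eq_mul, ha, hb]
  have him : (g w).im = t * (f₁ w).im + (1-t) * (f₂ w).im := by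
    rw [hconv w hw]
    simp [Complex.add_im, Complex.mul_im, Complex.sub_re, Complex.sub_im,
      Complex.one_re, Complex.one_im, Complex.ofReal_re, Complex.ofReal_im]
  have hS₁ := schwarz_Hn f₁ hf₁ hf₁maps hw
  have hS₂ := schwarz_Hn f₂ hf₂ hf₂maps hw
  set s₀ : ℝ := min t (1-t) with hs₀def
  have hs₀ : 0 < s₀ := lt_min ht0 (by linarith)
  have hs₀t : s₀ ≤ t := min_le_left _ _
  have hs₀t' : s₀ ≤ 1 - t := min_le_right _ _
  have hcombo : ∀ θ : ℝ, 0 ≤ θ → θ ≤ 1 →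
      ∑ i, (w i).im * ‖(θ:ℂ) * a i + ((1:ℂ)-(θ:ℂ)) * b i‖
        ≤ θ * (f₁ w).im + (1-θ) * (f₂ w).im := by
    intro θ hθ0 hθ1
    calc ∑ i, (w i).im * ‖(θ:ℂ) * a i + ((1:ℂ)-(θ:ℂ)) * b i‖
        ≤ ∑ i, (θ * ((w i).im * ‖a i‖) + (1-θ) * ((w i).im * ‖b i‖)) := by
          apply Finset.sum_le_sum
          intro i _
          have hn : ‖(θ:ℂ) * a i + ((1:ℂ)-(θ:ℂ)) * b i‖ ≤ θ*‖a i‖ + (1-θ)*‖b i‖ := by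
            calc ‖(θ:ℂ) * a i + ((1:ℂ)-(θ:ℂ)) * b i‖
                ≤ ‖(θ:ℂ) * a i‖ + ‖((1:ℂ)-(θ:ℂ)) * b i‖ := norm_add_le _ _
            _ = θ*‖a i‖ + (1-θ)*‖b i‖ := by
                rw [norm_mul, norm_mul]
                have e1 : ‖(θ:ℂ)‖ = θ := by
                  rw [Complex.norm_real, Real.norm_eq_abs, _root_.abs_of_nonneg hθ0]
                have e2 : ‖((1:ℂ)-(θ:ℂ))‖ = 1-θ := by
                  rw [show ((1:ℂ)-(θ:ℂ)) = (((1-θ:ℝ)):ℂ) by push_cast; ring]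
                  rw [Complex.norm_real, Real.norm_eq_abs, _root_.abs_of_nonneg (by linarith)]
                rw [e1, e2]
          have := mul_le_mul_of_nonneg_left hn (hw i).le
          calc (w i).im * ‖(θ:ℂ) * a i + ((1:ℂ)-(θ:ℂ)) * b i‖
              ≤ (w i).im * (θ*‖a i‖ + (1-θ)*‖b i‖) := this
          _ = θ * ((w i).im * ‖a i‖) + (1-θ) * ((w i).im * ‖b i‖) := by ring
    _ = θ * (∑ i, (w i).im * ‖a i‖) + (1-θ) * (∑ i, (w i).im * ‖b i‖) := by
        rw [Finset.sum_add_distrib, ← Finset.mul_sum, ← Finset.mul_sum]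
    _ ≤ θ * (f₁ w).im + (1-θ) * (f₂ w).im :=
        add_le_add (mul_le_mul_of_nonneg_left hS₁ hθ0)
          (mul_le_mul_of_nonneg_left hS₂ (by linarith))
  set p : Fin n → ℂ := fun i => a i - b i with hp
  have hkey : ∀ θ : ℝ, ∀ i, (θ:ℂ) * a i + ((1:ℂ)-(θ:ℂ)) * b i = q i + ((θ-t:ℝ):ℂ) * p i := by
    intro θ i
    rw [hq i, hp]
    push_cast
    ring
  have hup : ∑ i, (w i).im * ‖q i + ((s₀:ℝ):ℂ) * p i‖
      ≤ (t+s₀) * (f₁ w).im + (1-(t+s₀)) * (f₂ w).im := by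
    have h := hcombo (t+s₀) (by linarith) (by linarith)
    have hr : ∀ i, (((t+s₀:ℝ)):ℂ) * a i + ((1:ℂ)-((t+s₀:ℝ):ℂ)) * b i
        = q i + ((s₀:ℝ):ℂ) * p i := by
      intro i; rw [hq i, hp]; push_cast; ring
    calc ∑ i, (w i).im * ‖q i + ((s₀:ℝ):ℂ) * p i‖
        = ∑ i, (w i).im * ‖((t+s₀:ℝ):ℂ) * a i + ((1:ℂ)-((t+s₀:ℝ):ℂ)) * b i‖ := by
          apply Finset.sum_congr rfl; intro i _; rw [hr i]
    _ ≤ (t+s₀) * (f₁ w).im + (1-(t+s₀)) * (f₂ w).im := h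
  have hdown : ∑ i, (w i).im * ‖q i - ((s₀:ℝ):ℂ) * p i‖
      ≤ (t-s₀) * (f₁ w).im + (1-(t-s₀)) * (f₂ w).im := by
    have h := hcombo (t-s₀) (by linarith) (by linarith)
    have hr : ∀ i, (((t-s₀:ℝ)):ℂ) * a i + ((1:ℂ)-((t-s₀:ℝ):ℂ)) * b i
        = q i - ((s₀:ℝ):ℂ) * p i := by
      intro i; rw [hq i, hp]; push_cast; ring
    calc ∑ i, (w i).im * ‖q i - ((s₀:ℝ):ℂ) * p i‖
        = ∑ i, (w i).im * ‖((t-s₀:ℝ):ℂ) * a i + ((1:ℂ)-((t-s₀:ℝ):ℂ)) * b i‖ := by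
          apply Finset.sum_congr rfl; intro i _; rw [hr i]
    _ ≤ (t-s₀) * (f₁ w).im + (1-(t-s₀)) * (f₂ w).im := h
  have hsplit : ∑ i, (w i).im * (‖q i + ((s₀:ℝ):ℂ)*p i‖ + ‖q i - ((s₀:ℝ):ℂ)*p i‖)
      = (∑ i, (w i).im * ‖q i + ((s₀:ℝ):ℂ)*p i‖)
        + (∑ i, (w i).im * ‖q i - ((s₀:ℝ):ℂ)*p i‖) := by
    rw [← Finset.sum_add_distrib]
    apply Finset.sum_congr rfl
    intro i _
    ring
  have htot : ∑ i, (w i).im * (‖q i + ((s₀:ℝ):ℂ)*p i‖ + ‖q i - ((s₀:ℝ):ℂ)*p i‖)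
      ≤ 2*(g w).im := by
    rw [hsplit]
    have := add_le_add hup hdown
    calc (∑ i, (w i).im * ‖q i + ((s₀:ℝ):ℂ)*p i‖)
        + (∑ i, (w i).im * ‖q i - ((s₀:ℝ):ℂ)*p i‖)
        ≤ (t+s₀) * (f₁ w).im + (1-(t+s₀)) * (f₂ w).im
          + ((t-s₀) * (f₁ w).im + (1-(t-s₀)) * (f₂ w).im) := this
    _ = 2*(t * (f₁ w).im + (1-t) * (f₂ w).im) := by ring
    _ = 2*(g w).im := by rw [him]
  have hextr : ∑ i, (w i).im * ‖q i‖ = (g w).im := hgext w hw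
  have hWnn : ∀ i, 0 ≤ (w i).im * ((‖q i + ((s₀:ℝ):ℂ)*p i‖ + ‖q i - ((s₀:ℝ):ℂ)*p i‖) - 2*‖q i‖) := by
    intro i
    apply mul_nonneg (hw i).le
    have h2q : (2:ℝ)*‖q i‖ = ‖(q i + ((s₀:ℝ):ℂ)*p i) + (q i - ((s₀:ℝ):ℂ)*p i)‖ := by
      rw [show (q i + ((s₀:ℝ):ℂ)*p i) + (q i - ((s₀:ℝ):ℂ)*p i) = (2:ℂ)*q i by ring, norm_mul]
      norm_num
    rw [sub_nonneg, h2q]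
    exact norm_add_le _ _
  have hWsum : ∑ i, (w i).im * ((‖q i + ((s₀:ℝ):ℂ)*p i‖ + ‖q i - ((s₀:ℝ):ℂ)*p i‖) - 2*‖q i‖) ≤ 0 := by
    have hexp : ∑ i, (w i).im * ((‖q i + ((s₀:ℝ):ℂ)*p i‖ + ‖q i - ((s₀:ℝ):ℂ)*p i‖) - 2*‖q i‖)
        = (∑ i, (w i).im * (‖q i + ((s₀:ℝ):ℂ)*p i‖ + ‖q i - ((s₀:ℝ):ℂ)*p i‖))
          - 2 * ∑ i, (w i).im * ‖q i‖ := by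
      rw [Finset.mul_sum, ← Finset.sum_sub_distrib]
      apply Finset.sum_congr rfl
      intro i _
      ring
    rw [hexp, hextr]
    linarith
  have hW0 := (Finset.sum_eq_zero_iff_of_nonneg (fun i _ => hWnn i)).1
    (le_antisymm hWsum (Finset.sum_nonneg fun i _ => hWnn i))
  intro j
  have hWj := hW0 j (Finset.mem_univ j)
  have hnorm_eq : ‖q j + ((s₀:ℝ):ℂ)*p j‖ + ‖q j - ((s₀:ℝ):ℂ)*p j‖ = 2*‖q j‖ := by
    rcases mul_eq_zero.1 hWj with h | h
    · exact absurd h (hw j).ne'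
    · linarith [sub_eq_zero.1 h]
  have h2q : (2:ℝ)*‖q j‖ = ‖(q j + ((s₀:ℝ):ℂ)*p j) + (q j - ((s₀:ℝ):ℂ)*p j)‖ := by
    rw [show (q j + ((s₀:ℝ):ℂ)*p j) + (q j - ((s₀:ℝ):ℂ)*p j) = (2:ℂ)*q j by ring, norm_mul]
    norm_num
  have hray : SameRay ℝ (q j + ((s₀:ℝ):ℂ)*p j) (q j - ((s₀:ℝ):ℂ)*p j) := by
    rw [sameRay_iff_norm_add]
    rw [← h2q, hnorm_eq]
  obtain ⟨μ, hμ⟩ := real_multiple_of_sameRay hs₀ hray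
  exact ⟨μ, hμ⟩

/-- An everywhere-extremal `g` in the class `𝒞` (identity on the diagonal,
diagonal partials all equal to `1/n`) is an extreme point of `𝒞`: if `g = t f₁ + (1-t) f₂`
with `t ∈ (0,1)` and `f₁, f₂ ∈ 𝒞`, then `f₁ = f₂ = g` on `ℍⁿ`. -/
theorem extremal_is_extreme_point {n : ℕ} (g f₁ f₂ : (Fin n → ℂ) → ℂ)
    (hg : DifferentiableOn ℂ g {z : Fin n → ℂ | ∀ j, 0 < (z j).im})
    (hgmaps : ∀ z : Fin n → ℂ, (∀ j, 0 < (z j).im) → 0 < (g z).im)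
    (hgA : ∀ l : ℂ, 0 < l.im → g (fun _ => l) = l)
    (hgB : ∀ l : ℂ, 0 < l.im → ∀ j,
      fderiv ℂ g (fun _ => l) (Pi.single j 1) = (1 / n : ℂ))
    (hgext : ∀ z : Fin n → ℂ, (∀ j, 0 < (z j).im) →
      ∑ j, (z j).im * ‖fderiv ℂ g z (Pi.single j 1)‖ = (g z).im)
    (hf₁ : DifferentiableOn ℂ f₁ {z : Fin n → ℂ | ∀ j, 0 < (z j).im})
    (hf₁maps : ∀ z : Fin n → ℂ, (∀ j, 0 < (z j).im) → 0 < (f₁ z).im)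
    (hf₁A : ∀ l : ℂ, 0 < l.im → f₁ (fun _ => l) = l)
    (hf₁B : ∀ l : ℂ, 0 < l.im → ∀ j,
      fderiv ℂ f₁ (fun _ => l) (Pi.single j 1) = (1 / n : ℂ))
    (hf₂ : DifferentiableOn ℂ f₂ {z : Fin n → ℂ | ∀ j, 0 < (z j).im})
    (hf₂maps : ∀ z : Fin n → ℂ, (∀ j, 0 < (z j).im) → 0 < (f₂ z).im)
    (hf₂A : ∀ l : ℂ, 0 < l.im → f₂ (fun _ => l) = l)
    (hf₂B : ∀ l : ℂ, 0 < l.im → ∀ j,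
      fderiv ℂ f₂ (fun _ => l) (Pi.single j 1) = (1 / n : ℂ))
    (t : ℝ) (ht : t ∈ Set.Ioo (0 : ℝ) 1)
    (hconv : ∀ z : Fin n → ℂ, (∀ j, 0 < (z j).im) →
      g z = (t : ℂ) * f₁ z + ((1 : ℂ) - t) * f₂ z) :
    ∀ z : Fin n → ℂ, (∀ j, 0 < (z j).im) → f₁ z = g z ∧ f₂ z = g z := by
  suffices hmain : ∀ z : Fin n → ℂ, (∀ j, 0 < (z j).im) → f₁ z = f₂ z by
    intro z hz
    have h12 := hmain z hz
    have hcv := hconv z hz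
    constructor
    · rw [hcv, ← h12]; ring
    · rw [hcv, h12]; ring
  -- degenerate case n = 0
  rcases Nat.eq_zero_or_pos n with hn0 | hn
  · subst hn0
    exfalso
    have h1 : g (fun _ => Complex.I) = Complex.I := hgA Complex.I (by simp)
    have h2 : g (fun _ => 2*Complex.I) = 2*Complex.I := hgA (2*Complex.I) (by simp)
    have he : (fun _ : Fin 0 => Complex.I) = (fun _ : Fin 0 => 2*Complex.I) :=
      funext fun j => j.elim0
    rw [he, h2] at h1
    have : Complex.I = 0 := by linear_combination h1
    exact Complex.I_ne_zero this
  -- main case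
  set Ω : Set (Fin n → ℂ) := {z : Fin n → ℂ | ∀ j, 0 < (z j).im} with hΩdef
  have hΩ : IsOpen Ω := isOpen_upper n
  set z₀ : Fin n → ℂ := fun _ => Complex.I with hz₀def
  have hz₀mem : z₀ ∈ Ω := fun j => by simp [hz₀def]
  have hrel := pointwise_relation g f₁ f₂ hgext hf₁ hf₁maps hf₂ hf₂maps t ht hconv
  -- partial derivative regularity
  choose ρ₁ hρ₁pos hρ₁sub hcont₁ hline₁ using fun j => partial_deriv_props hΩ hf₁ hz₀mem j
  choose ρ₂ hρ₂pos hρ₂sub hcont₂ hline₂ using fun j => partial_deriv_props hΩ hf₂ hz₀mem j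
  choose ρ₃ hρ₃pos hρ₃sub hcont₃ hline₃ using fun j => partial_deriv_props hΩ hg hz₀mem j
  have hne : (Finset.univ : Finset (Fin n)).Nonempty := ⟨⟨0, hn⟩, Finset.mem_univ _⟩
  set r : ℝ := Finset.univ.inf' hne (fun j => min (ρ₁ j) (min (ρ₂ j) (ρ₃ j))) with hrdef
  have hrpos : 0 < r := by
    rw [hrdef, Finset.lt_inf'_iff]
    intro j _
    exact lt_min (hρ₁pos j) (lt_min (hρ₂pos j) (hρ₃pos j))
  have hrle₁ : ∀ j, r ≤ ρ₁ j := fun j =>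
    le_trans (Finset.inf'_le _ (Finset.mem_univ j)) (min_le_left _ _)
  have hrle₂ : ∀ j, r ≤ ρ₂ j := fun j =>
    le_trans (Finset.inf'_le _ (Finset.mem_univ j)) (le_trans (min_le_right _ _) (min_le_left _ _))
  have hrle₃ : ∀ j, r ≤ ρ₃ j := fun j =>
    le_trans (Finset.inf'_le _ (Finset.mem_univ j)) (le_trans (min_le_right _ _) (min_le_right _ _))
  set P : Fin n → (Fin n → ℂ) → ℂ :=
    fun j w => fderiv ℂ f₁ w (Pi.single j 1) - fderiv ℂ f₂ w (Pi.single j 1) with hPdef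
  set Q : Fin n → (Fin n → ℂ) → ℂ := fun j w => fderiv ℂ g w (Pi.single j 1) with hQdef
  have hQz₀ : ∀ j, Q j z₀ = (1/n : ℂ) := fun j => hgB Complex.I (by simp) j
  have hQz₀ne : ∀ j, Q j z₀ ≠ 0 := by
    intro j
    rw [hQz₀ j]
    apply one_div_ne_zero
    exact_mod_cast hn.ne'
  -- find a small polydisc where all Q j are nonzero
  have hQcont : ∀ j, ContinuousOn (Q j) (ball z₀ r) :=
    fun j => (hcont₃ j).mono (ball_subset_ball (hrle₃ j))
  have hVopen : IsOpen (⋂ j, ball z₀ r ∩ Q j ⁻¹' {(0:ℂ)}ᶜ) := by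
    apply isOpen_iInter_of_finite
    intro j
    exact (hQcont j).isOpen_inter_preimage isOpen_ball (isOpen_compl_singleton)
  have hz₀V : z₀ ∈ ⋂ j, ball z₀ r ∩ Q j ⁻¹' {(0:ℂ)}ᶜ := by
    rw [mem_iInter]
    intro j
    exact ⟨mem_ball_self hrpos, hQz₀ne j⟩
  obtain ⟨r₁, hr₁pos, hr₁sub⟩ := Metric.isOpen_iff.1 hVopen z₀ hz₀V
  set r' : ℝ := min r₁ r with hr'def
  have hr'pos : 0 < r' := lt_min hr₁pos hrpos
  set B : Set (Fin n → ℂ) := ball z₀ r' with hBdef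
  have hBsubr : B ⊆ ball z₀ r := ball_subset_ball (min_le_right _ _)
  have hBsubΩ : B ⊆ Ω := fun w hw => (hρ₃sub ⟨0,hn⟩) (ball_subset_ball (hrle₃ ⟨0,hn⟩) (hBsubr hw))
  have hBQ : ∀ w ∈ B, ∀ j, Q j w ≠ 0 := by
    intro w hw j
    have : w ∈ ⋂ j, ball z₀ r ∩ Q j ⁻¹' {(0:ℂ)}ᶜ :=
      hr₁sub (ball_subset_ball (min_le_left _ _) hw)
    rw [mem_iInter] at this
    exact (this j).2
  have hz₀B : z₀ ∈ B := mem_ball_self hr'pos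
  set u : Fin n → (Fin n → ℂ) → ℂ := fun j w => P j w / Q j w with hudef
  have hureal : ∀ w ∈ B, ∀ j, (u j w).im = 0 := by
    intro w hw j
    obtain ⟨μ, hμ⟩ := hrel w (hBsubΩ hw) j
    have : u j w = (μ:ℂ) := by
      rw [hudef]
      simp only
      rw [hPdef]
      simp only
      rw [hμ, mul_div_assoc, div_self (hBQ w hw j), mul_one]
    rw [this, Complex.ofReal_im]
  -- coordinate sections of B are discs around I
  have hsecmem : ∀ b ∈ B, ∀ k : Fin n, ∀ ξ ∈ ball Complex.I r', Function.update b k ξ ∈ B := by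
    intro b hb k ξ hξ
    rw [hBdef, mem_ball, dist_pi_lt_iff hr'pos]
    intro i
    rcases eq_or_ne i k with rfl | hik
    · rw [Function.update_self]
      simpa [hz₀def] using (mem_ball.1 hξ)
    · rw [Function.update_of_ne hik]
      calc dist (b i) (z₀ i) ≤ dist b z₀ := dist_le_pi_dist b z₀ i
      _ < r' := mem_ball.1 hb
  -- sections of u are constant
  have hsec_const : ∀ j : Fin n, ∀ b ∈ B, ∀ k : Fin n, ∀ ξ ∈ ball Complex.I r',
      u j (Function.update b k ξ) = u j (Function.update b k Complex.I) := by
    intro j b hb k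
    have hsub1 : ∀ ξ ∈ ball Complex.I r',
        Function.update b k ξ ∈ ball z₀ (ρ₁ j) ∧ Function.update b k ξ ∈ ball z₀ (ρ₂ j)
          ∧ Function.update b k ξ ∈ ball z₀ (ρ₃ j) := by
      intro ξ hξ
      have h1 := hBsubr (hsecmem b hb k ξ hξ)
      exact ⟨ball_subset_ball (hrle₁ j) h1, ball_subset_ball (hrle₂ j) h1,
        ball_subset_ball (hrle₃ j) h1⟩
    have hd : DifferentiableOn ℂ (fun ξ => u j (Function.update b k ξ)) (ball Complex.I r') := by
      apply DifferentiableOn.div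
      · apply DifferentiableOn.sub
        · exact (hline₁ j b k).mono (fun ξ hξ => (hsub1 ξ hξ).1)
        · exact (hline₂ j b k).mono (fun ξ hξ => (hsub1 ξ hξ).2.1)
      · exact (hline₃ j b k).mono (fun ξ hξ => (hsub1 ξ hξ).2.2)
      · intro ξ hξ
        exact hBQ _ (hsecmem b hb k ξ hξ) j
    have him : ∀ ξ ∈ ball Complex.I r', ((fun ξ => u j (Function.update b k ξ)) ξ).im = 0 :=
      fun ξ hξ => hureal _ (hsecmem b hb k ξ hξ) j
    exact const_on_ball_of_im_zero₁ _ hd him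
  -- chain through coordinates: u j is constant on B
  have hchain : ∀ j : Fin n, ∀ w ∈ B, u j w = u j z₀ := by
    intro j w hw
    have hwiB : ∀ i : Fin n, dist (w i) Complex.I < r' := by
      intro i
      calc dist (w i) Complex.I = dist (w i) (z₀ i) := by rw [hz₀def]
      _ ≤ dist w z₀ := dist_le_pi_dist w z₀ i
      _ < r' := mem_ball.1 hw
    have hkey : ∀ m : ℕ, m ≤ n →
        u j (fun i => if (i:ℕ) < m then w i else Complex.I) = u j z₀ := by
      intro m
      induction m with
      | zero =>
        intro _
        have : (fun i : Fin n => if (i:ℕ) < 0 then w i else Complex.I) = z₀ := by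
          funext i; simp [hz₀def]
        rw [this]
      | succ m ih =>
        intro hm1
        have hmn : m < n := by omega
        set km : Fin n := ⟨m, hmn⟩ with hkm
        set wm : Fin n → ℂ := fun i => if (i:ℕ) < m then w i else Complex.I with hwm
        have hwmB : wm ∈ B := by
          rw [hBdef, mem_ball, dist_pi_lt_iff hr'pos]
          intro i
          rw [hwm]
          simp only
          by_cases h : (i:ℕ) < m
          · rw [if_pos h]
            calc dist (w i) (z₀ i) = dist (w i) Complex.I := by rw [hz₀def]
            _ < r' := hwiB i
          · rw [if_neg h, hz₀def]
            simpa using hr'pos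
        have hupd1 : (fun i : Fin n => if (i:ℕ) < m+1 then w i else Complex.I)
            = Function.update wm km (w km) := by
          funext i
          rcases eq_or_ne i km with rfl | hik
          · rw [Function.update_self]
            simp [hkm]
          · rw [Function.update_of_ne hik, hwm]
            have : (i:ℕ) ≠ m := fun h => hik (Fin.ext h)
            simp only
            by_cases h : (i:ℕ) < m
            · rw [if_pos h, if_pos (by omega)]
            · rw [if_neg h, if_neg (by omega)]
        have hupd2 : Function.update wm km Complex.I = wm := by
          funext i
          rcases eq_or_ne i km with rfl | hik
          · rw [Function.update_self, hwm]
            simp [hkm]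
          · rw [Function.update_of_ne hik]
        rw [hupd1]
        rw [hsec_const j wm hwmB km (w km) (by simpa using hwiB km), hupd2]
        exact ih (by omega)
    have hfin : (fun i : Fin n => if (i:ℕ) < n then w i else Complex.I) = w := by
      funext i
      rw [if_pos i.2]
    have := hkey n le_rfl
    rw [hfin] at this
    exact this
  -- u j z₀ = 0, hence P j ≡ 0 on B
  have huz₀ : ∀ j, u j z₀ = 0 := by
    intro j
    have h1 : fderiv ℂ f₁ z₀ (Pi.single j 1) = (1/n : ℂ) := hf₁B Complex.I (by simp) j
    have h2 : fderiv ℂ f₂ z₀ (Pi.single j 1) = (1/n : ℂ) := hf₂B Complex.I (by simp) j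
    rw [hudef]
    simp only
    rw [hPdef]
    simp only
    rw [h1, h2, sub_self, zero_div]
  have hP0 : ∀ w ∈ B, ∀ j, P j w = 0 := by
    intro w hw j
    have := hchain j w hw
    rw [huz₀ j] at this
    rcases div_eq_zero_iff.1 this with h | h
    · exact h
    · exact absurd h (hBQ w hw j)
  -- h := f₁ - f₂ has zero derivative on B, hence vanishes on B
  have hzeroder : ∀ w ∈ B, fderivWithin ℂ (fun w => f₁ w - f₂ w) B w = 0 := by
    intro w hw
    have hwΩ := hBsubΩ hw
    have hfd : HasFDerivAt (fun w => f₁ w - f₂ w) (fderiv ℂ f₁ w - fderiv ℂ f₂ w) w :=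
      ((hf₁.differentiableAt (hΩ.mem_nhds hwΩ)).hasFDerivAt).sub
        ((hf₂.differentiableAt (hΩ.mem_nhds hwΩ)).hasFDerivAt)
    rw [fderivWithin_of_isOpen isOpen_ball hw, hfd.fderiv]
    apply ContinuousLinearMap.ext
    intro v
    have hv : v = ∑ i, (v i) • (Pi.single i (1:ℂ) : Fin n → ℂ) := by
      conv_lhs => rw [← Finset.univ_sum_single v]
      refine Finset.sum_congr rfl fun i _ => ?_
      funext l
      by_cases h : l = i
      · subst h; simp
      · simp [Pi.single_eq_of_ne h]
    rw [hv, map_sum]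
    simp only [ContinuousLinearMap.zero_apply]
    apply Finset.sum_eq_zero
    intro i _
    rw [map_smul]
    have hPi := hP0 w hw i
    rw [hPdef] at hPi
    simp only at hPi
    rw [ContinuousLinearMap.sub_apply, hPi, smul_zero]
  have hhdiffB : DifferentiableOn ℂ (fun w => f₁ w - f₂ w) B := (hf₁.sub hf₂).mono hBsubΩ
  have hhB : ∀ w ∈ B, f₁ w - f₂ w = 0 := by
    intro w hw
    have := (convex_ball z₀ r').is_const_of_fderivWithin_eq_zero hhdiffB hzeroder hw hz₀B
    rw [this]
    have e1 : f₁ z₀ = Complex.I := hf₁A Complex.I (by simp)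
    have e2 : f₂ z₀ = Complex.I := hf₂A Complex.I (by simp)
    rw [e1, e2, sub_self]
  -- propagate along complex lines using the one-variable identity theorem
  intro z hz
  set L : ℂ → (Fin n → ℂ) := fun ζ => z₀ + ζ • (z - z₀) with hL
  set D : Set ℂ := L ⁻¹' Ω with hD
  have hLcont : Continuous L := by
    apply continuous_const.add
    exact continuous_id.smul continuous_const
  have hDopen : IsOpen D := hΩ.preimage hLcont
  have hL0 : L 0 = z₀ := by rw [hL]; simp
  have hL1 : L 1 = z := by rw [hL]; simp
  have h0D : (0:ℂ) ∈ D := by rw [hD, mem_preimage, hL0]; exact hz₀mem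
  have h1D : (1:ℂ) ∈ D := by rw [hD, mem_preimage, hL1]; exact hz
  have hDconv : Convex ℝ D := by
    intro ζ₁ h₁ ζ₂ h₂ α β hα hβ hαβ
    rw [hD, mem_preimage] at h₁ h₂ ⊢
    intro j
    have e : (L (α • ζ₁ + β • ζ₂)) j
        = (α:ℂ) * (L ζ₁ j) + (β:ℂ) * (L ζ₂ j) := by
      rw [hL]
      simp only [Pi.add_apply, Pi.smul_apply, smul_eq_mul]
      have hαβ' : (α:ℂ) + (β:ℂ) = 1 := by exact_mod_cast hαβ
      rw [Complex.real_smul, Complex.real_smul]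
      push_cast
      linear_combination (-(z₀ j)) * hαβ'
    rw [e]
    have h₁j := h₁ j
    have h₂j := h₂ j
    have e2 : ((α:ℂ) * (L ζ₁ j) + (β:ℂ) * (L ζ₂ j)).im
        = α * (L ζ₁ j).im + β * (L ζ₂ j).im := by
      simp [Complex.add_im, Complex.mul_im, Complex.ofReal_re, Complex.ofReal_im]
    rw [e2]
    rcases eq_or_lt_of_le hα with h | h
    · rcases eq_or_lt_of_le hβ with h' | h'
      · exfalso; rw [← h, ← h'] at hαβ; simpa using hαβ
      · nlinarith
    · nlinarith
  set ψ : ℂ → ℂ := fun ζ => f₁ (L ζ) - f₂ (L ζ) with hψ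
  have hψd : DifferentiableOn ℂ ψ D := by
    intro ζ hζ
    have hLζ : L ζ ∈ Ω := hζ
    have hLd : DifferentiableAt ℂ L ζ := by
      apply DifferentiableAt.const_add
      exact (differentiable_id.smul_const _).differentiableAt
    have h1 : DifferentiableAt ℂ f₁ (L ζ) := hf₁.differentiableAt (hΩ.mem_nhds hLζ)
    have h2 : DifferentiableAt ℂ f₂ (L ζ) := hf₂.differentiableAt (hΩ.mem_nhds hLζ)
    exact ((h1.comp ζ hLd).sub (h2.comp ζ hLd)).differentiableWithinAt
  have hψan : AnalyticOnNhd ℂ ψ D := hψd.analyticOnNhd hDopen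
  have hev : ψ =ᶠ[nhds (0:ℂ)] 0 := by
    have hBmem : L ⁻¹' B ∈ nhds (0:ℂ) := by
      apply hLcont.continuousAt.preimage_mem_nhds
      rw [hL0]
      exact isOpen_ball.mem_nhds hz₀B
    filter_upwards [hBmem] with ζ hζ
    exact hhB _ hζ
  have := hψan.eqOn_zero_of_preconnected_of_eventuallyEq_zero hDconv.isPreconnected h0D hev h1D
  rw [hψ] at this
  simp only at this
  rw [hL1] at this
  exact sub_eq_zero.1 this

end
end

section
/- Let V ⊂ ℂⁿ be the real subspace of points of the form (r + t₁i, …, r + tₙi) with r, t₁,…,tₙ ∈ ℝ and ∑ t_j = 0. Let U ⊂ ℂⁿ be a connected open set with U ∩ V ≠ ∅, and let h : U → ℂ be holomorphic vanishing on U ∩ V. Then h ≡ 0 on U. -/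
open Complex Metric Set

lemma freq_real_zero {ρ : ℝ} (hρ : 0 < ρ) {c : ℂ} (hc : c.im = 0) {F : ℂ → ℂ}
    (hF : ∀ z ∈ Metric.ball c ρ, z.im = 0 → F z = 0) :
    ∃ᶠ z in nhdsWithin c {c}ᶜ, F z = 0 := by
  rw [Filter.frequently_iff]
  intro s hs
  rw [Metric.mem_nhdsWithin_iff] at hs
  obtain ⟨ε, hε, hsub⟩ := hs
  set δ : ℝ := min ε ρ / 2 with hδ
  have hδ0 : 0 < δ := by positivity
  have hδε : δ < ε := by
    have := min_le_left ε ρ; simp only [hδ]; linarith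
  have hδρ : δ < ρ := by
    have := min_le_right ε ρ; simp only [hδ]; linarith
  have hdist : dist (c + (δ : ℂ)) c = δ := by
    simp [Complex.dist_eq, abs_of_pos hδ0]
  refine ⟨c + (δ : ℂ), hsub ⟨?_, ?_⟩, hF _ ?_ ?_⟩
  · rw [Metric.mem_ball, hdist]; exact hδε
  · simp only [Set.mem_compl_iff, Set.mem_singleton_iff]
    intro hcon
    have : (δ : ℂ) = 0 := by linear_combination hcon
    exact hδ0.ne' (by exact_mod_cast this)
  · rw [Metric.mem_ball, hdist]; exact hδρ
  · simp [hc]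

lemma polydisc_vanish {n : ℕ} {g : (Fin n → ℂ) → ℂ} {Ω : Set (Fin n → ℂ)}
    (hg : DifferentiableOn ℂ g Ω)
    (hreal : ∀ w ∈ Ω, (∀ j, (w j).im = 0) → g w = 0)
    {q : Fin n → ℂ} (hq : ∀ j, (q j).im = 0) {ρ : ℝ} (hρ : 0 < ρ)
    (hball : Metric.ball q ρ ⊆ Ω) :
    ∀ w ∈ Metric.ball q ρ, g w = 0 := by
  have key : ∀ k : ℕ, ∀ w ∈ Metric.ball q ρ,
      (∀ j : Fin n, k ≤ (j : ℕ) → (w j).im = 0) → g w = 0 := by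
    intro k
    induction k with
    | zero => exact fun w hw hr => hreal w (hball hw) (fun j => hr j (Nat.zero_le _))
    | succ k ih =>
      intro w hw hr
      by_cases hk : k < n
      · set c : Fin n := ⟨k, hk⟩ with hc
        set F : ℂ → ℂ := fun ζ => g (Function.update w c ζ) with hF
        have hupd : ∀ ζ ∈ Metric.ball (q c) ρ, Function.update w c ζ ∈ Metric.ball q ρ := by
          intro ζ hζ
          rw [Metric.mem_ball] at hζ hw ⊢
          rw [dist_pi_lt_iff hρ]
          intro j
          rcases eq_or_ne j c with rfl | hj
          · simpa using hζ
          · rw [Function.update_of_ne hj]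
            exact lt_of_le_of_lt (dist_le_pi_dist w q j) hw
        have hFdiff : DifferentiableOn ℂ F (Metric.ball (q c) ρ) := by
          have hu : Differentiable ℂ (fun ζ : ℂ => Function.update w c ζ) := by
            rw [differentiable_pi]
            intro j
            rcases eq_or_ne j c with rfl | hj
            · simpa using differentiable_id
            · simp only [Function.update_of_ne hj]
              exact differentiable_const _
          exact hg.comp hu.differentiableOn (fun ζ hζ => hball (hupd ζ hζ))
        have hFan : AnalyticOnNhd ℂ F (Metric.ball (q c) ρ) :=
          hFdiff.analyticOnNhd Metric.isOpen_ball
        have hvanF : ∀ z ∈ Metric.ball (q c) ρ, z.im = 0 → F z = 0 := by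
          intro ζ hζ hζim
          apply ih _ (hupd ζ hζ)
          intro j hj
          rcases eq_or_ne j c with rfl | hjc
          · simpa using hζim
          · rw [Function.update_of_ne hjc]
            have hjk : (j : ℕ) ≠ k := fun hh => hjc (Fin.ext hh)
            exact hr j (by omega)
        have hEq := hFan.eqOn_zero_of_preconnected_of_frequently_eq_zero
          (convex_ball (q c) ρ).isPreconnected
          (Metric.mem_ball_self hρ)
          (freq_real_zero hρ (hq c) hvanF)
        have hwc : w c ∈ Metric.ball (q c) ρ :=
          Metric.mem_ball.2 (lt_of_le_of_lt (dist_le_pi_dist w q c) (Metric.mem_ball.1 hw))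
        have := hEq hwc
        simpa [hF, Function.update_eq_self] using this
      · exact ih w hw (fun j hj => absurd j.isLt (by omega))
  exact fun w hw => key n w hw (fun j hj => absurd j.isLt (by omega))

lemma spread {n : ℕ} {h : (Fin n → ℂ) → ℂ} {U : Set (Fin n → ℂ)} (hUopen : IsOpen U)
    (hUconn : IsPreconnected U) (hh : DifferentiableOn ℂ h U)
    {p : Fin n → ℂ} (hp : p ∈ U) (hloc : ∀ᶠ x in nhds p, h x = 0) :
    ∀ z ∈ U, h z = 0 := by
  set W : Set (Fin n → ℂ) := {z | ∀ᶠ x in nhds z, h x = 0} with hW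
  have hWopen : IsOpen W := isOpen_setOf_eventually_nhds
  have hclo : closure W ∩ U ⊆ W := by
    rintro z ⟨hzc, hzU⟩
    obtain ⟨r, hr, hrsub⟩ := Metric.isOpen_iff.1 hUopen z hzU
    obtain ⟨w, hwW, hwz⟩ := Metric.mem_closure_iff.1 hzc (r/2) (by positivity)
    have hzero : ∀ z' ∈ Metric.ball z (r/2), h z' = 0 := by
      intro z' hz'
      set v : Fin n → ℂ := z' - w with hv
      set L : ℂ → (Fin n → ℂ) := fun ζ => w + ζ • v with hL
      have hLdiff : Differentiable ℂ L := by
        rw [differentiable_pi]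
        intro j
        simp only [hL, Pi.add_apply, Pi.smul_apply, smul_eq_mul]
        exact (differentiable_id.mul_const _).const_add _
      have hLcont : Continuous L := hLdiff.continuous
      set s : Set ℂ := L ⁻¹' (Metric.ball z r) with hs
      have hsopen : IsOpen s := Metric.isOpen_ball.preimage hLcont
      have haff : ∀ (a b : ℂ) (α β : ℝ), α + β = 1 →
          L (α • a + β • b) = α • L a + β • L b := by
        intro a b α β hab
        have hab' : (α : ℂ) + (β : ℂ) = 1 := by exact_mod_cast hab
        funext j
        simp only [hL, Pi.add_apply, Pi.smul_apply, smul_eq_mul, Complex.real_smul,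
          Complex.ofReal_add]
        linear_combination (-(w j)) * hab'
      have hconv : Convex ℝ s := by
        intro a ha b hb α β hα hβ hab
        simp only [hs, Set.mem_preimage] at ha hb ⊢
        rw [haff a b α β hab]
        exact convex_ball z r ha hb hα hβ hab
      have h0 : (0 : ℂ) ∈ s := by
        have : L 0 = w := by funext j; simp [hL]
        simp only [hs, Set.mem_preimage, this, Metric.mem_ball]
        rw [dist_comm]
        calc dist z w < r/2 := hwz
        _ < r := by linarith
      have h1 : (1 : ℂ) ∈ s := by
        have : L 1 = z' := by funext j; simp [hL, hv]
        simp only [hs, Set.mem_preimage, this]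
        exact Metric.ball_subset_ball (by linarith) hz'
      have hFdiff : DifferentiableOn ℂ (h ∘ L) s :=
        hh.comp hLdiff.differentiableOn (fun ζ hζ => hrsub hζ)
      have hFan : AnalyticOnNhd ℂ (h ∘ L) s := hFdiff.analyticOnNhd hsopen
      have hev : (h ∘ L) =ᶠ[nhds (0 : ℂ)] 0 := by
        have hL0 : L 0 = w := by funext j; simp [hL]
        have htend : Filter.Tendsto L (nhds 0) (nhds w) := by
          have := hLcont.tendsto 0
          rwa [hL0] at this
        filter_upwards [htend.eventually hwW] with ζ hζ
        simpa using hζ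
      have hEq := hFan.eqOn_zero_of_preconnected_of_eventuallyEq_zero
        hconv.isPreconnected h0 hev
      have := hEq h1
      have hL1 : L 1 = z' := by funext j; simp [hL, hv]
      simpa [hL1] using this
    exact Filter.eventually_of_mem (Metric.ball_mem_nhds z (by positivity)) hzero
  have hsub : U ⊆ W := hUconn.subset_of_closure_inter_subset hWopen ⟨p, hp, hloc⟩ hclo
  exact fun z hz => (hsub hz).self_of_nhds

/-- Let `V ⊂ ℂⁿ` be the real subspace of points `(r + t₁ i, …, r + tₙ i)`
with `r, t_j ∈ ℝ` and `∑ t_j = 0`. If `U` is a connected open set meeting `V` and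
`h : U → ℂ` is holomorphic and vanishes on `U ∩ V`, then `h ≡ 0` on `U`. -/
theorem polarization_principle {n : ℕ}
    (V : Set (Fin n → ℂ))
    (hV : V = {v : Fin n → ℂ | ∃ (r : ℝ) (t : Fin n → ℝ),
      (∑ j, t j = 0) ∧ ∀ j, v j = (r : ℂ) + (t j : ℂ) * Complex.I})
    (U : Set (Fin n → ℂ)) (hUopen : IsOpen U) (hUconn : IsConnected U)
    (hUV : (U ∩ V).Nonempty)
    (h : (Fin n → ℂ) → ℂ) (hh : DifferentiableOn ℂ h U)
    (hvan : ∀ z ∈ U ∩ V, h z = 0) :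
    ∀ z ∈ U, h z = 0 := by
  by_cases hn : n = 0
  · subst hn
    obtain ⟨w, hwU, hwV⟩ := hUV
    intro z hz
    have hzw : z = w := funext fun j => j.elim0
    rw [hzw]; exact hvan w ⟨hwU, hwV⟩
  obtain ⟨p, hpU, hpV⟩ := hUV
  have hn' : (n : ℂ) ≠ 0 := Nat.cast_ne_zero.2 hn
  have hnR : (n : ℝ) ≠ 0 := Nat.cast_ne_zero.2 hn
  -- the linear map
  set φ : (Fin n → ℂ) →ₗ[ℂ] (Fin n → ℂ) :=
    { toFun := fun w j => (∑ k, w k) / n + Complex.I * (w j - (∑ k, w k) / n)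
      map_add' := by
        intro w u; funext j
        simp only [Pi.add_apply]
        rw [Finset.sum_add_distrib]; ring
      map_smul' := by
        intro c w; funext j
        simp only [Pi.smul_apply, smul_eq_mul, RingHom.id_apply]
        rw [← Finset.mul_sum]; ring } with hφ
  have hφapp : ∀ (w : Fin n → ℂ) (j : Fin n),
      φ w j = (∑ k, w k) / n + Complex.I * (w j - (∑ k, w k) / n) := fun w j => rfl
  have hker : ∀ w : Fin n → ℂ, φ w = 0 → w = 0 := by
    intro w hw
    set m : ℂ := (∑ k, w k) / n with hm
    have hwj : ∀ j, w j = m + m * Complex.I := by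
      intro j
      have h1 : m + Complex.I * (w j - m) = 0 := by
        have := congrFun hw j
        rwa [hφapp] at this
      linear_combination (-Complex.I) * h1 + (w j - m) * Complex.I_mul_I
    have hsum1 : ∑ k, w k = n * m := by
      rw [hm]; field_simp
    have hsum2 : ∑ k, w k = n * (m + m * Complex.I) := by
      rw [Finset.sum_congr rfl (fun k _ => hwj k), Finset.sum_const, Finset.card_univ,
        Fintype.card_fin, nsmul_eq_mul]
    have hmI : (n : ℂ) * m * Complex.I = 0 := by linear_combination hsum1 - hsum2
    have hm0 : m = 0 := by
      rcases mul_eq_zero.1 hmI with h' | h'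
      · rcases mul_eq_zero.1 h' with h'' | h''
        · exact absurd h'' hn'
        · exact h''
      · exact absurd h' Complex.I_ne_zero
    funext j
    simp [hwj j, hm0]
  have hφinj : Function.Injective φ := by
    intro a b hab
    have : φ (a - b) = 0 := by rw [map_sub, hab, sub_self]
    have := hker _ this
    exact sub_eq_zero.1 this
  set E := (LinearEquiv.ofInjectiveEndo φ hφinj).toContinuousLinearEquiv with hE
  have hEapp : ∀ w, E w = φ w := fun w => rfl
  -- the pullback g
  set Ω : Set (Fin n → ℂ) := ⇑E ⁻¹' U with hΩ
  have hΩopen : IsOpen Ω := hUopen.preimage E.continuous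
  set g : (Fin n → ℂ) → ℂ := fun w => h (E w) with hg
  have hgdiff : DifferentiableOn ℂ g Ω := by
    apply DifferentiableOn.comp hh
      ((E : (Fin n → ℂ) →L[ℂ] (Fin n → ℂ)).differentiable.differentiableOn)
    · intro x hx
      exact hx
  -- vanishing on real points
  have hgreal : ∀ w ∈ Ω, (∀ j, (w j).im = 0) → g w = 0 := by
    intro w hwΩ hwim
    apply hvan (E w) ⟨hwΩ, ?_⟩
    rw [hV]
    have hwj : ∀ k, w k = ((w k).re : ℂ) :=
      fun k => Complex.ext (by simp) (by simp [hwim k])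
    have hsum : ∑ k, w k = ((∑ k, (w k).re : ℝ) : ℂ) := by
      rw [Finset.sum_congr rfl (fun k _ => hwj k)]
      push_cast; ring
    refine ⟨(∑ k, (w k).re) / n, fun j => (w j).re - (∑ k, (w k).re) / n, ?_, ?_⟩
    · rw [Finset.sum_sub_distrib]
      simp [Finset.sum_const, Finset.card_univ]
      field_simp
      ring
    · intro j
      rw [hEapp, hφapp, hsum, hwj j]
      push_cast
      ring
  -- the real preimage point q of p
  rw [hV] at hpV
  obtain ⟨r, t, ht, hp⟩ := hpV
  set q : Fin n → ℂ := fun j => ((r + t j : ℝ) : ℂ) with hq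
  have hqim : ∀ j, (q j).im = 0 := fun j => by simp [hq]
  have hsq : (∑ k, q k) = ((n : ℂ)) * (r : ℂ) := by
    have h1 : (∑ k : Fin n, (r + t k)) = n * r := by
      rw [Finset.sum_add_distrib, ht, add_zero, Finset.sum_const, Finset.card_univ,
        Fintype.card_fin, nsmul_eq_mul]
    calc (∑ k, q k) = ((∑ k : Fin n, (r + t k) : ℝ) : ℂ) := by
          simp only [hq]; push_cast; ring
    _ = ((n : ℂ)) * (r : ℂ) := by rw [h1]; push_cast; ring
  have hEq : E q = p := by
    funext j
    rw [hEapp, hφapp, hsq, hp j]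
    rw [mul_div_cancel_left₀ _ hn']
    simp only [hq]
    push_cast
    ring
  have hqΩ : q ∈ Ω := by
    simp only [hΩ, Set.mem_preimage, hEq]
    exact hpU
  obtain ⟨ρ, hρ, hρsub⟩ := Metric.isOpen_iff.1 hΩopen q hqΩ
  have hpoly := polydisc_vanish hgdiff hgreal hqim hρ hρsub
  -- local vanishing of h near p
  have hloc : ∀ᶠ x in nhds p, h x = 0 := by
    have hO : IsOpen (⇑E.symm ⁻¹' Metric.ball q ρ) :=
      Metric.isOpen_ball.preimage E.symm.continuous
    have hpO : p ∈ ⇑E.symm ⁻¹' Metric.ball q ρ := by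
      simp only [Set.mem_preimage]
      rw [← hEq, E.symm_apply_apply]
      exact Metric.mem_ball_self hρ
    filter_upwards [hO.mem_nhds hpO] with x hx
    have := hpoly (E.symm x) hx
    rw [← E.apply_symm_apply x]
    exact this
  exact spread hUopen hUconn.isPreconnected hh hpU hloc
end
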